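/- arXiv:1107.6027 — 11 statements merged into one kernel-verified Lean document; each statement's English description precedes it below -/
import Mathlib

section
/- For all q, q' ∈ [0,1], one has R̂(q';q) − R̂(q;q') ≤ (q − q')·(P₁(q') − P₀(q')) ≤ |q − q'|; in particular the risk function is locally Lipschitz in this symmetrized sense. -/
open MeasureTheory

noncomputable section

/-- `P₁(q')`: probability of deciding `H₀` under `H₁`, for the likelihood-ratio
threshold detector with prior `q'`. -/
def P1 (d : ℕ) (p₁ p₀ : (Fin d → ℝ) → ℝ) (q' : ℝ) : ℝ :=
  ∫ x, (if q' * p₁ x < (1 - q') * p₀ x then p₁ x else 0)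

/-- `P₀(q')`: probability of deciding `H₁` under `H₀`. -/
def P0 (d : ℕ) (p₁ p₀ : (Fin d → ℝ) → ℝ) (q' : ℝ) : ℝ :=
  ∫ x, (if (1 - q') * p₀ x ≤ q' * p₁ x then p₀ x else 0)

/-- The parametrized risk `R̂(q₁;q₂) = q₂·P₁(q₁) + (1−q₂)·P₀(q₁)`. -/
def Rhat (d : ℕ) (p₁ p₀ : (Fin d → ℝ) → ℝ) (q₁ q₂ : ℝ) : ℝ :=
  q₂ * P1 d p₁ p₀ q₁ + (1 - q₂) * P0 d p₁ p₀ q₁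

/-- `R̂(q';q) − R̂(q;q') ≤ (q − q')·(P₁(q') − P₀(q')) ≤ |q − q'|`. -/
theorem stmt_1 (d : ℕ) (hd : 1 ≤ d) (p₁ p₀ : (Fin d → ℝ) → ℝ)
    (h₁m : Measurable p₁) (h₁nn : ∀ x, 0 ≤ p₁ x) (h₁int : ∫ x, p₁ x = 1)
    (h₀m : Measurable p₀) (h₀nn : ∀ x, 0 ≤ p₀ x) (h₀int : ∫ x, p₀ x = 1)
    (q q' : ℝ) (hq : q ∈ Set.Icc (0 : ℝ) 1) (hq' : q' ∈ Set.Icc (0 : ℝ) 1) :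
    Rhat d p₁ p₀ q' q - Rhat d p₁ p₀ q q' ≤
        (q - q') * (P1 d p₁ p₀ q' - P0 d p₁ p₀ q') ∧
      (q - q') * (P1 d p₁ p₀ q' - P0 d p₁ p₀ q') ≤ |q - q'| := by

  obtain ⟨hq0, hq1⟩ := hq
  obtain ⟨hq'0, hq'1⟩ := hq'
  have hq'1' : (0:ℝ) ≤ 1 - q' := by linarith
  have I1 : Integrable p₁ := by
    by_contra h
    rw [integral_undef h] at h₁int
    exact one_ne_zero h₁int.symm
  have I0 : Integrable p₀ := by
    by_contra h
    rw [integral_undef h] at h₀int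
    exact one_ne_zero h₀int.symm
  have mset1 : ∀ t : ℝ, MeasurableSet {x : (Fin d → ℝ) | t * p₁ x < (1 - t) * p₀ x} :=
    fun t => measurableSet_lt (measurable_const.mul h₁m) (measurable_const.mul h₀m)
  have mset0 : ∀ t : ℝ, MeasurableSet {x : (Fin d → ℝ) | (1 - t) * p₀ x ≤ t * p₁ x} :=
    fun t => measurableSet_le (measurable_const.mul h₀m) (measurable_const.mul h₁m)
  have Iite1 : ∀ t : ℝ,
      Integrable (fun x => if t * p₁ x < (1 - t) * p₀ x then p₁ x else 0) := by
    intro t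
    refine I1.mono' (Measurable.ite (mset1 t) h₁m measurable_const).aestronglyMeasurable ?_
    filter_upwards with x
    rw [Real.norm_eq_abs]
    split_ifs
    · rw [abs_of_nonneg (h₁nn x)]
    · simpa using h₁nn x
  have Iite0 : ∀ t : ℝ,
      Integrable (fun x => if (1 - t) * p₀ x ≤ t * p₁ x then p₀ x else 0) := by
    intro t
    refine I0.mono' (Measurable.ite (mset0 t) h₀m measurable_const).aestronglyMeasurable ?_
    filter_upwards with x
    rw [Real.norm_eq_abs]
    split_ifs
    · rw [abs_of_nonneg (h₀nn x)]
    · simpa using h₀nn x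
  have hP1nn : ∀ t : ℝ, 0 ≤ P1 d p₁ p₀ t := by
    intro t
    refine integral_nonneg fun x => ?_
    dsimp only
    split_ifs
    · exact h₁nn x
    · exact le_rfl
  have hP0nn : ∀ t : ℝ, 0 ≤ P0 d p₁ p₀ t := by
    intro t
    refine integral_nonneg fun x => ?_
    dsimp only
    split_ifs
    · exact h₀nn x
    · exact le_rfl
  have hP1le : ∀ t : ℝ, P1 d p₁ p₀ t ≤ 1 := by
    intro t
    rw [← h₁int]
    refine integral_mono (Iite1 t) I1 fun x => ?_
    dsimp only
    split_ifs
    · exact le_rfl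
    · exact h₁nn x
  have hP0le : ∀ t : ℝ, P0 d p₁ p₀ t ≤ 1 := by
    intro t
    rw [← h₀int]
    refine integral_mono (Iite0 t) I0 fun x => ?_
    dsimp only
    split_ifs
    · exact le_rfl
    · exact h₀nn x
  have ecomb : ∀ s : ℝ, q' * P1 d p₁ p₀ s + (1 - q') * P0 d p₁ p₀ s =
      ∫ x, (q' * (if s * p₁ x < (1 - s) * p₀ x then p₁ x else 0)
        + (1 - q') * (if (1 - s) * p₀ x ≤ s * p₁ x then p₀ x else 0)) := by
    intro s
    rw [integral_add ((Iite1 s).const_mul _) ((Iite0 s).const_mul _),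
      integral_const_mul, integral_const_mul]
    rfl
  have opt : ∀ t : ℝ, q' * P1 d p₁ p₀ q' + (1 - q') * P0 d p₁ p₀ q' ≤
      q' * P1 d p₁ p₀ t + (1 - q') * P0 d p₁ p₀ t := by
    intro t
    rw [ecomb q', ecomb t]
    refine integral_mono
      (((Iite1 q').const_mul _).add ((Iite0 q').const_mul _))
      (((Iite1 t).const_mul _).add ((Iite0 t).const_mul _)) fun x => ?_
    dsimp only
    have ha : 0 ≤ q' * p₁ x := mul_nonneg hq'0 (h₁nn x)
    have hb : 0 ≤ (1 - q') * p₀ x := mul_nonneg hq'1' (h₀nn x)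
    split_ifs <;> nlinarith
  constructor
  · have key := opt q
    simp only [Rhat]
    nlinarith [key]
  · have habs : |P1 d p₁ p₀ q' - P0 d p₁ p₀ q'| ≤ 1 :=
      abs_le.mpr ⟨by linarith [hP1nn q', hP0le q'], by linarith [hP1le q', hP0nn q']⟩
    calc (q - q') * (P1 d p₁ p₀ q' - P0 d p₁ p₀ q')
        ≤ |(q - q') * (P1 d p₁ p₀ q' - P0 d p₁ p₀ q')| := le_abs_self _
      _ = |q - q'| * |P1 d p₁ p₀ q' - P0 d p₁ p₀ q'| := abs_mul _ _
      _ ≤ |q - q'| * 1 := mul_le_mul_of_nonneg_left habs (abs_nonneg _)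
      _ = |q - q'| := mul_one _
end
end

section
/- (Theorem 2, general upper bound with labeled data) Let Y₁,…,Yₙ be i.i.d. Bernoulli(q) random variables (the labels of n labeled training samples) and let q̂ = (1/n)·Σᵢ 1{Yᵢ = 1} be the maximum likelihood estimate of q. Then for every triple (p₁,p₀,q), the expected excess risk satisfies E[R(q̂)] − R(q) ≤ (1/2)·n^{−1/2}. -/
set_option maxHeartbeats 1000000

open MeasureTheory

noncomputable section

/-- The risk `R(q') = q·P₁(q') + (1−q)·P₀(q')` of the detector using prior `q'`
when the true prior is `q`. -/
def risk (d : ℕ) (p₁ p₀ : (Fin d → ℝ) → ℝ) (q q' : ℝ) : ℝ :=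
  q * P1 d p₁ p₀ q' + (1 - q) * P0 d p₁ p₀ q'

/-- The Bernoulli(`q`) measure on `Bool` (for `q ∈ [0,1]`). -/
def bern (q : ℝ) : Measure Bool :=
  ENNReal.ofReal q • Measure.dirac true + ENNReal.ofReal (1 - q) • Measure.dirac false

/-! ### Auxiliary lemmas -/

lemma bern_isProb {q : ℝ} (h0 : 0 ≤ q) (h1 : q ≤ 1) : IsProbabilityMeasure (bern q) := by
  constructor
  simp [bern, ← ENNReal.ofReal_add h0 (by linarith : (0:ℝ) ≤ 1 - q)]

lemma bern_integral {q : ℝ} (h0 : 0 ≤ q) (h1 : q ≤ 1) (f : Bool → ℝ) :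
    ∫ b, f b ∂bern q = q * f true + (1 - q) * f false := by
  rw [bern, integral_add_measure
      ((Integrable.of_finite).smul_measure ENNReal.ofReal_ne_top)
      ((Integrable.of_finite).smul_measure ENNReal.ofReal_ne_top),
    integral_smul_measure, integral_smul_measure, integral_dirac, integral_dirac,
    ENNReal.toReal_ofReal h0, ENNReal.toReal_ofReal (by linarith : (0:ℝ) ≤ 1 - q)]
  simp [smul_eq_mul]

lemma integrable_ite' {α : Type*} [MeasurableSpace α] {μ : Measure α} {c : α → Prop}
    [DecidablePred c] (hc : MeasurableSet {x | c x}) {f : α → ℝ} (hf : Integrable f μ) :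
    Integrable (fun x => if c x then f x else 0) μ := by
  have h : (fun x => if c x then f x else 0) = {x | c x}.indicator f := by
    ext x; by_cases h : c x <;> simp [h, Set.indicator_apply]
  rw [h]; exact hf.indicator hc

section detector

variable {d : ℕ} {p₁ p₀ : (Fin d → ℝ) → ℝ} {q : ℝ}

/-- Deterministic bound on the excess risk: for any `q'`,
`R(q') − R(q) ≤ (q'−q)⁺·A⁺ + (q−q')⁺·A⁻`. -/
lemma risk_excess (h₁m : Measurable p₁) (h₁nn : ∀ x, 0 ≤ p₁ x) (Ip1 : Integrable p₁)
    (h₀m : Measurable p₀) (h₀nn : ∀ x, 0 ≤ p₀ x) (Ip0 : Integrable p₀)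
    (q' : ℝ) :
    risk d p₁ p₀ q q' - risk d p₁ p₀ q q ≤
      max (q' - q) 0 * (∫ x, if q * (p₁ x + p₀ x) < p₀ x then p₁ x + p₀ x else 0)
      + max (q - q') 0 * (∫ x, if p₀ x ≤ q * (p₁ x + p₀ x) then p₁ x + p₀ x else 0) := by
  have I1 : ∀ t : ℝ, Integrable (fun x => if t * p₁ x < (1 - t) * p₀ x then p₁ x else 0) :=
    fun t => integrable_ite' (measurableSet_lt (h₁m.const_mul t) (h₀m.const_mul (1 - t))) Ip1
  have I0 : ∀ t : ℝ, Integrable (fun x => if (1 - t) * p₀ x ≤ t * p₁ x then p₀ x else 0) :=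
    fun t => integrable_ite' (measurableSet_le (h₀m.const_mul (1 - t)) (h₁m.const_mul t)) Ip0
  have Iw : Integrable (fun x => p₁ x + p₀ x) := Ip1.add Ip0
  have IAp : Integrable (fun x => if q * (p₁ x + p₀ x) < p₀ x then p₁ x + p₀ x else 0) :=
    integrable_ite' (measurableSet_lt ((h₁m.add h₀m).const_mul q) h₀m) Iw
  have IAm : Integrable (fun x => if p₀ x ≤ q * (p₁ x + p₀ x) then p₁ x + p₀ x else 0) :=
    integrable_ite' (measurableSet_le h₀m ((h₁m.add h₀m).const_mul q)) Iw
  have hG : ∀ t : ℝ, Integrable (fun x =>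
      q * (if t * p₁ x < (1 - t) * p₀ x then p₁ x else 0)
      + (1 - q) * (if (1 - t) * p₀ x ≤ t * p₁ x then p₀ x else 0)) :=
    fun t => ((I1 t).const_mul q).add ((I0 t).const_mul (1 - q))
  have riske : ∀ t : ℝ, risk d p₁ p₀ q t = ∫ x,
      (q * (if t * p₁ x < (1 - t) * p₀ x then p₁ x else 0)
      + (1 - q) * (if (1 - t) * p₀ x ≤ t * p₁ x then p₀ x else 0)) := by
    intro t
    rw [integral_add ((I1 t).const_mul q) ((I0 t).const_mul (1 - q)),
      integral_const_mul, integral_const_mul]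
    rfl
  have IB : Integrable (fun x =>
      max (q' - q) 0 * (if q * (p₁ x + p₀ x) < p₀ x then p₁ x + p₀ x else 0)
      + max (q - q') 0 * (if p₀ x ≤ q * (p₁ x + p₀ x) then p₁ x + p₀ x else 0)) :=
    (IAp.const_mul _).add (IAm.const_mul _)
  have pw : ∀ x,
      (q * (if q' * p₁ x < (1 - q') * p₀ x then p₁ x else 0)
        + (1 - q) * (if (1 - q') * p₀ x ≤ q' * p₁ x then p₀ x else 0))
      - (q * (if q * p₁ x < (1 - q) * p₀ x then p₁ x else 0)
        + (1 - q) * (if (1 - q) * p₀ x ≤ q * p₁ x then p₀ x else 0))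
      ≤ max (q' - q) 0 * (if q * (p₁ x + p₀ x) < p₀ x then p₁ x + p₀ x else 0)
      + max (q - q') 0 * (if p₀ x ≤ q * (p₁ x + p₀ x) then p₁ x + p₀ x else 0) := by
    intro x
    have ha := h₁nn x
    have hb := h₀nn x
    rcases le_total q q' with h | h
    · rw [max_eq_left (by linarith), max_eq_right (by linarith)]
      split_ifs <;> ring_nf <;>
        linarith [mul_le_mul_of_nonneg_right h ha, mul_le_mul_of_nonneg_right h hb, ha, hb]
    · rw [max_eq_right (by linarith), max_eq_left (by linarith)]
      split_ifs <;> ring_nf <;>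
        linarith [mul_le_mul_of_nonneg_right h ha, mul_le_mul_of_nonneg_right h hb, ha, hb]
  calc risk d p₁ p₀ q q' - risk d p₁ p₀ q q
      = ∫ x, ((q * (if q' * p₁ x < (1 - q') * p₀ x then p₁ x else 0)
        + (1 - q) * (if (1 - q') * p₀ x ≤ q' * p₁ x then p₀ x else 0))
      - (q * (if q * p₁ x < (1 - q) * p₀ x then p₁ x else 0)
        + (1 - q) * (if (1 - q) * p₀ x ≤ q * p₁ x then p₀ x else 0))) := by
        rw [riske q', riske q, integral_sub (hG q') (hG q)]
    _ ≤ ∫ x, (max (q' - q) 0 * (if q * (p₁ x + p₀ x) < p₀ x then p₁ x + p₀ x else 0)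
      + max (q - q') 0 * (if p₀ x ≤ q * (p₁ x + p₀ x) then p₁ x + p₀ x else 0)) :=
        integral_mono ((hG q').sub (hG q)) IB pw
    _ = _ := by rw [integral_add (IAp.const_mul _) (IAm.const_mul _),
        integral_const_mul, integral_const_mul]

lemma ApAm_sum (h₁m : Measurable p₁) (Ip1 : Integrable p₁) (h₁int : ∫ x, p₁ x = 1)
    (h₀m : Measurable p₀) (Ip0 : Integrable p₀) (h₀int : ∫ x, p₀ x = 1) :
    (∫ x, if q * (p₁ x + p₀ x) < p₀ x then p₁ x + p₀ x else 0)
      + (∫ x, if p₀ x ≤ q * (p₁ x + p₀ x) then p₁ x + p₀ x else 0) = 2 := by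
  have Iw : Integrable (fun x => p₁ x + p₀ x) := Ip1.add Ip0
  have IAp : Integrable (fun x => if q * (p₁ x + p₀ x) < p₀ x then p₁ x + p₀ x else 0) :=
    integrable_ite' (measurableSet_lt ((h₁m.add h₀m).const_mul q) h₀m) Iw
  have IAm : Integrable (fun x => if p₀ x ≤ q * (p₁ x + p₀ x) then p₁ x + p₀ x else 0) :=
    integrable_ite' (measurableSet_le h₀m ((h₁m.add h₀m).const_mul q)) Iw
  rw [← integral_add IAp IAm]
  have h : ∀ x, (if q * (p₁ x + p₀ x) < p₀ x then p₁ x + p₀ x else 0)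
      + (if p₀ x ≤ q * (p₁ x + p₀ x) then p₁ x + p₀ x else 0) = p₁ x + p₀ x := by
    intro x; split_ifs <;> [linarith; ring; ring; linarith]
  simp_rw [h]
  rw [integral_add Ip1 Ip0, h₁int, h₀int]; norm_num

end detector

section pilemmas

variable {q : ℝ} {n : ℕ}

lemma pi_prod_formula (h0 : 0 ≤ q) (h1 : q ≤ 1) (f : Fin n → Bool → ℝ) :
    (∫ y : Fin n → Bool, ∏ k, f k (y k) ∂(Measure.pi fun _ => bern q))
      = ∏ k, ∫ b, f k b ∂bern q := by
  haveI := bern_isProb h0 h1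
  letI : MeasureSpace Bool := ⟨bern q⟩
  exact MeasureTheory.integral_fintype_prod_eq_prod f

lemma pi_marg (h0 : 0 ≤ q) (h1 : q ≤ 1) (u : Bool → ℝ) (i : Fin n) :
    (∫ y : Fin n → Bool, u (y i) ∂(Measure.pi fun _ => bern q)) = ∫ b, u b ∂bern q := by
  haveI := bern_isProb h0 h1
  calc (∫ y : Fin n → Bool, u (y i) ∂(Measure.pi fun _ => bern q))
      = ∫ y : Fin n → Bool, ∏ k, (if k = i then u (y k) else 1)
          ∂(Measure.pi fun _ => bern q) := by
        congr 1; funext y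
        rw [Finset.prod_ite_eq' Finset.univ i (fun k => u (y k))]
        simp
    _ = ∏ k, ∫ b, (if k = i then u b else 1) ∂bern q :=
        pi_prod_formula h0 h1 (fun k b => if k = i then u b else 1)
    _ = ∫ b, u b ∂bern q := by
        have huniv : (∫ (_ : Bool), (1:ℝ) ∂bern q) = 1 := by
          rw [bern_integral h0 h1]; ring
        have e : ∀ k : Fin n, (∫ b, (if k = i then u b else 1) ∂bern q)
            = if k = i then (∫ b, u b ∂bern q) else 1 := by
          intro k; by_cases h : k = i
          · simp [h]
          · simp only [if_neg h]; exact huniv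
        simp_rw [e]
        rw [Finset.prod_ite_eq' Finset.univ i (fun _ => ∫ b, u b ∂bern q)]
        simp

lemma pi_pair (h0 : 0 ≤ q) (h1 : q ≤ 1) (u : Bool → ℝ) {i j : Fin n} (hij : i ≠ j) :
    (∫ y : Fin n → Bool, u (y i) * u (y j) ∂(Measure.pi fun _ => bern q))
      = (∫ b, u b ∂bern q) * (∫ b, u b ∂bern q) := by
  haveI := bern_isProb h0 h1
  have hjmem : j ∈ Finset.univ.erase i := Finset.mem_erase.2 ⟨hij.symm, Finset.mem_univ j⟩
  calc (∫ y : Fin n → Bool, u (y i) * u (y j) ∂(Measure.pi fun _ => bern q))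
      = ∫ y : Fin n → Bool, ∏ k, (if k = i then u (y k) else if k = j then u (y k) else 1)
          ∂(Measure.pi fun _ => bern q) := by
        congr 1; funext y
        rw [← Finset.mul_prod_erase Finset.univ _ (Finset.mem_univ i),
          ← Finset.mul_prod_erase _ _ hjmem, if_pos rfl, if_neg hij.symm, if_pos rfl,
          Finset.prod_eq_one, mul_one]
        intro k hk
        rw [if_neg (Finset.mem_erase.1 (Finset.mem_of_mem_erase hk)).1,
          if_neg (Finset.mem_erase.1 hk).1]
    _ = ∏ k, ∫ b, (if k = i then u b else if k = j then u b else 1) ∂bern q :=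
        pi_prod_formula h0 h1 (fun k b => if k = i then u b else if k = j then u b else 1)
    _ = (∫ b, u b ∂bern q) * (∫ b, u b ∂bern q) := by
        have e : ∀ k : Fin n, (∫ b, (if k = i then u b else if k = j then u b else 1) ∂bern q)
            = if k = i then (∫ b, u b ∂bern q) else if k = j then (∫ b, u b ∂bern q) else 1 := by
          have huniv : (∫ (_ : Bool), (1:ℝ) ∂bern q) = 1 := by
            rw [bern_integral h0 h1]; ring
          intro k; by_cases h : k = i
          · simp [h]
          · by_cases h' : k = j
            · simp [h, h']
            · simp only [if_neg h, if_neg h']; exact huniv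
        simp_rw [e]
        rw [← Finset.mul_prod_erase Finset.univ _ (Finset.mem_univ i),
          ← Finset.mul_prod_erase _ _ hjmem, if_pos rfl, if_neg hij.symm, if_pos rfl,
          Finset.prod_eq_one, mul_one]
        intro k hk
        rw [if_neg (Finset.mem_erase.1 (Finset.mem_of_mem_erase hk)).1,
          if_neg (Finset.mem_erase.1 hk).1]

/-- The centered Bernoulli observable. -/
def gb (q : ℝ) : Bool → ℝ := fun b => (if b = true then (1:ℝ) else 0) - q

lemma gb_int (h0 : 0 ≤ q) (h1 : q ≤ 1) : ∫ b, gb q b ∂bern q = 0 := by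
  rw [bern_integral h0 h1]; simp [gb]; ring

lemma gb_sq_int (h0 : 0 ≤ q) (h1 : q ≤ 1) :
    ∫ b, gb q b * gb q b ∂bern q = q * (1 - q) := by
  rw [bern_integral h0 h1]; simp [gb]; ring

lemma X_eq (hn : 1 ≤ n) (y : Fin n → Bool) :
    (∑ i, if y i = true then (1:ℝ) else 0) / n - q = (∑ i, gb q (y i)) / n := by
  have hn0 : (n:ℝ) ≠ 0 := by positivity
  have h : ∑ i, gb q (y i) = (∑ i, if y i = true then (1:ℝ) else 0) - n * q := by
    unfold gb
    rw [Finset.sum_sub_distrib, Finset.sum_const, Finset.card_univ, Fintype.card_fin,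
      nsmul_eq_mul]
  rw [h]
  field_simp

lemma EX (h0 : 0 ≤ q) (h1 : q ≤ 1) (hn : 1 ≤ n) :
    (∫ y : Fin n → Bool, ((∑ i, if y i = true then (1:ℝ) else 0) / n - q)
      ∂(Measure.pi fun _ => bern q)) = 0 := by
  haveI := bern_isProb h0 h1
  simp_rw [X_eq hn]
  rw [integral_div, integral_finset_sum _ (fun i _ => Integrable.of_finite)]
  simp_rw [pi_marg h0 h1 (gb q), gb_int h0 h1]
  simp

lemma EX2 (h0 : 0 ≤ q) (h1 : q ≤ 1) (hn : 1 ≤ n) :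
    (∫ y : Fin n → Bool, ((∑ i, if y i = true then (1:ℝ) else 0) / n - q)
        * ((∑ i, if y i = true then (1:ℝ) else 0) / n - q)
      ∂(Measure.pi fun _ => bern q)) = q * (1 - q) / n := by
  haveI := bern_isProb h0 h1
  have hn0 : (n:ℝ) ≠ 0 := by positivity
  simp_rw [X_eq hn, div_mul_div_comm, Finset.sum_mul_sum]
  rw [integral_div, integral_finset_sum _ (fun i _ => Integrable.of_finite)]
  have e : ∀ i : Fin n, (∫ y : Fin n → Bool, (∑ j, gb q (y i) * gb q (y j))
      ∂(Measure.pi fun _ => bern q)) = q * (1 - q) := by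
    intro i
    rw [integral_finset_sum _ (fun j _ => Integrable.of_finite)]
    have e2 : ∀ j : Fin n, (∫ y : Fin n → Bool, gb q (y i) * gb q (y j)
        ∂(Measure.pi fun _ => bern q)) = if i = j then q * (1 - q) else 0 := by
      intro j
      by_cases h : i = j
      · subst h
        rw [if_pos rfl, ← gb_sq_int h0 h1]
        exact pi_marg h0 h1 (fun b => gb q b * gb q b) i
      · rw [if_neg h, pi_pair h0 h1 (gb q) h, gb_int h0 h1, mul_zero]
    simp_rw [e2]
    simp
  simp_rw [e]
  rw [Finset.sum_const, Finset.card_univ, Fintype.card_fin, nsmul_eq_mul]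
  field_simp

end pilemmas

/-- Theorem 2: with `n` i.i.d. Bernoulli(`q`) labels and `q̂` the empirical frequency of
label `1` (the MLE of `q`), the expected excess risk is at most `(1/2)·n^{-1/2}`. -/
theorem stmt_2 (d : ℕ) (hd : 1 ≤ d) (p₁ p₀ : (Fin d → ℝ) → ℝ)
    (h₁m : Measurable p₁) (h₁nn : ∀ x, 0 ≤ p₁ x) (h₁int : ∫ x, p₁ x = 1)
    (h₀m : Measurable p₀) (h₀nn : ∀ x, 0 ≤ p₀ x) (h₀int : ∫ x, p₀ x = 1)
    (q : ℝ) (hq : q ∈ Set.Icc (0 : ℝ) 1) (n : ℕ) (hn : 1 ≤ n) :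
    (∫ Y : Fin n → Bool,
        risk d p₁ p₀ q ((∑ i, if Y i = true then (1 : ℝ) else 0) / n)
          ∂(Measure.pi fun _ : Fin n => bern q)) -
      risk d p₁ p₀ q q ≤ (1 / 2) * (n : ℝ) ^ (-(1 / 2) : ℝ) := by
  obtain ⟨hq0, hq1⟩ := hq
  haveI := bern_isProb hq0 hq1
  have hn0 : (0:ℝ) < (n:ℝ) := by exact_mod_cast hn
  have Ip1 : Integrable p₁ := by
    by_contra h; rw [integral_undef h] at h₁int; norm_num at h₁int
  have Ip0 : Integrable p₀ := by
    by_contra h; rw [integral_undef h] at h₀int; norm_num at h₀int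
  set Ap := ∫ x, if q * (p₁ x + p₀ x) < p₀ x then p₁ x + p₀ x else 0 with hAp
  set Am := ∫ x, if p₀ x ≤ q * (p₁ x + p₀ x) then p₁ x + p₀ x else 0 with hAm
  have key := risk_excess h₁m h₁nn Ip1 h₀m h₀nn Ip0 (q := q)
  have hsum2 : Ap + Am = 2 := ApAm_sum h₁m Ip1 h₁int h₀m Ip0 h₀int
  have hApnn : 0 ≤ Ap := integral_nonneg fun x => by
    simp only [Pi.zero_apply]; split_ifs
    · linarith [h₁nn x, h₀nn x]
    · exact le_rfl
  have hAmnn : 0 ≤ Am := integral_nonneg fun x => by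
    simp only [Pi.zero_apply]; split_ifs
    · linarith [h₁nn x, h₀nn x]
    · exact le_rfl
  set μ := Measure.pi fun _ : Fin n => bern q with hμ
  set X : (Fin n → Bool) → ℝ :=
    fun y => (∑ i, if y i = true then (1:ℝ) else 0) / n - q with hX
  -- first and second moments
  have hEX : ∫ y, X y ∂μ = 0 := EX hq0 hq1 hn
  have hEX2 : ∫ y, X y * X y ∂μ = q * (1 - q) / n := EX2 hq0 hq1 hn
  -- positive and negative parts
  have hmaxsub : ∀ a : ℝ, max a 0 - max (-a) 0 = a := by
    intro a; rcases le_total a 0 with h | h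
    · rw [max_eq_right h, max_eq_left (by linarith)]; ring
    · rw [max_eq_left h, max_eq_right (by linarith)]; ring
  have hmaxadd : ∀ a : ℝ, max a 0 + max (-a) 0 = |a| := by
    intro a; rcases le_total a 0 with h | h
    · rw [max_eq_right h, max_eq_left (by linarith), abs_of_nonpos h]; ring
    · rw [max_eq_left h, max_eq_right (by linarith), abs_of_nonneg h]; ring
  set mp := ∫ y, max (X y) 0 ∂μ with hmp
  have hmneg : (∫ y, max (-(X y)) 0 ∂μ) = mp := by
    have h1 : (∫ y, (max (X y) 0 - max (-(X y)) 0) ∂μ) = 0 := by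
      simp_rw [hmaxsub]; exact hEX
    rw [integral_sub Integrable.of_finite Integrable.of_finite] at h1
    linarith
  have hmpnn : 0 ≤ mp := integral_nonneg fun y => le_max_right _ _
  have habs : (∫ y, |X y| ∂μ) = 2 * mp := by
    have h1 : (∫ y, (max (X y) 0 + max (-(X y)) 0) ∂μ) = ∫ y, |X y| ∂μ := by
      simp_rw [hmaxadd]
    rw [integral_add Integrable.of_finite Integrable.of_finite, hmneg] at h1
    linarith
  -- Cauchy–Schwarz via nonnegativity of the variance of |X|
  have hCS : (2 * mp) ^ 2 ≤ q * (1 - q) / n := by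
    have hv := ProbabilityTheory.variance_nonneg (fun y => |X y|) μ
    rw [ProbabilityTheory.variance_eq_sub MemLp.of_discrete] at hv
    simp only [Pi.pow_apply] at hv
    have h2 : (∫ y, |X y| ^ 2 ∂μ) = q * (1 - q) / n := by
      rw [← hEX2]
      exact integral_congr_ae (Filter.Eventually.of_forall fun y => by
        show |X y| ^ 2 = X y * X y
        rw [sq_abs]; ring)
    rw [← habs, ← h2]
    linarith
  -- the main comparison
  have hmain : (∫ y, risk d p₁ p₀ q ((∑ i, if y i = true then (1:ℝ) else 0) / n) ∂μ)
      - risk d p₁ p₀ q q ≤ 2 * mp := by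
    have h1 : (∫ y, risk d p₁ p₀ q ((∑ i, if y i = true then (1:ℝ) else 0) / n) ∂μ)
        - risk d p₁ p₀ q q
        = ∫ y, (risk d p₁ p₀ q ((∑ i, if y i = true then (1:ℝ) else 0) / n)
            - risk d p₁ p₀ q q) ∂μ := by
      rw [integral_sub Integrable.of_finite (integrable_const _), integral_const,
        probReal_univ]
      simp
    rw [h1]
    calc (∫ y, (risk d p₁ p₀ q ((∑ i, if y i = true then (1:ℝ) else 0) / n)
            - risk d p₁ p₀ q q) ∂μ)
        ≤ ∫ y, (max (X y) 0 * Ap + max (-(X y)) 0 * Am) ∂μ := by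
          refine integral_mono Integrable.of_finite Integrable.of_finite fun y => ?_
          have hk := key ((∑ i, if y i = true then (1:ℝ) else 0) / n)
          have e1 : (∑ i, if y i = true then (1:ℝ) else 0) / n - q = X y := rfl
          have e2 : q - (∑ i, if y i = true then (1:ℝ) else 0) / n = -(X y) := by
            rw [← e1]; ring
          rw [e1, e2] at hk
          exact hk
      _ = mp * Ap + mp * Am := by
          rw [integral_add Integrable.of_finite Integrable.of_finite,
            integral_mul_const, integral_mul_const, hmneg]
      _ = 2 * mp := by rw [← mul_add, hsum2]; ring
  refine hmain.trans ?_
  -- final numeric bound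
  have hb : q * (1 - q) / n ≤ 1 / (4 * n) := by
    rw [div_le_div_iff₀ hn0 (by positivity)]
    nlinarith [mul_le_mul_of_nonneg_right
      (show 4 * (q * (1 - q)) ≤ 1 by nlinarith [sq_nonneg (2 * q - 1)]) hn0.le]
  have hrw : (1 / 2 : ℝ) * (n : ℝ) ^ (-(1 / 2) : ℝ) = Real.sqrt (1 / (4 * n)) := by
    have h4 : (1:ℝ) / (4 * n) = ((1/2 : ℝ) * (n : ℝ) ^ (-(1 / 2) : ℝ)) ^ 2 := by
      rw [mul_pow, ← Real.rpow_natCast ((n:ℝ) ^ (-(1 / 2) : ℝ)) 2,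
        ← Real.rpow_mul hn0.le]
      norm_num
      rw [Real.rpow_neg_one]
      field_simp
    rw [h4, Real.sqrt_sq (by positivity)]
  rw [hrw]
  have : 2 * mp ≤ Real.sqrt ((2 * mp) ^ 2) := by
    rw [Real.sqrt_sq (by linarith)]
  refine this.trans ?_
  exact Real.sqrt_le_sqrt (hCS.trans hb)
end
end

section
/- (Lemma 1, Lipschitz property of the estimated regression function) Let θ ∈ (0,1/2]. For every x ∈ ℝ^d with p₀(x) + p₁(x) > 0 and all q₁, q₂ ∈ [θ, 1−θ], defining η(x;t) = t·p₁(x)/(t·p₁(x) + (1−t)·p₀(x)), one has |η(x;q₁) − η(x;q₂)| ≤ L·|q₁ − q₂| with L = 1/(4θ(1−θ)). -/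
open MeasureTheory

noncomputable section

/-- The regression function estimator `η(x;t) = t·p₁(x)/(t·p₁(x) + (1−t)·p₀(x))`. -/
def etaEst (d : ℕ) (p₁ p₀ : (Fin d → ℝ) → ℝ) (t : ℝ) (x : Fin d → ℝ) : ℝ :=
  t * p₁ x / (t * p₁ x + (1 - t) * p₀ x)

set_option maxHeartbeats 1000000 in
/-- Auxiliary scalar version of the Lipschitz estimate. -/
theorem etaEst_aux (θ a b q₁ q₂ : ℝ) (hθ0 : 0 < θ) (hθ2 : θ ≤ 1 / 2)
    (ha : 0 ≤ a) (hb : 0 ≤ b) (hx : 0 < b + a)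
    (hq₁l : θ ≤ q₁) (hq₁u : q₁ ≤ 1 - θ) (hq₂l : θ ≤ q₂) (hq₂u : q₂ ≤ 1 - θ) :
    |q₁ * a / (q₁ * a + (1 - q₁) * b) - q₂ * a / (q₂ * a + (1 - q₂) * b)|
      ≤ (1 / (4 * θ * (1 - θ))) * |q₁ - q₂| := by
  have hθ1 : θ < 1 := by linarith
  have hD₁ : 0 < q₁ * a + (1 - q₁) * b := by nlinarith
  have hD₂ : 0 < q₂ * a + (1 - q₂) * b := by nlinarith
  have hform : q₁ * a / (q₁ * a + (1 - q₁) * b) - q₂ * a / (q₂ * a + (1 - q₂) * b)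
      = a * b * (q₁ - q₂) / ((q₁ * a + (1 - q₁) * b) * (q₂ * a + (1 - q₂) * b)) := by
    rw [div_sub_div _ _ hD₁.ne' hD₂.ne']
    ring
  have hL : 0 < 4 * θ * (1 - θ) := by nlinarith
  have hcnn : 0 ≤ 4 * θ * (1 - θ) * (a * b) := mul_nonneg hL.le (mul_nonneg ha hb)
  have h1 : 4 * θ * (1 - θ) * (a * b) ≤ (q₁ * a + (1 - q₁) * b) ^ 2 := by
    nlinarith [sq_nonneg (q₁ * a - (1 - q₁) * b),
      mul_nonneg (mul_nonneg (mul_nonneg ha hb) (by linarith : (0:ℝ) ≤ q₁ - θ))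
        (by linarith : (0:ℝ) ≤ 1 - θ - q₁)]
  have h2 : 4 * θ * (1 - θ) * (a * b) ≤ (q₂ * a + (1 - q₂) * b) ^ 2 := by
    nlinarith [sq_nonneg (q₂ * a - (1 - q₂) * b),
      mul_nonneg (mul_nonneg (mul_nonneg ha hb) (by linarith : (0:ℝ) ≤ q₂ - θ))
        (by linarith : (0:ℝ) ≤ 1 - θ - q₂)]
  have hsq := mul_le_mul h1 h2 hcnn (sq_nonneg _)
  have hkey : 4 * θ * (1 - θ) * (a * b) ≤
      (q₁ * a + (1 - q₁) * b) * (q₂ * a + (1 - q₂) * b) := by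
    nlinarith [mul_pos hD₁ hD₂, hcnn, hsq]
  rw [hform, abs_div, abs_mul, abs_mul, abs_of_pos (mul_pos hD₁ hD₂),
    abs_of_nonneg ha, abs_of_nonneg hb]
  rw [div_le_iff₀ (mul_pos hD₁ hD₂)]
  have h3 := mul_le_mul_of_nonneg_right hkey (abs_nonneg (q₁ - q₂))
  calc a * b * |q₁ - q₂|
      ≤ (q₁ * a + (1 - q₁) * b) * (q₂ * a + (1 - q₂) * b) * |q₁ - q₂| / (4 * θ * (1 - θ)) := by
        rw [le_div_iff₀ hL]; nlinarith [h3]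
    _ = 1 / (4 * θ * (1 - θ)) * |q₁ - q₂| * ((q₁ * a + (1 - q₁) * b) * (q₂ * a + (1 - q₂) * b)) := by
        field_simp

/-- Lemma 1: for `q₁, q₂ ∈ [θ, 1−θ]` the regression function estimator is Lipschitz in the
prior, with constant `L = 1/(4θ(1−θ))`, at every point where `p₀(x) + p₁(x) > 0`. -/
theorem stmt_3 (d : ℕ) (hd : 1 ≤ d) (θ : ℝ) (hθ : θ ∈ Set.Ioc (0 : ℝ) (1 / 2))
    (p₁ p₀ : (Fin d → ℝ) → ℝ)
    (h₁m : Measurable p₁) (h₁nn : ∀ x, 0 ≤ p₁ x) (h₁int : ∫ x, p₁ x = 1)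
    (h₀m : Measurable p₀) (h₀nn : ∀ x, 0 ≤ p₀ x) (h₀int : ∫ x, p₀ x = 1)
    (x : Fin d → ℝ) (hx : 0 < p₀ x + p₁ x)
    (q₁ q₂ : ℝ) (hq₁ : q₁ ∈ Set.Icc θ (1 - θ)) (hq₂ : q₂ ∈ Set.Icc θ (1 - θ)) :
    |etaEst d p₁ p₀ q₁ x - etaEst d p₁ p₀ q₂ x| ≤ (1 / (4 * θ * (1 - θ))) * |q₁ - q₂| := by
  exact etaEst_aux θ (p₁ x) (p₀ x) q₁ q₂ hθ.1 hθ.2 (h₁nn x) (h₀nn x) hx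
    hq₁.1 hq₁.2 hq₂.1 hq₂.2
end
end

section
/- (Sharpness of the Lipschitz constant in Lemma 1) Let θ ∈ (0,1/2). For every L' < 1/(4θ(1−θ)) there exist a, b > 0 and q₁ ≠ q₂ in [θ, 1−θ] such that |η(q₁) − η(q₂)| > L'·|q₁ − q₂|, where η(t) = t·a/(t·a + (1−t)·b). In other words, the Lipschitz constant L = 1/(4θ(1−θ)) in Lemma 1 cannot be improved. -/
/-- Sharpness of the Lipschitz constant in Lemma 1: for every `L' < 1/(4θ(1−θ))` there are
densities values `a, b > 0` and distinct priors `q₁ ≠ q₂` in `[θ, 1−θ]` with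
`|η(q₁) − η(q₂)| > L'·|q₁ − q₂|` where `η(t) = t·a/(t·a + (1−t)·b)`. -/
theorem stmt_5 (θ : ℝ) (hθ : θ ∈ Set.Ioo (0 : ℝ) (1 / 2))
    (L' : ℝ) (hL' : L' < 1 / (4 * θ * (1 - θ))) :
    ∃ a b : ℝ, 0 < a ∧ 0 < b ∧ ∃ q₁ q₂ : ℝ, q₁ ∈ Set.Icc θ (1 - θ) ∧
      q₂ ∈ Set.Icc θ (1 - θ) ∧ q₁ ≠ q₂ ∧
      L' * |q₁ - q₂| <
        |q₁ * a / (q₁ * a + (1 - q₁) * b) - q₂ * a / (q₂ * a + (1 - q₂) * b)| := by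
  obtain ⟨hθ0, hθ2⟩ := hθ
  have h12 : 0 < 1 - 2 * θ := by linarith
  have h1θ : 0 < 1 - θ := by linarith
  set c : ℝ := 4 * θ * (1 - θ) with hc
  have hcpos : 0 < c := by positivity
  -- choose a small ε
  have hex : ∃ ε : ℝ, 0 < ε ∧ ε ≤ 1 - 2 * θ ∧ L' * (c + 2 * ε * (1 - 2 * θ)) < 1 := by
    rcases le_or_gt L' 0 with h | h
    · refine ⟨1 - 2 * θ, h12, le_refl _, ?_⟩
      have hpos : 0 < c + 2 * (1 - 2 * θ) * (1 - 2 * θ) := by positivity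
      nlinarith
    · have hLc : L' * c < 1 := (lt_div_iff₀ hcpos).mp hL'
      have h1 : 0 < 1 / L' - c := by
        rw [sub_pos, lt_div_iff₀ h]
        linarith [hLc]
      refine ⟨min (1 - 2 * θ) ((1 / L' - c) / (4 * (1 - 2 * θ))), ?_, min_le_left _ _, ?_⟩
      · positivity
      · set ε := min (1 - 2 * θ) ((1 / L' - c) / (4 * (1 - 2 * θ))) with hε
        have hle : ε ≤ (1 / L' - c) / (4 * (1 - 2 * θ)) := min_le_right _ _
        have h2 : 2 * ε * (1 - 2 * θ) ≤ (1 / L' - c) / 2 := by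
          have := (le_div_iff₀ (show (0:ℝ) < 4 * (1 - 2 * θ) by positivity)).mp hle
          nlinarith
        have h3 : c + 2 * ε * (1 - 2 * θ) < 1 / L' := by linarith
        calc L' * (c + 2 * ε * (1 - 2 * θ)) < L' * (1 / L') := by
              exact (mul_lt_mul_iff_right₀ h).mpr h3
          _ = 1 := mul_one_div_cancel (ne_of_gt h)
  obtain ⟨ε, hε0, hεle, hεL⟩ := hex
  have hD2pos : 0 < c + 2 * ε * (1 - 2 * θ) := by positivity
  refine ⟨1 - θ, θ, h1θ, hθ0, θ, θ + ε,
    ⟨le_refl _, by linarith⟩, ⟨by linarith, by linarith⟩, by intro h; linarith, ?_⟩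
  have hd1 : θ * (1 - θ) + (1 - θ) * θ ≠ 0 := by nlinarith
  have hd2 : (θ + ε) * (1 - θ) + (1 - (θ + ε)) * θ ≠ 0 := by
    have : (θ + ε) * (1 - θ) + (1 - (θ + ε)) * θ = (c + 2 * ε * (1 - 2 * θ)) / 2 := by
      rw [hc]; ring
    rw [this]; positivity
  have key : θ * (1 - θ) / (θ * (1 - θ) + (1 - θ) * θ) -
      (θ + ε) * (1 - θ) / ((θ + ε) * (1 - θ) + (1 - (θ + ε)) * θ) =
      -ε / (c + 2 * ε * (1 - 2 * θ)) := by
    rw [div_sub_div _ _ hd1 hd2, div_eq_div_iff (mul_ne_zero hd1 hd2) (ne_of_gt hD2pos)]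
    rw [hc]
    ring
  rw [key]
  have habs1 : |θ - (θ + ε)| = ε := by
    rw [abs_sub_comm]; simp [abs_of_pos hε0]
  have habs2 : |(-ε) / (c + 2 * ε * (1 - 2 * θ))| = ε / (c + 2 * ε * (1 - 2 * θ)) := by
    rw [abs_div, abs_neg, abs_of_pos hε0, abs_of_pos hD2pos]
  rw [habs1, habs2, lt_div_iff₀ hD2pos]
  nlinarith
end

section
/- (Theorem 1, general minimax lower bound with labeled data) There exists a constant c > 0 such that for every n ≥ 1 and every measurable estimator q̂ₙ : (ℝ^d × {0,1})ⁿ → [0,1], there exists a triple (p₁,p₀,q) such that E_{π⊗n}[R(q̂ₙ(S))] − R(q) ≥ c·n^{−1/2}, where S denotes the n i.i.d. labeled training samples drawn from π and the estimator is allowed to depend on (p₁,p₀). -/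
open MeasureTheory
open scoped ENNReal

noncomputable section

/-- The joint distribution `π` of `(X,Y)` on `ℝ^d × {0,1}` with density `q·p₁(x)` at `(x,1)`
and `(1−q)·p₀(x)` at `(x,0)`. -/
def jointMeasure (d : ℕ) (p₁ p₀ : (Fin d → ℝ) → ℝ) (q : ℝ) :
    Measure ((Fin d → ℝ) × Bool) :=
  (volume.withDensity fun x => ENNReal.ofReal (q * p₁ x)).map (fun x => (x, true)) +
    (volume.withDensity fun x => ENNReal.ofReal ((1 - q) * p₀ x)).map (fun x => (x, false))


lemma aux_map_withDensity {α β : Type*} [MeasurableSpace α] [MeasurableSpace β]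
    (μ : Measure α) {g : α → β} (hg : Measurable g) {f : β → ℝ≥0∞} (hf : Measurable f) :
    (μ.map g).withDensity f = (μ.withDensity (f ∘ g)).map g := by
  ext s hs
  rw [withDensity_apply _ hs, setLIntegral_map hs hf hg,
    Measure.map_apply hg hs, withDensity_apply _ (hg hs)]
  rfl

variable {d : ℕ}

def pbox (d : ℕ) : (Fin d → ℝ) → ℝ :=
  (Set.univ.pi fun _ : Fin d => Set.Ico (0:ℝ) 1).indicator 1

lemma pbox_measSet : MeasurableSet (Set.univ.pi fun _ : Fin d => Set.Ico (0:ℝ) 1) :=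
  MeasurableSet.univ_pi fun _ => measurableSet_Ico

lemma pbox_meas : Measurable (pbox d) := measurable_one.indicator pbox_measSet

lemma pbox_nonneg : ∀ x, 0 ≤ pbox d x := fun x =>
  Set.indicator_apply_nonneg fun _ => zero_le_one

lemma pbox_01 : ∀ x, pbox d x = 0 ∨ pbox d x = 1 := by
  intro x
  by_cases h : x ∈ Set.univ.pi fun _ : Fin d => Set.Ico (0:ℝ) 1
  · right; simp [pbox, Set.indicator_of_mem h]
  · left; simp [pbox, Set.indicator_of_notMem h]

lemma volume_box : volume (Set.univ.pi fun _ : Fin d => Set.Ico (0:ℝ) 1) = 1 := by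
  rw [volume_pi_pi]
  simp [Real.volume_Ico]

lemma pbox_int : (∫ x, pbox d x) = 1 := by
  rw [pbox, integral_indicator_one pbox_measSet, measureReal_def, volume_box]
  simp

lemma pbox_ofReal : (fun x => ENNReal.ofReal (pbox d x))
    = (Set.univ.pi fun _ : Fin d => Set.Ico (0:ℝ) 1).indicator (fun _ => (1:ℝ≥0∞)) := by
  funext x
  by_cases h : x ∈ Set.univ.pi fun _ : Fin d => Set.Ico (0:ℝ) 1
  · simp [pbox, Set.indicator_of_mem h]
  · simp [pbox, Set.indicator_of_notMem h]

lemma pbox_meas' : Measurable fun x => ENNReal.ofReal (pbox d x) :=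
  ENNReal.measurable_ofReal.comp pbox_meas

lemma lint_pbox : ∫⁻ x, ENNReal.ofReal (pbox d x) = 1 := by
  rw [pbox_ofReal, lintegral_indicator pbox_measSet]
  simp [volume_box]

/-- scaled density measures -/
lemma withDensity_scaled (a : ℝ) (ha : 0 ≤ a) :
    (volume.withDensity fun x => ENNReal.ofReal (a * pbox d x))
      = ENNReal.ofReal a • volume.withDensity (fun x => ENNReal.ofReal (pbox d x)) := by
  rw [← withDensity_smul _ pbox_meas']
  congr 1
  funext x
  simp [ENNReal.ofReal_mul ha]

lemma mass_scaled (a : ℝ) (ha : 0 ≤ a) :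
    (volume.withDensity fun x => ENNReal.ofReal (a * pbox d x)) Set.univ
      = ENNReal.ofReal a := by
  rw [withDensity_scaled a ha, Measure.smul_apply, smul_eq_mul,
    withDensity_apply _ MeasurableSet.univ, Measure.restrict_univ, lint_pbox, mul_one]

lemma meas_snd_fn (h : Bool → ℝ≥0∞) : Measurable fun z : (Fin d → ℝ) × Bool => h z.2 :=
  (measurable_of_countable h).comp measurable_snd

lemma lint_snd (q : ℝ) (h0 : 0 ≤ q) (h1 : q ≤ 1) (h : Bool → ℝ≥0∞) :
    ∫⁻ z, h z.2 ∂(jointMeasure d (pbox d) (pbox d) q)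
      = ENNReal.ofReal q * h true + ENNReal.ofReal (1 - q) * h false := by
  rw [jointMeasure, lintegral_add_measure,
    lintegral_map (meas_snd_fn h) (measurable_prodMk_right),
    lintegral_map (meas_snd_fn h) (measurable_prodMk_right)]
  simp only [lintegral_const]
  rw [mass_scaled q h0, mass_scaled (1 - q) (by linarith)]
  ring

lemma joint_univ (q : ℝ) (h0 : 0 ≤ q) (h1 : q ≤ 1) :
    jointMeasure d (pbox d) (pbox d) q Set.univ = 1 := by
  rw [jointMeasure, Measure.add_apply,
    Measure.map_apply measurable_prodMk_right MeasurableSet.univ,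
    Measure.map_apply measurable_prodMk_right MeasurableSet.univ]
  simp only [Set.preimage_univ]
  rw [mass_scaled q h0, mass_scaled (1 - q) (by linarith),
    ← ENNReal.ofReal_add h0 (by linarith)]
  norm_num

lemma joint_prob (q : ℝ) (h0 : 0 ≤ q) (h1 : q ≤ 1) :
    IsProbabilityMeasure (jointMeasure d (pbox d) (pbox d) q) :=
  ⟨joint_univ q h0 h1⟩

lemma joint_density_rel (q q' : ℝ) (hq : 0 < q) (hq1 : q < 1) (h0' : 0 ≤ q') (h1' : q' ≤ 1) :
    (jointMeasure d (pbox d) (pbox d) q).withDensity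
        (fun z => ENNReal.ofReal (if z.2 then q' / q else (1 - q') / (1 - q)))
      = jointMeasure d (pbox d) (pbox d) q' := by
  have hf : Measurable fun z : (Fin d → ℝ) × Bool =>
      ENNReal.ofReal (if z.2 then q' / q else (1 - q') / (1 - q)) :=
    meas_snd_fn fun b => ENNReal.ofReal (if b then q' / q else (1 - q') / (1 - q))
  rw [jointMeasure, withDensity_add_measure,
    aux_map_withDensity _ (measurable_prodMk_right) hf,
    aux_map_withDensity _ (measurable_prodMk_right) hf]
  have ht : ((fun z : (Fin d → ℝ) × Bool =>
      ENNReal.ofReal (if z.2 then q' / q else (1 - q') / (1 - q))) ∘ fun x => (x, true))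
      = fun _ => ENNReal.ofReal (q' / q) := by funext x; simp
  have hfls : ((fun z : (Fin d → ℝ) × Bool =>
      ENNReal.ofReal (if z.2 then q' / q else (1 - q') / (1 - q))) ∘ fun x => (x, false))
      = fun _ => ENNReal.ofReal ((1 - q') / (1 - q)) := by funext x; simp
  rw [ht, hfls, withDensity_const, withDensity_const,
    withDensity_scaled q hq.le, withDensity_scaled (1 - q) (by linarith),
    smul_smul, smul_smul,
    ← ENNReal.ofReal_mul (div_nonneg h0' hq.le),
    ← ENNReal.ofReal_mul (div_nonneg (by linarith) (by linarith)),
    div_mul_cancel₀ _ hq.ne', div_mul_cancel₀ _ (by linarith : (1:ℝ) - q ≠ 0)]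
  rw [jointMeasure, withDensity_scaled q' h0', withDensity_scaled (1 - q') (by linarith)]

lemma P1_eq (q' : ℝ) : P1 d (pbox d) (pbox d) q' = if 2 * q' < 1 then 1 else 0 := by
  have h : (fun x => if q' * pbox d x < (1 - q') * pbox d x then pbox d x else 0)
      = fun x => if 2 * q' < 1 then pbox d x else 0 := by
    funext x
    rcases pbox_01 (d := d) x with h | h <;> rw [h]
    · simp
    · exact if_congr (by constructor <;> intro <;> linarith) rfl rfl
  rw [P1, h]
  by_cases h2 : 2 * q' < 1
  · simp only [if_pos h2]; rw [pbox_int]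
  · simp only [if_neg h2, integral_zero]

lemma P0_eq (q' : ℝ) : P0 d (pbox d) (pbox d) q' = if 1 ≤ 2 * q' then 1 else 0 := by
  have h : (fun x => if (1 - q') * pbox d x ≤ q' * pbox d x then pbox d x else 0)
      = fun x => if 1 ≤ 2 * q' then pbox d x else 0 := by
    funext x
    rcases pbox_01 (d := d) x with h | h <;> rw [h]
    · simp
    · exact if_congr (by constructor <;> intro <;> linarith) rfl rfl
  rw [P0, h]
  by_cases h2 : 1 ≤ 2 * q'
  · simp only [if_pos h2]; rw [pbox_int]
  · simp only [if_neg h2, integral_zero]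

lemma risk_eq (q q' : ℝ) :
    risk d (pbox d) (pbox d) q q' = if 2 * q' < 1 then q else 1 - q := by
  rw [risk, P1_eq, P0_eq]
  by_cases h2 : 2 * q' < 1
  · rw [if_pos h2, if_pos h2, if_neg (by linarith)]; ring
  · rw [if_neg h2, if_neg h2, if_pos (by linarith)]; ring

lemma integral_risk (n : ℕ) (q : ℝ) (h0 : 0 ≤ q) (h1 : q ≤ 1)
    (qhat : (Fin n → (Fin d → ℝ) × Bool) → ℝ) (hqm : Measurable qhat) :
    (∫ S, risk d (pbox d) (pbox d) q (qhat S)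
        ∂(Measure.pi fun _ : Fin n => jointMeasure d (pbox d) (pbox d) q))
      = (1 - q) + (2 * q - 1) *
        ((Measure.pi fun _ : Fin n => jointMeasure d (pbox d) (pbox d) q)
          {S | 2 * qhat S < 1}).toReal := by
  haveI := joint_prob (d := d) q h0 h1
  set ν := Measure.pi fun _ : Fin n => jointMeasure d (pbox d) (pbox d) q with hν
  have hE : MeasurableSet {S : Fin n → (Fin d → ℝ) × Bool | 2 * qhat S < 1} :=
    measurableSet_lt (measurable_const.mul hqm) measurable_const
  have hfun : ∀ S, risk d (pbox d) (pbox d) q (qhat S)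
      = (1 - q) + (2 * q - 1) *
        Set.indicator {S : Fin n → (Fin d → ℝ) × Bool | 2 * qhat S < 1} (fun _ => (1:ℝ)) S := by
    intro S
    rw [risk_eq]
    by_cases h : 2 * qhat S < 1
    · simp only [if_pos h, Set.indicator_apply, Set.mem_setOf_eq]; ring
    · simp only [if_neg h, Set.indicator_apply, Set.mem_setOf_eq]; ring
  simp_rw [hfun]
  rw [integral_add (integrable_const _)
    (((integrable_const (1:ℝ)).indicator hE).const_mul _), integral_const,
    integral_const_mul, integral_indicator_const (1:ℝ) hE]
  simp [measure_univ, measureReal_def]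
lemma enn_ptwise (x : ℝ≥0∞) : 18 * x ≤ 324 + x ^ 2 := by
  rcases le_total x 18 with h | h
  · have h1 : 18 * x ≤ 18 * 18 := mul_le_mul_right h 18
    have : (18 : ℝ≥0∞) * 18 = 324 := by norm_num
    rw [this] at h1
    exact h1.trans le_self_add
  · have h1 : 18 * x ≤ x * x := mul_le_mul_left h x
    rw [← sq] at h1
    exact h1.trans le_add_self

lemma aux_lintegral_pi_prod {n : ℕ} {Ω : Type*} [MeasurableSpace Ω] (μ : Measure Ω)
    [SigmaFinite μ] (g : Fin n → Ω → ℝ≥0∞) (hg : ∀ i, Measurable (g i)) :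
    ∫⁻ x, ∏ i, g i (x i) ∂(Measure.pi fun _ : Fin n => μ) = ∏ i, ∫⁻ y, g i y ∂μ := by
  induction n with
  | zero => simp [lintegral_const, Measure.pi_univ]
  | succ n ih =>
      have hmp := (measurePreserving_piFinSuccAbove (fun _ : Fin (n+1) => μ) 0).symm
      rw [← hmp.lintegral_comp_emb (MeasurableEquiv.measurableEmbedding _)]
      simp_rw [MeasurableEquiv.piFinSuccAbove_symm_apply, Fin.insertNthEquiv,
        Fin.prod_univ_succ, Fin.insertNth_zero]
      simp only [Fin.zero_succAbove, Function.comp_def, Equiv.coe_fn_mk,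
        Fin.cons_zero, Fin.cons_succ, cast_eq]
      rw [lintegral_prod_mul (f := fun y => g 0 y)
        (g := fun x : Fin n → Ω => ∏ i, g i.succ (x i)) (hg 0).aemeasurable
        (Measurable.aemeasurable
          (Finset.measurable_prod _ fun i _ => by exact (hg i.succ).comp (measurable_pi_apply i)))]
      rw [ih (fun i => g i.succ) (fun i => hg i.succ)]

lemma aux_pi_withDensity {n : ℕ} {Ω : Type*} [MeasurableSpace Ω] (μ : Measure Ω)
    [IsProbabilityMeasure μ] {f : Ω → ℝ≥0∞} (hf : Measurable f)
    (hfin : IsFiniteMeasure (μ.withDensity f)) :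
    Measure.pi (fun _ : Fin n => μ.withDensity f)
      = (Measure.pi fun _ : Fin n => μ).withDensity (fun S => ∏ i, f (S i)) := by
  refine Measure.pi_eq fun s hs => ?_
  rw [withDensity_apply _ (MeasurableSet.univ_pi hs),
    ← lintegral_indicator (MeasurableSet.univ_pi hs)]
  have hpt : ∀ x : Fin n → Ω, (Set.univ.pi s).indicator (fun S => ∏ i, f (S i)) x
      = ∏ i, (f (x i) * (s i).indicator 1 (x i)) := by
    intro x
    by_cases hx : x ∈ Set.univ.pi s
    · rw [Set.indicator_of_mem hx]
      refine Finset.prod_congr rfl fun i _ => ?_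
      rw [Set.indicator_of_mem (hx i (Set.mem_univ i)), Pi.one_apply, mul_one]
    · rw [Set.indicator_of_notMem hx]
      rw [Set.mem_pi] at hx
      push_neg at hx
      obtain ⟨i, _, hi⟩ := hx
      exact (Finset.prod_eq_zero (Finset.mem_univ i) (by
        rw [Set.indicator_of_notMem hi, mul_zero])).symm
  simp_rw [hpt]
  rw [aux_lintegral_pi_prod μ (fun i y => f y * (s i).indicator 1 y) (fun i => (hf.mul ((measurable_one).indicator (hs i))))]
  refine Finset.prod_congr rfl fun i _ => ?_
  rw [withDensity_apply _ (hs i), ← lintegral_indicator (hs i)]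
  congr 1
  ext y
  by_cases hy : y ∈ s i
  · rw [Set.indicator_of_mem hy, Set.indicator_of_mem hy, Pi.one_apply, mul_one]
  · rw [Set.indicator_of_notMem hy, Set.indicator_of_notMem hy, mul_zero]


lemma core_bound (n : ℕ) (qa qb : ℝ) (hq : qb = 1 - qa) (ha0 : 0 < qa) (ha1 : qa < 1)
    (E : Set (Fin n → (Fin d → ℝ) × Bool)) (hE : MeasurableSet E)
    (hr9 : (qa * (qb / qa) ^ 2 + qb * (qa / qb) ^ 2) ^ n ≤ 9) :
    18 * (Measure.pi fun _ : Fin n => jointMeasure d (pbox d) (pbox d) qb) E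
      ≤ 324 * (Measure.pi fun _ : Fin n => jointMeasure d (pbox d) (pbox d) qa) E + 9 := by
  have hb0 : 0 < qb := by rw [hq]; linarith
  have hb1 : qb < 1 := by rw [hq]; linarith
  haveI := joint_prob (d := d) qa ha0.le ha1.le
  haveI := joint_prob (d := d) qb hb0.le hb1.le
  set f : (Fin d → ℝ) × Bool → ℝ≥0∞ :=
    fun z => ENNReal.ofReal (if z.2 then qb / qa else qa / qb) with hfdef
  have hf : Measurable f := meas_snd_fn fun b => ENNReal.ofReal (if b then qb / qa else qa / qb)
  have hfeq : f = fun z : (Fin d → ℝ) × Bool =>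
      ENNReal.ofReal (if z.2 then qb / qa else (1 - qb) / (1 - qa)) := by
    funext z
    have e1 : (1:ℝ) - qb = qa := by rw [hq]; ring
    have e2 : (1:ℝ) - qa = qb := by rw [hq]
    simp only [e1, e2]
    rfl
  have hsingle : (jointMeasure d (pbox d) (pbox d) qa).withDensity f
      = jointMeasure d (pbox d) (pbox d) qb := by
    rw [hfeq]
    exact joint_density_rel qa qb ha0 ha1 hb0.le hb1.le
  have hfin : IsFiniteMeasure ((jointMeasure d (pbox d) (pbox d) qa).withDensity f) := by
    rw [hsingle]; infer_instance
  have hpi : (Measure.pi fun _ : Fin n => jointMeasure d (pbox d) (pbox d) qb)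
      = (Measure.pi fun _ : Fin n => jointMeasure d (pbox d) (pbox d) qa).withDensity
        (fun S => ∏ i, f (S i)) := by
    rw [← aux_pi_withDensity _ hf hfin]
    congr 1
    funext _
    exact hsingle.symm
  set H : (Fin n → (Fin d → ℝ) × Bool) → ℝ≥0∞ := fun S => ∏ i, f (S i) with hHdef
  have hH : Measurable H :=
    Finset.measurable_prod _ fun i _ => hf.comp (measurable_pi_apply i)
  -- second moment
  have hdiv1 : (0:ℝ) ≤ qb / qa := div_nonneg hb0.le ha0.le
  have hdiv2 : (0:ℝ) ≤ qa / qb := div_nonneg ha0.le hb0.le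
  have hmom : ∫⁻ S, H S ^ 2
      ∂(Measure.pi fun _ : Fin n => jointMeasure d (pbox d) (pbox d) qa) ≤ 9 := by
    have hsq : ∀ S, H S ^ 2 = ∏ i : Fin n, (f (S i)) ^ 2 := by
      intro S; rw [hHdef]; rw [← Finset.prod_pow]
    simp_rw [hsq]
    rw [aux_lintegral_pi_prod _ (fun _ => fun z => f z ^ 2) (fun _ => hf.pow_const 2)]
    have hone0 : ∫⁻ z, f z ^ 2 ∂(jointMeasure d (pbox d) (pbox d) qa)
        = ENNReal.ofReal qa * ENNReal.ofReal (qb / qa) ^ 2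
          + ENNReal.ofReal (1 - qa) * ENNReal.ofReal (qa / qb) ^ 2 :=
      lint_snd qa ha0.le ha1.le
        (fun b => ENNReal.ofReal (if b then qb / qa else qa / qb) ^ 2)
    have hone : ∫⁻ z, f z ^ 2 ∂(jointMeasure d (pbox d) (pbox d) qa)
        = ENNReal.ofReal (qa * (qb / qa) ^ 2 + qb * (qa / qb) ^ 2) := by
      rw [hone0]
      have e2 : (1:ℝ) - qa = qb := by rw [hq]
      rw [e2]
      rw [← ENNReal.ofReal_pow hdiv1, ← ENNReal.ofReal_pow hdiv2,
        ← ENNReal.ofReal_mul ha0.le, ← ENNReal.ofReal_mul hb0.le,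
        ← ENNReal.ofReal_add (by positivity) (by positivity)]
    rw [hone, Finset.prod_const, Finset.card_univ, Fintype.card_fin,
      ← ENNReal.ofReal_pow (by positivity)]
    calc ENNReal.ofReal ((qa * (qb / qa) ^ 2 + qb * (qa / qb) ^ 2) ^ n)
        ≤ ENNReal.ofReal 9 := ENNReal.ofReal_le_ofReal hr9
      _ = 9 := by norm_num
  -- main chain
  rw [hpi, withDensity_apply _ hE]
  rw [← lintegral_const_mul 18 hH]
  calc ∫⁻ S in E, 18 * H S
        ∂(Measure.pi fun _ : Fin n => jointMeasure d (pbox d) (pbox d) qa)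
      ≤ ∫⁻ S in E, (324 + H S ^ 2)
        ∂(Measure.pi fun _ : Fin n => jointMeasure d (pbox d) (pbox d) qa) :=
      lintegral_mono fun S => enn_ptwise (H S)
    _ = 324 * (Measure.pi fun _ : Fin n => jointMeasure d (pbox d) (pbox d) qa) E
        + ∫⁻ S in E, H S ^ 2
          ∂(Measure.pi fun _ : Fin n => jointMeasure d (pbox d) (pbox d) qa) := by
      rw [lintegral_add_left measurable_const, setLIntegral_const]
    _ ≤ 324 * (Measure.pi fun _ : Fin n => jointMeasure d (pbox d) (pbox d) qa) E + 9 := by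
      refine add_le_add_right ?_ _
      exact (setLIntegral_le_lintegral _ _).trans hmom


lemma r_pow_le (n : ℕ) (hn : 1 ≤ n) (t δ qa qb : ℝ)
    (ht : t = Real.sqrt n) (hδ : δ = 1 / (4 * t))
    (hqa : qa = 1 / 2 + δ) (hqb : qb = 1 / 2 - δ) :
    (qa * (qb / qa) ^ 2 + qb * (qa / qb) ^ 2) ^ n ≤ 9 := by
  have hN : (1 : ℝ) ≤ (n : ℝ) := by exact_mod_cast hn
  have ht1 : 1 ≤ t := by
    rw [ht]
    have := Real.sqrt_le_sqrt hN
    rwa [Real.sqrt_one] at this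
  have ht0 : 0 < t := by linarith
  have ht2 : t ^ 2 = (n : ℝ) := by
    rw [ht, Real.sq_sqrt (by linarith : (0:ℝ) ≤ (n:ℝ))]
  have hδpos : 0 < δ := by rw [hδ]; positivity
  have hδ14 : δ ≤ 1 / 4 := by
    rw [hδ]
    rw [div_le_div_iff₀ (by linarith) (by norm_num)]
    linarith
  have hqa0 : 0 < qa := by rw [hqa]; linarith
  have hqb0 : 0 < qb := by rw [hqb]; linarith
  have hδ2 : δ ^ 2 = 1 / (16 * (n : ℝ)) := by
    rw [hδ, div_pow, mul_pow, ht2]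
    norm_num
  have hr : qa * (qb / qa) ^ 2 + qb * (qa / qb) ^ 2
      = 1 + 4 * δ ^ 2 * (1 / qa + 1 / qb) := by
    have hba : qb = qa - 2 * δ := by rw [hqa, hqb]; ring
    have hab : qa = qb + 2 * δ := by rw [hqa, hqb]; ring
    have hsum : qa + qb = 1 := by rw [hqa, hqb]; ring
    have e1 : qa * (qb / qa) ^ 2 = qa - 4 * δ + 4 * δ ^ 2 * (1 / qa) := by
      rw [hba]; field_simp; ring
    have e2 : qb * (qa / qb) ^ 2 = qb + 4 * δ + 4 * δ ^ 2 * (1 / qb) := by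
      rw [hab]; field_simp; ring
    rw [e1, e2]
    linear_combination hsum
  have hqainv : 1 / qa ≤ 2 := by
    rw [div_le_iff₀ hqa0, hqa]; linarith
  have hqbinv : 1 / qb ≤ 4 := by
    rw [div_le_iff₀ hqb0, hqb]; linarith
  have hrle : qa * (qb / qa) ^ 2 + qb * (qa / qb) ^ 2 ≤ 1 + 3 / (2 * (n : ℝ)) := by
    rw [hr, hδ2]
    have h1 : 1 / qa + 1 / qb ≤ 6 := by linarith
    have h2 : (0:ℝ) < (n:ℝ) := by linarith
    have h3 : 4 * (1 / (16 * (n:ℝ))) * (1 / qa + 1 / qb) ≤ 4 * (1 / (16 * (n:ℝ))) * 6 := by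
      have : (0:ℝ) ≤ 4 * (1 / (16 * (n:ℝ))) := by positivity
      exact mul_le_mul_of_nonneg_left h1 this
    have h4 : 4 * (1 / (16 * (n:ℝ))) * 6 = 3 / (2 * (n:ℝ)) := by field_simp; ring
    linarith
  have hrexp : qa * (qb / qa) ^ 2 + qb * (qa / qb) ^ 2 ≤ Real.exp (3 / (2 * (n : ℝ))) := by
    have := Real.add_one_le_exp (3 / (2 * (n : ℝ)))
    linarith
  have hr0 : 0 ≤ qa * (qb / qa) ^ 2 + qb * (qa / qb) ^ 2 := by positivity
  calc (qa * (qb / qa) ^ 2 + qb * (qa / qb) ^ 2) ^ n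
      ≤ Real.exp (3 / (2 * (n : ℝ))) ^ n := pow_le_pow_left₀ hr0 hrexp n
    _ = Real.exp ((n : ℝ) * (3 / (2 * (n : ℝ)))) := by rw [Real.exp_nat_mul]
    _ = Real.exp (3 / 2) := by
        congr 1
        field_simp
    _ ≤ 9 := by
        have h1 : Real.exp (3 / 2) ≤ Real.exp 2 := Real.exp_le_exp.mpr (by norm_num)
        have h2 : Real.exp 2 = Real.exp 1 ^ 2 := by
          rw [← Real.exp_nat_mul]; norm_num
        nlinarith [Real.exp_one_lt_d9, Real.exp_pos 1]


/-- Theorem 1: minimax lower bound `c·n^{-1/2}` over all triples `(p₁,p₀,q)` for any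
estimator of the prior based on `n` i.i.d. labeled samples. -/
theorem stmt_6 (d : ℕ) (hd : 1 ≤ d) :
    ∃ c : ℝ, 0 < c ∧ ∀ n : ℕ, 1 ≤ n →
      ∀ qhat : (Fin n → (Fin d → ℝ) × Bool) → ℝ, Measurable qhat →
        (∀ S, qhat S ∈ Set.Icc (0 : ℝ) 1) →
        ∃ p₁ p₀ : (Fin d → ℝ) → ℝ, ∃ q : ℝ,
          Measurable p₁ ∧ (∀ x, 0 ≤ p₁ x) ∧ (∫ x, p₁ x) = 1 ∧
          Measurable p₀ ∧ (∀ x, 0 ≤ p₀ x) ∧ (∫ x, p₀ x) = 1 ∧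
          q ∈ Set.Icc (0 : ℝ) 1 ∧
          c * (n : ℝ) ^ (-(1 / 2) : ℝ) ≤
            (∫ S, risk d p₁ p₀ q (qhat S)
                ∂(Measure.pi fun _ : Fin n => jointMeasure d p₁ p₀ q)) -
              risk d p₁ p₀ q q := by
  refine ⟨1/144, by norm_num, ?_⟩
  intro n hn qhat hqm hqmem
  have hN : (1:ℝ) ≤ (n:ℝ) := by exact_mod_cast hn
  set t : ℝ := Real.sqrt n with ht
  have ht1 : 1 ≤ t := by
    rw [ht]
    have := Real.sqrt_le_sqrt hN
    rwa [Real.sqrt_one] at this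
  have ht0 : 0 < t := by linarith
  set δ : ℝ := 1/(4*t) with hδ
  have hδpos : 0 < δ := by rw [hδ]; positivity
  have hδ14 : δ ≤ 1/4 := by
    rw [hδ, div_le_div_iff₀ (by linarith) (by norm_num)]
    linarith
  set qa : ℝ := 1/2 + δ with hqa
  set qb : ℝ := 1/2 - δ with hqb
  have ha0 : 0 < qa := by rw [hqa]; linarith
  have ha1 : qa < 1 := by rw [hqa]; linarith
  have hb0 : 0 < qb := by rw [hqb]; linarith
  have hb1 : qb < 1 := by rw [hqb]; linarith
  have hrel : qb = 1 - qa := by rw [hqa, hqb]; ring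
  have hr9 := r_pow_le n hn t δ qa qb ht hδ hqa hqb
  have hE : MeasurableSet {S : Fin n → (Fin d → ℝ) × Bool | 2 * qhat S < 1} :=
    measurableSet_lt (measurable_const.mul hqm) measurable_const
  haveI := joint_prob (d := d) qa ha0.le ha1.le
  haveI := joint_prob (d := d) qb hb0.le hb1.le
  haveI : IsProbabilityMeasure
      (Measure.pi fun _ : Fin n => jointMeasure d (pbox d) (pbox d) qa) := by infer_instance
  haveI : IsProbabilityMeasure
      (Measure.pi fun _ : Fin n => jointMeasure d (pbox d) (pbox d) qb) := by infer_instance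
  have hcore := core_bound n qa qb hrel ha0 ha1 _ hE hr9
  set A := (Measure.pi fun _ : Fin n => jointMeasure d (pbox d) (pbox d) qa)
    {S | 2 * qhat S < 1} with hA
  set B := (Measure.pi fun _ : Fin n => jointMeasure d (pbox d) (pbox d) qb)
    {S | 2 * qhat S < 1} with hB
  have hAfin : A ≠ ⊤ := measure_ne_top _ _
  have hBfin : B ≠ ⊤ := measure_ne_top _ _
  have hreal : 18 * B.toReal ≤ 324 * A.toReal + 9 := by
    have hRHS : 324 * A + 9 ≠ ⊤ :=
      ENNReal.add_ne_top.mpr ⟨ENNReal.mul_ne_top (by norm_num) hAfin, by norm_num⟩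
    have h1 := ENNReal.toReal_mono hRHS hcore
    rw [ENNReal.toReal_mul,
      ENNReal.toReal_add (ENNReal.mul_ne_top (by norm_num) hAfin) (by norm_num),
      ENNReal.toReal_mul] at h1
    norm_num at h1
    exact h1
  have hA0' : 0 ≤ A.toReal := ENNReal.toReal_nonneg
  have hB1' : B.toReal ≤ 1 := by
    have hB1e : B ≤ 1 := by rw [hB]; exact prob_le_one
    have h2 := ENNReal.toReal_mono (by norm_num : (1:ℝ≥0∞) ≠ ⊤) hB1e
    simpa using h2
  have hrpow : ((n:ℝ)) ^ (-(1/2) : ℝ) = 1 / t := by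
    rw [Real.rpow_neg (Nat.cast_nonneg n), ← Real.sqrt_eq_rpow, ← ht, one_div]
  by_cases hcase : (1:ℝ)/72 ≤ A.toReal
  · refine ⟨pbox d, pbox d, qa, pbox_meas, pbox_nonneg, pbox_int,
      pbox_meas, pbox_nonneg, pbox_int, ⟨ha0.le, ha1.le⟩, ?_⟩
    rw [integral_risk n qa ha0.le ha1.le qhat hqm, risk_eq qa qa,
      if_neg (by rw [hqa]; push_neg; linarith), ← hA, hrpow]
    have key : (2*qa-1) * A.toReal - 1/144 * (1/t) = ((A.toReal - 1/72) * 72)/(144*t) := by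
      rw [hqa, hδ]
      field_simp
      ring
    have hnn : 0 ≤ ((A.toReal - 1/72) * 72)/(144*t) :=
      div_nonneg (by linarith) (by positivity)
    linarith
  · push_neg at hcase
    have hble : B.toReal ≤ 3/4 := by linarith
    refine ⟨pbox d, pbox d, qb, pbox_meas, pbox_nonneg, pbox_int,
      pbox_meas, pbox_nonneg, pbox_int, ⟨hb0.le, hb1.le⟩, ?_⟩
    rw [integral_risk n qb hb0.le hb1.le qhat hqm, risk_eq qb qb,
      if_pos (by rw [hqb]; linarith), ← hB, hrpow]
    have key : ((1-qb) + (2*qb-1)*B.toReal - qb) - 1/144*(1/t)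
        = ((3/4 - B.toReal)*72 + 17)/(144*t) := by
      rw [hqb, hδ]
      field_simp
      ring
    have hnn : 0 ≤ ((3/4 - B.toReal)*72 + 17)/(144*t) :=
      div_nonneg (by linarith) (by positivity)
    linarith
end
end

section
/- (Theorem 4, fast rates for the trimmed MLE with labeled data) For every θ ∈ (0,1/2), α ≥ 0 and C₀ > 0 there exists a constant C > 0 such that the following holds: for every n ≥ 1 and every triple (p₁,p₀,q) with q ∈ [θ,1−θ] satisfying the margin assumption MA(C₀,α), if Y₁,…,Yₙ are the labels of n i.i.d. training samples from π and q̂ is the trimmed maximum likelihood estimate, i.e. the projection of (1/n)·Σᵢ 1{Yᵢ=1} onto the interval [θ,1−θ], then E[R(q̂)] − R(q) ≤ C·n^{−(1+α)/2}. -/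
open MeasureTheory

noncomputable section

/-- The regression function `η(x) = q·p₁(x)/(q·p₁(x)+(1−q)·p₀(x))`. -/
def eta (d : ℕ) (p₁ p₀ : (Fin d → ℝ) → ℝ) (q : ℝ) (x : Fin d → ℝ) : ℝ :=
  q * p₁ x / (q * p₁ x + (1 - q) * p₀ x)

/-- The marginal `P_X`, with density `q·p₁ + (1−q)·p₀`. -/
def margX (d : ℕ) (p₁ p₀ : (Fin d → ℝ) → ℝ) (q : ℝ) : Measure (Fin d → ℝ) :=
  volume.withDensity fun x => ENNReal.ofReal (q * p₁ x + (1 - q) * p₀ x)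

/-- The margin assumption MA(C₀,α). -/
def MA (d : ℕ) (p₁ p₀ : (Fin d → ℝ) → ℝ) (q C₀ α : ℝ) : Prop :=
  ∀ t : ℝ, 0 < t →
    (margX d p₁ p₀ q
        {x | 0 < |eta d p₁ p₀ q x - 1 / 2| ∧ |eta d p₁ p₀ q x - 1 / 2| ≤ t}).toReal ≤
      C₀ * t ^ α

/-- The trimmed MLE of the prior from the labels of the sample `S`: the projection of the
empirical frequency of label `1` onto `[θ, 1−θ]`. -/
def trimmedMLE (d : ℕ) (θ : ℝ) (n : ℕ) (S : Fin n → (Fin d → ℝ) × Bool) : ℝ :=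
  max θ (min (1 - θ) ((∑ i, if (S i).2 = true then (1 : ℝ) else 0) / n))


variable {d : ℕ} {p₁ p₀ : (Fin d → ℝ) → ℝ} {q : ℝ}

lemma integrable_of_int_one (hm : Measurable p₁) (h1 : (∫ x, p₁ x) = 1) :
    Integrable p₁ := by
  by_contra h
  rw [integral_undef h] at h1
  norm_num at h1

lemma lintegral_ofReal_density (hm : Measurable p₁) (hnn : ∀ x, 0 ≤ p₁ x)
    (h1 : (∫ x, p₁ x) = 1) (c : ℝ) (hc : 0 ≤ c) :
    ∫⁻ x, ENNReal.ofReal (c * p₁ x) = ENNReal.ofReal c := by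
  have hint : Integrable p₁ := integrable_of_int_one hm h1
  calc ∫⁻ x, ENNReal.ofReal (c * p₁ x)
      = ∫⁻ x, ENNReal.ofReal c * ENNReal.ofReal (p₁ x) := by
        simp_rw [← ENNReal.ofReal_mul hc]
    _ = ENNReal.ofReal c * ∫⁻ x, ENNReal.ofReal (p₁ x) :=
        lintegral_const_mul _ (by measurability)
    _ = ENNReal.ofReal c := by
        rw [← ofReal_integral_eq_lintegral_ofReal hint (Filter.Eventually.of_forall hnn), h1]
        simp

lemma joint_prob_s8 (hm1 : Measurable p₁) (hnn1 : ∀ x, 0 ≤ p₁ x) (hi1 : (∫ x, p₁ x) = 1)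
    (hm0 : Measurable p₀) (hnn0 : ∀ x, 0 ≤ p₀ x) (hi0 : (∫ x, p₀ x) = 1)
    (hq0 : 0 ≤ q) (hq1 : q ≤ 1) :
    IsProbabilityMeasure (jointMeasure d p₁ p₀ q) := by
  constructor
  rw [jointMeasure]
  rw [Measure.add_apply,
    Measure.map_apply (by measurability) MeasurableSet.univ,
    Measure.map_apply (by measurability) MeasurableSet.univ]
  simp only [Set.preimage_univ, withDensity_apply _ MeasurableSet.univ,
    Measure.restrict_univ]
  rw [lintegral_ofReal_density hm1 hnn1 hi1 q hq0,
    lintegral_ofReal_density hm0 hnn0 hi0 (1-q) (by linarith),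
    ← ENNReal.ofReal_add hq0 (by linarith)]
  norm_num

lemma measurable_of_bool (f : Bool → ℝ) : Measurable (fun y : (Fin d → ℝ) × Bool => f y.2) :=
  (measurable_from_top (f := f)).comp measurable_snd

lemma integrable_joint_label (hm1 : Measurable p₁) (hnn1 : ∀ x, 0 ≤ p₁ x) (hi1 : (∫ x, p₁ x) = 1)
    (hm0 : Measurable p₀) (hnn0 : ∀ x, 0 ≤ p₀ x) (hi0 : (∫ x, p₀ x) = 1)
    (hq0 : 0 ≤ q) (hq1 : q ≤ 1) (f : Bool → ℝ) :
    Integrable (fun y => f y.2) (jointMeasure d p₁ p₀ q) := by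
  haveI := joint_prob_s8 hm1 hnn1 hi1 hm0 hnn0 hi0 hq0 hq1
  refine Integrable.mono' (integrable_const (max |f true| |f false|))
    (measurable_of_bool f).aestronglyMeasurable ?_
  refine Filter.Eventually.of_forall fun y => ?_
  rcases y.2 with _ | _ <;> simp [le_max_left, le_max_right]

lemma integral_joint_label (hm1 : Measurable p₁) (hnn1 : ∀ x, 0 ≤ p₁ x) (hi1 : (∫ x, p₁ x) = 1)
    (hm0 : Measurable p₀) (hnn0 : ∀ x, 0 ≤ p₀ x) (hi0 : (∫ x, p₀ x) = 1)
    (hq0 : 0 ≤ q) (hq1 : q ≤ 1) (f : Bool → ℝ) :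
    ∫ y, f y.2 ∂(jointMeasure d p₁ p₀ q) = q * f true + (1 - q) * f false := by
  have hint := integrable_joint_label hm1 hnn1 hi1 hm0 hnn0 hi0 hq0 hq1 (f := f)
  rw [jointMeasure] at hint ⊢
  rw [integral_add_measure ((integrable_add_measure.mp hint).1) ((integrable_add_measure.mp hint).2)]
  rw [integral_map (by measurability) ((measurable_of_bool f).aestronglyMeasurable),
      integral_map (by measurability) ((measurable_of_bool f).aestronglyMeasurable)]
  simp only [integral_const]
  have hu1 : (volume.withDensity fun x => ENNReal.ofReal (q * p₁ x)) Set.univ = ENNReal.ofReal q := by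
    rw [withDensity_apply _ MeasurableSet.univ, Measure.restrict_univ,
      lintegral_ofReal_density hm1 hnn1 hi1 q hq0]
  have hu0 : (volume.withDensity fun x => ENNReal.ofReal ((1-q) * p₀ x)) Set.univ = ENNReal.ofReal (1-q) := by
    rw [withDensity_apply _ MeasurableSet.univ, Measure.restrict_univ,
      lintegral_ofReal_density hm0 hnn0 hi0 (1-q) (by linarith)]
  rw [measureReal_def, measureReal_def, hu1, hu0, ENNReal.toReal_ofReal hq0, ENNReal.toReal_ofReal (by linarith)]
  simp [smul_eq_mul]

set_option maxHeartbeats 1000000 in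
/-- Pure-real pointwise excess-risk bound. -/
lemma pointwise_core (θ q q' t P Q : ℝ) (hθ : 0 < θ) (hqθ : θ ≤ q) (hq1θ : q ≤ 1 - θ)
    (ht : |q' - q| / (2*θ) ≤ t) (ht0 : 0 < t) (hP : 0 ≤ P) (hQ : 0 ≤ Q) :
    (q * (if q' * P < (1-q') * Q then P else 0)
      + (1-q) * (if (1-q') * Q ≤ q' * P then Q else 0))
    - (q * (if q * P < (1-q) * Q then P else 0)
      + (1-q) * (if (1-q) * Q ≤ q * P then Q else 0))
    ≤ (if 0 < |q*P/(q*P+(1-q)*Q) - 1/2| ∧ |q*P/(q*P+(1-q)*Q) - 1/2| ≤ t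
        then 2*t*(q*P+(1-q)*Q) else 0) := by
  have hq0 : 0 < q := lt_of_lt_of_le hθ hqθ
  have hq1 : q < 1 := by linarith
  have hSnn : 0 ≤ q*P+(1-q)*Q := by nlinarith
  have hrhs_nn : (0:ℝ) ≤ (if 0 < |q*P/(q*P+(1-q)*Q) - 1/2| ∧ |q*P/(q*P+(1-q)*Q) - 1/2| ≤ t
      then 2*t*(q*P+(1-q)*Q) else 0) := by
    split_ifs
    · nlinarith
    · exact le_rfl
  have habs0 : |q' - q| ≤ 2*θ*t := by
    rw [div_le_iff₀ (by positivity)] at ht; linarith [ht]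
  have habs1 : q' - q ≤ 2*θ*t := le_trans (le_abs_self _) habs0
  have habs2 : q - q' ≤ 2*θ*t := by
    have := neg_abs_le (q' - q); linarith
  by_cases hA' : q' * P < (1-q') * Q <;> by_cases hA : q * P < (1-q) * Q
  · rw [if_pos hA', if_pos hA, if_neg (not_le.mpr hA'), if_neg (not_le.mpr hA)]
    linarith [hrhs_nn]
  · -- A' true, A false : g = qP - (1-q)Q ≥ 0
    have hAle : (1-q) * Q ≤ q * P := not_lt.mp hA
    rw [if_pos hA', if_neg hA, if_neg (not_le.mpr hA'), if_pos hAle]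
    rcases eq_or_lt_of_le hAle with hD0 | hDpos
    · linarith [hrhs_nn]
    · have h1qQ : 0 ≤ (1-q)*Q := mul_nonneg (by linarith) hQ
      have hqP : 0 < q*P := lt_of_le_of_lt h1qQ hDpos
      have hPpos : 0 < P := by nlinarith
      have hDbd : q*P - (1-q)*Q ≤ 2*θ*t * (P + Q) := by nlinarith
      have hPQ : 0 < P + Q := by linarith
      have hS : 0 < q*P+(1-q)*Q := by linarith
      have heta : q*P/(q*P+(1-q)*Q) - 1/2 = (q*P - (1-q)*Q) / (2*(q*P+(1-q)*Q)) := by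
        field_simp; ring
      have habseta : |q*P/(q*P+(1-q)*Q) - 1/2| = (q*P - (1-q)*Q) / (2*(q*P+(1-q)*Q)) := by
        rw [heta, abs_of_pos (div_pos (by linarith) (by linarith))]
      have hled : (q*P - (1-q)*Q) / (2*(q*P+(1-q)*Q)) ≤ t := by
        rw [div_le_iff₀ (by linarith)]
        have hden : 2*θ*(P+Q) ≤ 2*(q*P+(1-q)*Q) := by nlinarith
        nlinarith
      rw [if_pos ⟨by rw [habseta]; exact div_pos (by linarith) (by linarith),
        by rw [habseta]; exact hled⟩]
      rw [div_le_iff₀ (by linarith)] at hled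
      nlinarith
  · -- A' false, A true : g = (1-q)Q - qP > 0
    have hA'le : (1-q') * Q ≤ q' * P := not_lt.mp hA'
    rw [if_neg hA', if_pos hA, if_pos hA'le, if_neg (not_le.mpr hA)]
    have hDpos : q * P < (1-q) * Q := hA
    have hqP : 0 ≤ q*P := mul_nonneg hq0.le hP
    have h1qQ : 0 < (1-q)*Q := lt_of_le_of_lt hqP hA
    have hQpos : 0 < Q := by nlinarith
    have hDbd : (1-q)*Q - q*P ≤ 2*θ*t * (P + Q) := by nlinarith
    have hPQ : 0 < P + Q := by linarith
    have hS : 0 < q*P+(1-q)*Q := by linarith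
    have heta : q*P/(q*P+(1-q)*Q) - 1/2 = (q*P - (1-q)*Q) / (2*(q*P+(1-q)*Q)) := by
      field_simp; ring
    have habseta : |q*P/(q*P+(1-q)*Q) - 1/2| = ((1-q)*Q - q*P) / (2*(q*P+(1-q)*Q)) := by
      rw [heta, abs_of_neg (div_neg_of_neg_of_pos (by linarith) (by linarith))]
      rw [← neg_div]; ring_nf
    have hled : ((1-q)*Q - q*P) / (2*(q*P+(1-q)*Q)) ≤ t := by
      rw [div_le_iff₀ (by linarith)]
      have hden : 2*θ*(P+Q) ≤ 2*(q*P+(1-q)*Q) := by nlinarith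
      nlinarith
    rw [if_pos ⟨by rw [habseta]; exact div_pos (by linarith) (by linarith),
      by rw [habseta]; exact hled⟩]
    rw [div_le_iff₀ (by linarith)] at hled
    nlinarith
  · rw [if_neg hA', if_neg hA, if_pos (not_lt.mp hA'), if_pos (not_lt.mp hA)]
    linarith [hrhs_nn]

lemma excess_le (θ α C₀ : ℝ) (hθ : 0 < θ) (hθ2 : θ < 1/2) (hα : 0 ≤ α) (hC₀ : 0 < C₀)
    (hm1 : Measurable p₁) (hnn1 : ∀ x, 0 ≤ p₁ x) (hi1 : (∫ x, p₁ x) = 1)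
    (hm0 : Measurable p₀) (hnn0 : ∀ x, 0 ≤ p₀ x) (hi0 : (∫ x, p₀ x) = 1)
    (hq : q ∈ Set.Icc θ (1 - θ)) (hMA : MA d p₁ p₀ q C₀ α) (q' : ℝ) :
    risk d p₁ p₀ q q' - risk d p₁ p₀ q q ≤
      (2 * C₀ / (2*θ)^(1+α)) * |q' - q| ^ (1+α) := by
  obtain ⟨hqθ, hq1θ⟩ := hq
  have hq0 : 0 < q := lt_of_lt_of_le hθ hqθ
  have hq1 : q < 1 := by linarith
  rcases eq_or_ne q' q with rfl | hne
  · simp [Real.zero_rpow (by positivity : (1:ℝ) + α ≠ 0)]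
  have habs : 0 < |q' - q| := abs_pos.2 (sub_ne_zero.2 hne)
  set t := |q' - q| / (2*θ) with ht_def
  have ht : 0 < t := by positivity
  have hI1 : Integrable p₁ := integrable_of_int_one hm1 hi1
  have hI0 : Integrable p₀ := integrable_of_int_one hm0 hi0
  have hmf1 : ∀ r : ℝ, Measurable (fun x => if r * p₁ x < (1-r) * p₀ x then p₁ x else 0) :=
    fun r => Measurable.ite (measurableSet_lt (hm1.const_mul r) (hm0.const_mul (1-r)))
      hm1 measurable_const
  have hmf0 : ∀ r : ℝ, Measurable (fun x => if (1-r) * p₀ x ≤ r * p₁ x then p₀ x else 0) :=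
    fun r => Measurable.ite (measurableSet_le (hm0.const_mul (1-r)) (hm1.const_mul r))
      hm0 measurable_const
  have hif1 : ∀ r : ℝ, Integrable (fun x => if r * p₁ x < (1-r) * p₀ x then p₁ x else 0) :=
    fun r => by
      refine hI1.mono' (hmf1 r).aestronglyMeasurable (Filter.Eventually.of_forall fun x => ?_)
      split_ifs <;> simp [abs_of_nonneg, hnn1 x]
  have hif0 : ∀ r : ℝ, Integrable (fun x => if (1-r) * p₀ x ≤ r * p₁ x then p₀ x else 0) :=
    fun r => by
      refine hI0.mono' (hmf0 r).aestronglyMeasurable (Filter.Eventually.of_forall fun x => ?_)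
      split_ifs <;> simp [abs_of_nonneg, hnn0 x]
  have intA : ∀ r : ℝ, Integrable (fun x =>
      q * (if r * p₁ x < (1-r) * p₀ x then p₁ x else 0)
      + (1-q) * (if (1-r) * p₀ x ≤ r * p₁ x then p₀ x else 0)) :=
    fun r => ((hif1 r).const_mul q).add ((hif0 r).const_mul (1-q))
  have hgi : Integrable (fun x =>
      (q * (if q' * p₁ x < (1-q') * p₀ x then p₁ x else 0)
        + (1-q) * (if (1-q') * p₀ x ≤ q' * p₁ x then p₀ x else 0))
      - (q * (if q * p₁ x < (1-q) * p₀ x then p₁ x else 0)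
        + (1-q) * (if (1-q) * p₀ x ≤ q * p₁ x then p₀ x else 0))) := (intA q').sub (intA q)
  have eA : ∀ r : ℝ, (q * ∫ x, (if r * p₁ x < (1-r) * p₀ x then p₁ x else 0))
      + (1-q) * ∫ x, (if (1-r) * p₀ x ≤ r * p₁ x then p₀ x else 0)
      = ∫ x, (q * (if r * p₁ x < (1-r) * p₀ x then p₁ x else 0)
        + (1-q) * (if (1-r) * p₀ x ≤ r * p₁ x then p₀ x else 0)) := fun r => by
    rw [← integral_const_mul, ← integral_const_mul,
      ← integral_add ((hif1 r).const_mul q) ((hif0 r).const_mul (1-q))]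
  have hrisk : risk d p₁ p₀ q q' - risk d p₁ p₀ q q = ∫ x,
      ((q * (if q' * p₁ x < (1-q') * p₀ x then p₁ x else 0)
        + (1-q) * (if (1-q') * p₀ x ≤ q' * p₁ x then p₀ x else 0))
      - (q * (if q * p₁ x < (1-q) * p₀ x then p₁ x else 0)
        + (1-q) * (if (1-q) * p₀ x ≤ q * p₁ x then p₀ x else 0))) := by
    simp only [risk, P1, P0]
    rw [eA q', eA q, ← integral_sub (intA q') (intA q)]
  set E : Set (Fin d → ℝ) :=
    {x | 0 < |eta d p₁ p₀ q x - 1/2| ∧ |eta d p₁ p₀ q x - 1/2| ≤ t} with hE_def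
  have heta : Measurable (eta d p₁ p₀ q) :=
    (hm1.const_mul q).div ((hm1.const_mul q).add (hm0.const_mul (1-q)))
  have hetaabs : Measurable (fun x => |eta d p₁ p₀ q x - 1/2|) :=
    (heta.sub measurable_const).abs
  have hE : MeasurableSet E :=
    (measurableSet_lt measurable_const hetaabs).inter (measurableSet_le hetaabs measurable_const)
  have hSi : Integrable (fun x => q * p₁ x + (1-q) * p₀ x) :=
    (hI1.const_mul q).add (hI0.const_mul (1-q))
  have hSm : Measurable (fun x => q * p₁ x + (1-q) * p₀ x) :=
    (hm1.const_mul q).add (hm0.const_mul (1-q))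
  have hSnn : ∀ x, 0 ≤ q * p₁ x + (1-q) * p₀ x := fun x => by
    have h1 := hnn1 x; have h0 := hnn0 x; nlinarith
  have hhi : Integrable (E.indicator (fun x => 2 * t * (q * p₁ x + (1-q) * p₀ x))) :=
    (hSi.const_mul (2*t)).indicator hE
  have hpt : ∀ x,
      (q * (if q' * p₁ x < (1-q') * p₀ x then p₁ x else 0)
        + (1-q) * (if (1-q') * p₀ x ≤ q' * p₁ x then p₀ x else 0))
      - (q * (if q * p₁ x < (1-q) * p₀ x then p₁ x else 0)
        + (1-q) * (if (1-q) * p₀ x ≤ q * p₁ x then p₀ x else 0))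
      ≤ E.indicator (fun x => 2 * t * (q * p₁ x + (1-q) * p₀ x)) x := by
    intro x
    have := pointwise_core θ q q' t (p₁ x) (p₀ x) hθ hqθ hq1θ (le_of_eq ht_def.symm) ht
      (hnn1 x) (hnn0 x)
    refine le_trans this (le_of_eq ?_)
    rw [Set.indicator_apply]
    simp only [hE_def, Set.mem_setOf_eq, eta]
  have hint_le : (∫ x,
      ((q * (if q' * p₁ x < (1-q') * p₀ x then p₁ x else 0)
        + (1-q) * (if (1-q') * p₀ x ≤ q' * p₁ x then p₀ x else 0))
      - (q * (if q * p₁ x < (1-q) * p₀ x then p₁ x else 0)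
        + (1-q) * (if (1-q) * p₀ x ≤ q * p₁ x then p₀ x else 0))))
      ≤ ∫ x, E.indicator (fun x => 2 * t * (q * p₁ x + (1-q) * p₀ x)) x :=
    integral_mono hgi hhi hpt
  have hh_val : (∫ x, E.indicator (fun x => 2 * t * (q * p₁ x + (1-q) * p₀ x)) x)
      = 2 * t * (margX d p₁ p₀ q E).toReal := by
    rw [integral_indicator hE, integral_const_mul]
    congr 1
    rw [margX, withDensity_apply _ hE]
    rw [integral_eq_lintegral_of_nonneg_ae
      (Filter.Eventually.of_forall fun x => hSnn x) (hSm.aestronglyMeasurable.restrict)]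
  have hMA_bd : (margX d p₁ p₀ q E).toReal ≤ C₀ * t ^ α := hMA t ht
  calc risk d p₁ p₀ q q' - risk d p₁ p₀ q q
      ≤ ∫ x, E.indicator (fun x => 2 * t * (q * p₁ x + (1-q) * p₀ x)) x := by
        rw [hrisk]; exact hint_le
    _ = 2 * t * (margX d p₁ p₀ q E).toReal := hh_val
    _ ≤ 2 * t * (C₀ * t ^ α) := mul_le_mul_of_nonneg_left hMA_bd (by positivity)
    _ = 2 * C₀ * t ^ (1 + α) := by
        rw [Real.rpow_add ht, Real.rpow_one]; ring
    _ = (2 * C₀ / (2*θ)^(1+α)) * |q' - q| ^ (1+α) := by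
        rw [ht_def, Real.div_rpow (abs_nonneg _) (by positivity)]
        ring

lemma clamp_contract (θ q z : ℝ) (hqθ : θ ≤ q) (hq1θ : q ≤ 1 - θ) :
    |max θ (min (1 - θ) z) - q| ≤ |z - q| := by
  rcases le_total z θ with h | h
  · rw [min_eq_right (by linarith), max_eq_left (by linarith)]
    rw [abs_of_nonpos (by linarith), abs_of_nonpos (by linarith)]
    linarith
  · rcases le_total z (1 - θ) with h2 | h2
    · rw [min_eq_right h2, max_eq_right h]
    · rw [min_eq_left h2, max_eq_right (by linarith)]
      rw [abs_of_nonneg (by linarith), abs_of_nonneg (by linarith)]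
      linarith

lemma P1_mem (hm1 : Measurable p₁) (hnn1 : ∀ x, 0 ≤ p₁ x) (hi1 : (∫ x, p₁ x) = 1)
    (hm0 : Measurable p₀) (r : ℝ) : 0 ≤ P1 d p₁ p₀ r ∧ P1 d p₁ p₀ r ≤ 1 := by
  have hI1 : Integrable p₁ := integrable_of_int_one hm1 hi1
  have hm : Measurable (fun x => if r * p₁ x < (1-r) * p₀ x then p₁ x else 0) :=
    Measurable.ite (measurableSet_lt (hm1.const_mul r) (hm0.const_mul (1-r))) hm1 measurable_const
  have hint : Integrable (fun x => if r * p₁ x < (1-r) * p₀ x then p₁ x else 0) := by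
    refine hI1.mono' hm.aestronglyMeasurable (Filter.Eventually.of_forall fun x => ?_)
    split_ifs <;> simp [abs_of_nonneg, hnn1 x]
  constructor
  · exact integral_nonneg fun x => by dsimp; split_ifs <;> simp [hnn1 x]
  · rw [← hi1]
    exact integral_mono hint hI1 fun x => by dsimp; split_ifs <;> simp [hnn1 x]

lemma P0_mem (hm0 : Measurable p₀) (hnn0 : ∀ x, 0 ≤ p₀ x) (hi0 : (∫ x, p₀ x) = 1)
    (hm1 : Measurable p₁) (r : ℝ) : 0 ≤ P0 d p₁ p₀ r ∧ P0 d p₁ p₀ r ≤ 1 := by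
  have hI0 : Integrable p₀ := integrable_of_int_one hm0 hi0
  have hm : Measurable (fun x => if (1-r) * p₀ x ≤ r * p₁ x then p₀ x else 0) :=
    Measurable.ite (measurableSet_le (hm0.const_mul (1-r)) (hm1.const_mul r)) hm0 measurable_const
  have hint : Integrable (fun x => if (1-r) * p₀ x ≤ r * p₁ x then p₀ x else 0) := by
    refine hI0.mono' hm.aestronglyMeasurable (Filter.Eventually.of_forall fun x => ?_)
    split_ifs <;> simp [abs_of_nonneg, hnn0 x]
  constructor
  · exact integral_nonneg fun x => by dsimp; split_ifs <;> simp [hnn0 x]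
  · rw [← hi0]
    exact integral_mono hint hI0 fun x => by dsimp; split_ifs <;> simp [hnn0 x]

lemma risk_mem (hm1 : Measurable p₁) (hnn1 : ∀ x, 0 ≤ p₁ x) (hi1 : (∫ x, p₁ x) = 1)
    (hm0 : Measurable p₀) (hnn0 : ∀ x, 0 ≤ p₀ x) (hi0 : (∫ x, p₀ x) = 1)
    (hq0 : 0 ≤ q) (hq1 : q ≤ 1) (r : ℝ) :
    0 ≤ risk d p₁ p₀ q r ∧ risk d p₁ p₀ q r ≤ 1 := by
  obtain ⟨h1a, h1b⟩ := P1_mem hm1 hnn1 hi1 hm0 r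
  obtain ⟨h0a, h0b⟩ := P0_mem hm0 hnn0 hi0 hm1 r
  constructor
  · simp only [risk]; nlinarith
  · simp only [risk]; nlinarith

set_option synthInstance.maxHeartbeats 1000000 in
lemma prod_integral_eq (hm1 : Measurable p₁) (hnn1 : ∀ x, 0 ≤ p₁ x) (hi1 : (∫ x, p₁ x) = 1)
    (hm0 : Measurable p₀) (hnn0 : ∀ x, 0 ≤ p₀ x) (hi0 : (∫ x, p₀ x) = 1)
    (hq0 : 0 ≤ q) (hq1 : q ≤ 1) (n : ℕ) (f : (Fin d → ℝ) × Bool → ℝ) (hf : Measurable f) :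
    ∫ S : Fin n → (Fin d → ℝ) × Bool, (∏ i, f (S i))
      ∂(Measure.pi fun _ => jointMeasure d p₁ p₀ q)
    = (∫ y, f y ∂(jointMeasure d p₁ p₀ q)) ^ n := by
  haveI hP := joint_prob_s8 hm1 hnn1 hi1 hm0 hnn0 hi0 hq0 hq1
  letI : MeasureSpace ((Fin d → ℝ) × Bool) := ⟨jointMeasure d p₁ p₀ q⟩
  haveI : IsProbabilityMeasure (volume : Measure ((Fin d → ℝ) × Bool)) := hP
  haveI : IsFiniteMeasure (volume : Measure ((Fin d → ℝ) × Bool)) := by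
    constructor
    show (jointMeasure d p₁ p₀ q) Set.univ < ⊤
    rw [hP.measure_univ]; exact ENNReal.one_lt_top
  haveI : SigmaFinite (volume : Measure ((Fin d → ℝ) × Bool)) := inferInstance
  have := MeasureTheory.integral_fintype_prod_eq_pow (ι := Fin n) (E := (Fin d → ℝ) × Bool) (μ := jointMeasure d p₁ p₀ q) f
  simpa [Fintype.card_fin] using this

lemma aux_rpow_le_exp {p u : ℝ} (hp : 0 < p) (hu : 0 ≤ u) :
    u ^ p ≤ (p / Real.exp 1) ^ p * Real.exp u := by
  rcases eq_or_lt_of_le hu with h | h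
  · rw [← h, Real.zero_rpow hp.ne']
    positivity
  · have hpe : 0 < p / Real.exp 1 := by positivity
    rw [Real.rpow_def_of_pos h, Real.rpow_def_of_pos hpe, ← Real.exp_add]
    apply Real.exp_le_exp.2
    have hlog : Real.log (u / p) ≤ u / p - 1 := Real.log_le_sub_one_of_pos (by positivity)
    rw [Real.log_div h.ne' hp.ne'] at hlog
    rw [Real.log_div hp.ne' (Real.exp_ne_zero 1), Real.log_exp]
    have : p * (u/p - 1) = u - p := by field_simp
    nlinarith [hlog, hp]

lemma aux_exp_le_cosh {x : ℝ} (c : ℝ) (h1 : -1 ≤ x) (h2 : x ≤ 1) :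
    Real.exp (c * x) ≤ Real.cosh c + x * Real.sinh c := by
  have h := convexOn_exp.2 (Set.mem_univ (-c)) (Set.mem_univ c)
    (show (0:ℝ) ≤ (1 - x)/2 by linarith) (show (0:ℝ) ≤ (1 + x)/2 by linarith)
    (show (1 - x)/2 + (1 + x)/2 = 1 by ring)
  simp only [smul_eq_mul] at h
  rw [Real.cosh_eq, Real.sinh_eq]
  calc Real.exp (c*x) = Real.exp ((1-x)/2 * (-c) + (1+x)/2 * c) := by ring_nf
  _ ≤ (1-x)/2 * Real.exp (-c) + (1+x)/2 * Real.exp c := h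
  _ = _ := by ring

lemma mgf_coord (hm1 : Measurable p₁) (hnn1 : ∀ x, 0 ≤ p₁ x) (hi1 : (∫ x, p₁ x) = 1)
    (hm0 : Measurable p₀) (hnn0 : ∀ x, 0 ≤ p₀ x) (hi0 : (∫ x, p₀ x) = 1)
    (hq0 : 0 ≤ q) (hq1 : q ≤ 1) (c : ℝ) :
    ∫ y, Real.exp (c * ((if y.2 = true then (1:ℝ) else 0) - q)) ∂(jointMeasure d p₁ p₀ q)
      ≤ Real.exp (c^2/2) := by
  rw [integral_joint_label hm1 hnn1 hi1 hm0 hnn0 hi0 hq0 hq1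
    (f := fun b => Real.exp (c * ((if b = true then (1:ℝ) else 0) - q)))]
  have hb1 : (if (true:Bool) = true then (1:ℝ) else 0) = 1 := rfl
  have hb0 : (if (false:Bool) = true then (1:ℝ) else 0) = 0 := rfl
  rw [hb1, hb0]
  have e1 : Real.exp (c * (1 - q)) ≤ Real.cosh c + (1-q) * Real.sinh c :=
    aux_exp_le_cosh c (by linarith) (by linarith)
  have e2 : Real.exp (c * (0 - q)) ≤ Real.cosh c + (0-q) * Real.sinh c :=
    aux_exp_le_cosh c (by linarith) (by linarith)
  have e3 : Real.cosh c ≤ Real.exp (c^2/2) := Real.cosh_le_exp_half_sq c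
  nlinarith [mul_le_mul_of_nonneg_left e1 hq0,
    mul_le_mul_of_nonneg_left e2 (by linarith : (0:ℝ) ≤ 1 - q)]

/-- Theorem 4: under MA(C₀,α) with `q ∈ [θ,1−θ]`, the trimmed MLE based on labeled data
attains the excess-risk rate `C·n^{-(1+α)/2}`. -/
theorem stmt_8 (d : ℕ) (hd : 1 ≤ d) (θ : ℝ) (hθ : θ ∈ Set.Ioo (0 : ℝ) (1 / 2))
    (α : ℝ) (hα : 0 ≤ α) (C₀ : ℝ) (hC₀ : 0 < C₀) :
    ∃ C : ℝ, 0 < C ∧ ∀ n : ℕ, 1 ≤ n →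
      ∀ p₁ p₀ : (Fin d → ℝ) → ℝ, ∀ q : ℝ,
        Measurable p₁ → (∀ x, 0 ≤ p₁ x) → (∫ x, p₁ x) = 1 →
        Measurable p₀ → (∀ x, 0 ≤ p₀ x) → (∫ x, p₀ x) = 1 →
        q ∈ Set.Icc θ (1 - θ) → MA d p₁ p₀ q C₀ α →
        (∫ S, risk d p₁ p₀ q (trimmedMLE d θ n S)
            ∂(Measure.pi fun _ : Fin n => jointMeasure d p₁ p₀ q)) -
          risk d p₁ p₀ q q ≤ C * (n : ℝ) ^ (-((1 + α) / 2)) := by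
  obtain ⟨hθ0, hθ2⟩ := hθ
  have hp0 : (0:ℝ) < 1 + α := by linarith
  set p : ℝ := 1 + α with hp_def
  set K : ℝ := 2 * C₀ / (2*θ)^p with hK_def
  have hK0 : 0 < K := by
    rw [hK_def]
    have : (0:ℝ) < (2*θ)^p := Real.rpow_pos_of_pos (by linarith) p
    positivity
  refine ⟨2 * K * Real.exp (p^2/2 - p), by positivity, ?_⟩
  intro n hn p₁ p₀ q hm1 hnn1 hi1 hm0 hnn0 hi0 hq hMA
  obtain ⟨hqθ, hq1θ⟩ := hq
  have hq0 : 0 < q := lt_of_lt_of_le hθ0 hqθ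
  have hq1 : q < 1 := by linarith
  have hn0 : (0:ℝ) < n := by exact_mod_cast hn
  haveI hP := joint_prob_s8 hm1 hnn1 hi1 hm0 hnn0 hi0 hq0.le (by linarith)
  set μ : Measure (Fin n → (Fin d → ℝ) × Bool) :=
    Measure.pi fun _ => jointMeasure d p₁ p₀ q with hμ_def
  haveI : IsProbabilityMeasure μ := by rw [hμ_def]; infer_instance
  -- counting function
  set cntN : (Fin n → (Fin d → ℝ) × Bool) → ℕ :=
    fun S => ∑ i, (if (S i).2 = true then 1 else 0) with hcnt_def
  have hcnt_meas : Measurable cntN := by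
    apply Finset.measurable_sum
    intro i _
    refine Measurable.ite ?_ measurable_const measurable_const
    exact (measurable_pi_apply i).snd (measurableSet_singleton true)
  have hcnt_le : ∀ S, (cntN S : ℝ) ≤ n := by
    intro S
    have : cntN S ≤ n := by
      rw [hcnt_def]
      calc ∑ i : Fin n, (if (S i).2 = true then 1 else 0)
          ≤ ∑ _i : Fin n, 1 := Finset.sum_le_sum (fun i _ => by split_ifs <;> simp)
        _ = n := by simp
    exact_mod_cast this
  have hcast : ∀ S, (∑ i, if (S i).2 = true then (1:ℝ) else 0) = (cntN S : ℝ) := by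
    intro S
    rw [hcnt_def, Nat.cast_sum]
    exact Finset.sum_congr rfl fun i _ => by split_ifs <;> simp
  set Z : (Fin n → (Fin d → ℝ) × Bool) → ℝ := fun S => (cntN S : ℝ)/n - q with hZ_def
  have hZ_meas : Measurable Z := by
    have : Z = (fun k : ℕ => (k:ℝ)/n - q) ∘ cntN := by funext S; rfl
    rw [this]; exact measurable_from_top.comp hcnt_meas
  have hZ_bd : ∀ S, |Z S| ≤ 1 := by
    intro S
    rw [hZ_def, abs_le]
    have h1 := hcnt_le S
    have h2 : (0:ℝ) ≤ (cntN S : ℝ) := Nat.cast_nonneg _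
    constructor
    · have : (cntN S : ℝ)/n ≥ 0 := by positivity
      linarith
    · have : (cntN S : ℝ)/n ≤ 1 := by rw [div_le_one hn0]; exact h1
      linarith
  have htm : ∀ S, trimmedMLE d θ n S = max θ (min (1-θ) ((cntN S : ℝ)/n)) := fun S => by
    rw [trimmedMLE, hcast S]
  -- integrability of risk ∘ trimmedMLE
  have hrisk_meas : Measurable (fun S => risk d p₁ p₀ q (trimmedMLE d θ n S)) := by
    have : (fun S => risk d p₁ p₀ q (trimmedMLE d θ n S))
        = (fun k : ℕ => risk d p₁ p₀ q (max θ (min (1-θ) ((k:ℝ)/n)))) ∘ cntN := by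
      funext S; simp only [Function.comp_apply, htm S]
    rw [this]; exact measurable_from_top.comp hcnt_meas
  have hrisk_int : Integrable (fun S => risk d p₁ p₀ q (trimmedMLE d θ n S)) μ := by
    refine Integrable.mono' (integrable_const 1) hrisk_meas.aestronglyMeasurable
      (Filter.Eventually.of_forall fun S => ?_)
    obtain ⟨ha, hb⟩ := risk_mem hm1 hnn1 hi1 hm0 hnn0 hi0 hq0.le hq1.le (trimmedMLE d θ n S)
    rw [Real.norm_eq_abs, abs_of_nonneg ha]; exact hb
  -- mgf machinery
  have hexp_meas : ∀ c' : ℝ, Measurable (fun S => Real.exp (c' * Z S)) :=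
    fun c' => (measurable_const.mul hZ_meas).exp
  have hexp_int : ∀ c' : ℝ, Integrable (fun S => Real.exp (c' * Z S)) μ := by
    intro c'
    refine Integrable.mono' (integrable_const (Real.exp |c'|))
      (hexp_meas c').aestronglyMeasurable (Filter.Eventually.of_forall fun S => ?_)
    rw [Real.norm_eq_abs, Real.abs_exp]
    apply Real.exp_le_exp.2
    calc c' * Z S ≤ |c' * Z S| := le_abs_self _
      _ = |c'| * |Z S| := abs_mul _ _
      _ ≤ |c'| * 1 := mul_le_mul_of_nonneg_left (hZ_bd S) (abs_nonneg _)
      _ = |c'| := mul_one _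
  have hexp_val : ∀ c' : ℝ, ∫ S, Real.exp (c' * Z S) ∂μ ≤ Real.exp (c'^2/(2*n)) := by
    intro c'
    have key : ∀ S, Real.exp (c' * Z S)
        = ∏ i, Real.exp ((c'/n) * ((if (S i).2 = true then (1:ℝ) else 0) - q)) := by
      intro S
      rw [← Real.exp_sum]
      congr 1
      rw [← Finset.mul_sum, Finset.sum_sub_distrib, Finset.sum_const, Finset.card_univ,
        Fintype.card_fin, hcast S, nsmul_eq_mul, hZ_def]
      field_simp
    simp_rw [key]
    have hfm : Measurable (fun y : (Fin d → ℝ) × Bool =>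
        Real.exp ((c'/n) * ((if y.2 = true then (1:ℝ) else 0) - q))) :=
      measurable_of_bool (fun b => Real.exp ((c'/n) * ((if b = true then (1:ℝ) else 0) - q)))
    rw [hμ_def, prod_integral_eq hm1 hnn1 hi1 hm0 hnn0 hi0 hq0.le hq1.le n _ hfm]
    have hnn : 0 ≤ ∫ y, Real.exp ((c'/n) * ((if y.2 = true then (1:ℝ) else 0) - q))
        ∂(jointMeasure d p₁ p₀ q) := integral_nonneg fun y => (Real.exp_pos _).le
    calc (∫ y, Real.exp ((c'/n) * ((if y.2 = true then (1:ℝ) else 0) - q))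
          ∂(jointMeasure d p₁ p₀ q)) ^ n
        ≤ (Real.exp ((c'/n)^2/2)) ^ n := by
          apply pow_le_pow_left₀ hnn
          exact mgf_coord hm1 hnn1 hi1 hm0 hnn0 hi0 hq0.le hq1.le (c'/n)
      _ = Real.exp (c'^2/(2*n)) := by
          rw [← Real.exp_nat_mul]
          congr 1
          field_simp
  -- final assembly
  set L : ℝ := p * Real.sqrt n with hL_def
  have hsq : 0 < Real.sqrt n := Real.sqrt_pos.2 hn0
  have hL0 : 0 < L := by rw [hL_def]; positivity
  have hLp : 0 < L^p := Real.rpow_pos_of_pos hL0 p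
  set c3 : ℝ := K * (p/Real.exp 1)^p / L^p with hc3_def
  have hc30 : 0 ≤ c3 := by
    rw [hc3_def]
    have h1 : (0:ℝ) < (p/Real.exp 1)^p := Real.rpow_pos_of_pos (by positivity) p
    positivity
  -- pointwise bound
  have hpt : ∀ S, risk d p₁ p₀ q (trimmedMLE d θ n S) - risk d p₁ p₀ q q
      ≤ c3 * (Real.exp (L * Z S) + Real.exp (-L * Z S)) := by
    intro S
    have h1 := excess_le θ α C₀ hθ0 hθ2 hα hC₀ hm1 hnn1 hi1 hm0 hnn0 hi0
      ⟨hqθ, hq1θ⟩ hMA (trimmedMLE d θ n S)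
    refine h1.trans ?_
    have h2 : |trimmedMLE d θ n S - q| ≤ |Z S| := by
      rw [htm S, hZ_def]
      exact clamp_contract θ q ((cntN S : ℝ)/n) hqθ hq1θ
    have h3 : |trimmedMLE d θ n S - q| ^ (1+α) ≤ |Z S| ^ (1+α) :=
      Real.rpow_le_rpow (abs_nonneg _) h2 (by linarith)
    have h4 : (2 * C₀ / (2*θ)^(1+α)) * |trimmedMLE d θ n S - q| ^ (1+α)
        ≤ K * |Z S| ^ p := by
      rw [hK_def, hp_def]
      exact mul_le_mul_of_nonneg_left h3 (by rw [← hp_def, ← hK_def]; exact hK0.le)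
    refine h4.trans ?_
    -- moment bound pointwise
    have hsum : Real.exp (L * |Z S|) ≤ Real.exp (L * Z S) + Real.exp (-L * Z S) := by
      rcases abs_cases (Z S) with ⟨h, _⟩ | ⟨h, _⟩
      · rw [h]
        have := Real.exp_pos (-L * Z S); linarith
      · rw [h]
        have h5 : L * -Z S = -L * Z S := by ring
        rw [h5]
        have := Real.exp_pos (L * Z S); linarith
    have e1 : L^p * |Z S|^p ≤ (p/Real.exp 1)^p * (Real.exp (L * Z S) + Real.exp (-L * Z S)) :=
      calc L^p * |Z S|^p = (L * |Z S|)^p := (Real.mul_rpow hL0.le (abs_nonneg _)).symm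
        _ ≤ (p/Real.exp 1)^p * Real.exp (L * |Z S|) :=
            aux_rpow_le_exp hp0 (by positivity)
        _ ≤ (p/Real.exp 1)^p * (Real.exp (L * Z S) + Real.exp (-L * Z S)) := by
            apply mul_le_mul_of_nonneg_left hsum
            exact (Real.rpow_pos_of_pos (by positivity) p).le
    have e2 : |Z S|^p ≤ (p/Real.exp 1)^p * (Real.exp (L * Z S) + Real.exp (-L * Z S)) / L^p := by
      rw [le_div_iff₀ hLp]
      calc |Z S|^p * L^p = L^p * |Z S|^p := by ring
        _ ≤ _ := e1
    calc K * |Z S|^p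
        ≤ K * ((p/Real.exp 1)^p * (Real.exp (L * Z S) + Real.exp (-L * Z S)) / L^p) :=
          mul_le_mul_of_nonneg_left e2 hK0.le
      _ = c3 * (Real.exp (L * Z S) + Real.exp (-L * Z S)) := by
          rw [hc3_def]; field_simp
  -- integrate
  have hsub : ∫ S, (risk d p₁ p₀ q (trimmedMLE d θ n S) - risk d p₁ p₀ q q) ∂μ
      = (∫ S, risk d p₁ p₀ q (trimmedMLE d θ n S) ∂μ) - risk d p₁ p₀ q q := by
    rw [integral_sub hrisk_int (integrable_const _), integral_const, probReal_univ,
      one_smul]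
  have hL2 : L^2/(2*(n:ℝ)) = p^2/2 := by
    rw [hL_def, mul_pow, Real.sq_sqrt hn0.le]
    field_simp
  have hLppow : L^p = p^p * (n:ℝ)^(p/2) := by
    rw [hL_def, Real.mul_rpow hp0.le (Real.sqrt_nonneg _), Real.sqrt_eq_rpow,
      ← Real.rpow_mul (Nat.cast_nonneg n)]
    rw [show (1:ℝ)/2*p = p/2 by ring]
  have hfinal : c3 * (2 * Real.exp (p^2/2)) = 2*K*Real.exp (p^2/2 - p) * (n:ℝ)^(-(p/2)) := by
    rw [hc3_def, hLppow, Real.div_rpow hp0.le (Real.exp_pos 1).le, Real.exp_one_rpow,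
      Real.exp_sub, Real.rpow_neg (Nat.cast_nonneg n)]
    have hpp : (0:ℝ) < p^p := Real.rpow_pos_of_pos hp0 p
    have hnp : (0:ℝ) < (n:ℝ)^(p/2) := Real.rpow_pos_of_pos hn0 _
    field_simp
  calc (∫ S, risk d p₁ p₀ q (trimmedMLE d θ n S) ∂μ) - risk d p₁ p₀ q q
      = ∫ S, (risk d p₁ p₀ q (trimmedMLE d θ n S) - risk d p₁ p₀ q q) ∂μ := hsub.symm
    _ ≤ ∫ S, c3 * (Real.exp (L * Z S) + Real.exp (-L * Z S)) ∂μ :=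
        integral_mono (hrisk_int.sub (integrable_const _))
          (((hexp_int L).add (hexp_int (-L))).const_mul c3) hpt
    _ = c3 * ((∫ S, Real.exp (L * Z S) ∂μ) + ∫ S, Real.exp (-L * Z S) ∂μ) := by
        rw [integral_const_mul, integral_add (hexp_int L) (hexp_int (-L))]
    _ ≤ c3 * (Real.exp (L^2/(2*(n:ℝ))) + Real.exp ((-L)^2/(2*(n:ℝ)))) :=
        mul_le_mul_of_nonneg_left (add_le_add (hexp_val L) (hexp_val (-L))) hc30
    _ = c3 * (2 * Real.exp (p^2/2)) := by rw [neg_sq, hL2]; ring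
    _ = 2*K*Real.exp (p^2/2 - p) * (n:ℝ)^(-(p/2)) := hfinal
    _ = 2*K*Real.exp (p^2/2 - p) * (n:ℝ)^(-((1+α)/2)) := by rw [hp_def]
end
end

section
/- (Theorem 5, exponential rates when α = ∞) Let θ ∈ (0,1/2) and c > 0, and let (p₁,p₀,q) be a triple with q ∈ [θ,1−θ] satisfying P_X(0 < |η(X) − 1/2| ≤ c) = 0. If Y₁,…,Yₙ are the labels of n i.i.d. training samples from π and q̂ is the trimmed maximum likelihood estimate, i.e. the projection of (1/n)·Σᵢ 1{Yᵢ=1} onto [θ,1−θ], then E[R(q̂)] − R(q) ≤ 2·exp(−2nc²/L²), where L = 1/(4θ(1−θ)). -/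
open MeasureTheory

noncomputable section

/-! ### Auxiliary lemmas -/

private lemma quad_aux (E Dv : ℝ) : E * Dv - E * E ≤ 1 / 4 * Dv ^ 2 := by
  nlinarith [sq_nonneg (Dv - 2 * E)]

/-- Hoeffding's lemma, Bernoulli form. -/
lemma bernoulli_mgf_le {p : ℝ} (hp0 : 0 ≤ p) (hp1 : p ≤ 1) (s : ℝ) :
    p * Real.exp (s * (1 - p)) + (1 - p) * Real.exp (-(s * p)) ≤ Real.exp (s ^ 2 / 8) := by
  have hD : ∀ t : ℝ, 0 < 1 - p + p * Real.exp t := by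
    intro t
    rcases lt_or_eq_of_le hp1 with h | h
    · nlinarith [Real.exp_pos t, mul_nonneg hp0 (Real.exp_pos t).le]
    · rw [h]; simpa using Real.exp_pos t
  set D : ℝ → ℝ := fun t => 1 - p + p * Real.exp t with hDdef
  set F : ℝ → ℝ := fun t => Real.log (D t) - p * t - t ^ 2 / 8 with hFdef
  set G : ℝ → ℝ := fun t => p * Real.exp t / D t - p - t / 4 with hGdef
  have hDd : ∀ t, HasDerivAt D (p * Real.exp t) t := by
    intro t
    exact ((Real.hasDerivAt_exp t).const_mul p).const_add (1 - p)
  have hFd : ∀ t, HasDerivAt F (G t) t := by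
    intro t
    have h1 : HasDerivAt (fun t => Real.log (D t)) (p * Real.exp t / D t) t :=
      (hDd t).log (hD t).ne'
    have h2 : HasDerivAt (fun t : ℝ => p * t) p t := by
      simpa using (hasDerivAt_id t).const_mul p
    have h3 : HasDerivAt (fun t : ℝ => t ^ 2 / 8) (t / 4) t := by
      have := (hasDerivAt_pow 2 t).div_const 8
      exact this.congr_deriv (by push_cast; ring)
    exact (h1.sub h2).sub h3
  have hGd : ∀ t, HasDerivAt G
      ((p * Real.exp t * D t - p * Real.exp t * (p * Real.exp t)) / (D t) ^ 2 - 1 / 4) t := by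
    intro t
    have h1 : HasDerivAt (fun t => p * Real.exp t / D t)
        ((p * Real.exp t * D t - p * Real.exp t * (p * Real.exp t)) / (D t) ^ 2) t :=
      ((Real.hasDerivAt_exp t).const_mul p).div (hDd t) (hD t).ne'
    have h2 : HasDerivAt (fun t : ℝ => p + t / 4) (1 / 4) t := by
      simpa using ((hasDerivAt_id t).div_const 4).const_add p
    have := h1.sub h2
    have hfun : G = (fun t => p * Real.exp t / D t) - fun t => p + t / 4 := by
      funext u; simp only [hGdef, Pi.sub_apply]; ring
    rw [hfun]; exact this
  have hG0 : G 0 = 0 := by simp [hGdef, hDdef]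
  have hGanti : Antitone G := by
    apply antitone_of_deriv_nonpos
    · exact fun t => (hGd t).differentiableAt
    · intro t
      rw [(hGd t).deriv]
      have hq : (p * Real.exp t * D t - p * Real.exp t * (p * Real.exp t)) / (D t) ^ 2
          ≤ 1 / 4 := by
        rw [div_le_iff₀ (pow_pos (hD t) 2)]
        have := quad_aux (p * Real.exp t) (D t)
        linarith
      linarith
  have hF0 : F 0 = 0 := by simp [hFdef, hDdef]
  have hFdiff : Differentiable ℝ F := fun t => (hFd t).differentiableAt
  have hFderiv : deriv F = G := funext fun t => (hFd t).deriv
  have key : F s ≤ 0 := by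
    rcases le_total s 0 with ht | ht
    · have hmono : MonotoneOn F (Set.Iic (0 : ℝ)) := by
        apply monotoneOn_of_deriv_nonneg (convex_Iic 0) hFdiff.continuous.continuousOn
          hFdiff.differentiableOn
        intro x hx
        rw [hFderiv]
        rw [interior_Iic] at hx
        rw [← hG0]
        exact hGanti (le_of_lt hx)
      have := hmono (Set.mem_Iic.mpr ht) (Set.mem_Iic.mpr le_rfl) ht
      linarith [hF0 ▸ this]
    · have hanti : AntitoneOn F (Set.Ici (0 : ℝ)) := by
        apply antitoneOn_of_deriv_nonpos (convex_Ici 0) hFdiff.continuous.continuousOn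
          hFdiff.differentiableOn
        intro x hx
        rw [hFderiv]
        rw [interior_Ici] at hx
        rw [← hG0]
        exact hGanti (le_of_lt hx)
      have := hanti (Set.mem_Ici.mpr le_rfl) (Set.mem_Ici.mpr ht) ht
      linarith [hF0 ▸ this]
  have hlog : Real.log (D s) ≤ p * s + s ^ 2 / 8 := by
    simp only [hFdef] at key; linarith
  have hDle : D s ≤ Real.exp (p * s + s ^ 2 / 8) :=
    (Real.log_le_iff_le_exp (hD s)).mp hlog
  have e1 : Real.exp (s * (1 - p)) = Real.exp (-(s * p)) * Real.exp s := by
    rw [← Real.exp_add]; ring_nf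
  have e2 : p * Real.exp (s * (1 - p)) + (1 - p) * Real.exp (-(s * p))
      = Real.exp (-(s * p)) * D s := by
    rw [e1]; simp only [hDdef]; ring
  rw [e2]
  calc Real.exp (-(s * p)) * D s ≤ Real.exp (-(s * p)) * Real.exp (p * s + s ^ 2 / 8) :=
        mul_le_mul_of_nonneg_left hDle (Real.exp_pos _).le
    _ = Real.exp (s ^ 2 / 8) := by rw [← Real.exp_add]; ring_nf

/-- Chernoff bound ingredient: mgf of the label count over all label vectors. -/
lemma label_mgf_sum {q : ℝ} (hq0 : 0 ≤ q) (hq1 : q ≤ 1) (n : ℕ) (s : ℝ) :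
    (∑ y : Fin n → Bool, (∏ i, (if y i = true then q else 1 - q)) *
      Real.exp (s * ((∑ i, (if y i = true then (1 : ℝ) else 0)) - n * q)))
    ≤ Real.exp (n * (s ^ 2 / 8)) := by
  have hterm : ∀ y : Fin n → Bool,
      (∏ i, (if y i = true then q else 1 - q)) *
        Real.exp (s * ((∑ i, (if y i = true then (1 : ℝ) else 0)) - n * q))
      = ∏ i, ((if y i = true then q else 1 - q) *
          Real.exp (s * ((if y i = true then (1 : ℝ) else 0) - q))) := by
    intro y
    rw [Finset.prod_mul_distrib, ← Real.exp_sum]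
    congr 2
    have h : (∑ i, (if y i = true then (1 : ℝ) else 0)) - n * q
        = ∑ i : Fin n, ((if y i = true then (1 : ℝ) else 0) - q) := by
      rw [Finset.sum_sub_distrib, Finset.sum_const, Finset.card_univ, Fintype.card_fin,
        nsmul_eq_mul]
    rw [h, Finset.mul_sum]
  rw [Finset.sum_congr rfl (fun y _ => hterm y)]
  have hps := Finset.sum_prod_piFinset (Finset.univ : Finset Bool)
    (fun (i : Fin n) b => (if b = true then q else 1 - q) *
      Real.exp (s * ((if b = true then (1 : ℝ) else 0) - q)))
  rw [Fintype.piFinset_univ] at hps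
  rw [hps]
  have hbool : ∀ i : Fin n, (∑ b : Bool, ((if b = true then q else 1 - q) *
      Real.exp (s * ((if b = true then (1 : ℝ) else 0) - q))))
      = q * Real.exp (s * (1 - q)) + (1 - q) * Real.exp (-(s * q)) := by
    intro i
    rw [Fintype.sum_bool]
    norm_num
  rw [Finset.prod_congr rfl (fun i _ => hbool i)]
  rw [Finset.prod_const, Finset.card_univ, Fintype.card_fin]
  have hb := bernoulli_mgf_le hq0 hq1 s
  have hnn : 0 ≤ q * Real.exp (s * (1 - q)) + (1 - q) * Real.exp (-(s * q)) := by
    have := Real.exp_pos (s * (1 - q))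
    have := Real.exp_pos (-(s * q))
    nlinarith
  calc (q * Real.exp (s * (1 - q)) + (1 - q) * Real.exp (-(s * q))) ^ n
      ≤ (Real.exp (s ^ 2 / 8)) ^ n := pow_le_pow_left₀ hnn hb n
    _ = Real.exp (n * (s ^ 2 / 8)) := (Real.exp_nat_mul _ n).symm

/-- Clamping to `[θ, 1−θ]` does not move a point further from `q ∈ [θ, 1−θ]`. -/
lemma clamp_abs_le {θ q t : ℝ} (hθ : θ ≤ 1 - θ) (h1 : θ ≤ q) (h2 : q ≤ 1 - θ) :
    |max θ (min (1 - θ) t) - q| ≤ |t - q| := by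
  have h3 := le_abs_self (t - q)
  have h4 := neg_abs_le (t - q)
  rcases le_total t θ with ht | ht
  · rw [min_eq_right (le_trans ht hθ), max_eq_left ht, abs_of_nonpos (by linarith)]
    linarith
  · rcases le_total t (1 - θ) with ht2 | ht2
    · rw [min_eq_right ht2, max_eq_right ht]
    · rw [min_eq_left ht2, max_eq_right hθ, abs_of_nonneg (by linarith)]
      linarith

section RiskLemmas

variable {d : ℕ} {p₁ p₀ : (Fin d → ℝ) → ℝ}

lemma integrable_of_int_one_s9 {f : (Fin d → ℝ) → ℝ} (h : ∫ x, f x = 1) :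
    Integrable f := by
  by_contra hI
  rw [integral_undef hI] at h
  norm_num at h

lemma integrable_decide₁ (h₁m : Measurable p₁) (h₁nn : ∀ x, 0 ≤ p₁ x)
    (hI : Integrable p₁) (h₀m : Measurable p₀) (q' : ℝ) :
    Integrable (fun x => if q' * p₁ x < (1 - q') * p₀ x then p₁ x else 0) := by
  apply Integrable.mono' hI
  · exact (Measurable.ite (measurableSet_lt (h₁m.const_mul q') (h₀m.const_mul (1 - q')))
      h₁m measurable_const).aestronglyMeasurable
  · refine Filter.Eventually.of_forall fun x => ?_
    by_cases h : q' * p₁ x < (1 - q') * p₀ x <;>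
      simp [h, abs_of_nonneg (h₁nn x), h₁nn x]

lemma integrable_decide₀ (h₀m : Measurable p₀) (h₀nn : ∀ x, 0 ≤ p₀ x)
    (hI : Integrable p₀) (h₁m : Measurable p₁) (q' : ℝ) :
    Integrable (fun x => if (1 - q') * p₀ x ≤ q' * p₁ x then p₀ x else 0) := by
  apply Integrable.mono' hI
  · exact (Measurable.ite (measurableSet_le (h₀m.const_mul (1 - q')) (h₁m.const_mul q'))
      h₀m measurable_const).aestronglyMeasurable
  · refine Filter.Eventually.of_forall fun x => ?_
    by_cases h : (1 - q') * p₀ x ≤ q' * p₁ x <;>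
      simp [h, abs_of_nonneg (h₀nn x), h₀nn x]

lemma P1_nonneg (h₁nn : ∀ x, 0 ≤ p₁ x) (q' : ℝ) : 0 ≤ P1 d p₁ p₀ q' := by
  apply integral_nonneg
  intro x
  by_cases h : q' * p₁ x < (1 - q') * p₀ x <;> simp [h, h₁nn x]

lemma P0_nonneg (h₀nn : ∀ x, 0 ≤ p₀ x) (q' : ℝ) : 0 ≤ P0 d p₁ p₀ q' := by
  apply integral_nonneg
  intro x
  by_cases h : (1 - q') * p₀ x ≤ q' * p₁ x <;> simp [h, h₀nn x]

lemma P1_le_one (h₁m : Measurable p₁) (h₁nn : ∀ x, 0 ≤ p₁ x) (h₁int : ∫ x, p₁ x = 1)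
    (h₀m : Measurable p₀) (q' : ℝ) : P1 d p₁ p₀ q' ≤ 1 := by
  have hI := integrable_of_int_one_s9 h₁int
  rw [← h₁int]
  apply integral_mono (integrable_decide₁ h₁m h₁nn hI h₀m q') hI
  intro x
  by_cases h : q' * p₁ x < (1 - q') * p₀ x <;> simp [h, h₁nn x]

lemma P0_le_one (h₀m : Measurable p₀) (h₀nn : ∀ x, 0 ≤ p₀ x) (h₀int : ∫ x, p₀ x = 1)
    (h₁m : Measurable p₁) (q' : ℝ) : P0 d p₁ p₀ q' ≤ 1 := by
  have hI := integrable_of_int_one_s9 h₀int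
  rw [← h₀int]
  apply integral_mono (integrable_decide₀ h₀m h₀nn hI h₁m q') hI
  intro x
  by_cases h : (1 - q') * p₀ x ≤ q' * p₁ x <;> simp [h, h₀nn x]

lemma risk_nonneg (h₁nn : ∀ x, 0 ≤ p₁ x) (h₀nn : ∀ x, 0 ≤ p₀ x) {q : ℝ}
    (hq0 : 0 ≤ q) (hq1 : q ≤ 1) (q' : ℝ) : 0 ≤ risk d p₁ p₀ q q' := by
  have := P1_nonneg (p₀ := p₀) h₁nn q'
  have := P0_nonneg (p₁ := p₁) h₀nn q'
  unfold risk
  nlinarith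

lemma risk_le_one (h₁m : Measurable p₁) (h₁nn : ∀ x, 0 ≤ p₁ x) (h₁int : ∫ x, p₁ x = 1)
    (h₀m : Measurable p₀) (h₀nn : ∀ x, 0 ≤ p₀ x) (h₀int : ∫ x, p₀ x = 1)
    {q : ℝ} (hq0 : 0 ≤ q) (hq1 : q ≤ 1) (q' : ℝ) : risk d p₁ p₀ q q' ≤ 1 := by
  have h1 := P1_le_one h₁m h₁nn h₁int h₀m q'
  have h0 := P0_le_one h₀m h₀nn h₀int h₁m q'
  have := P1_nonneg (p₀ := p₀) h₁nn q'
  have := P0_nonneg (p₁ := p₁) h₀nn q'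
  unfold risk
  nlinarith

lemma risk_repr (h₁m : Measurable p₁) (h₁nn : ∀ x, 0 ≤ p₁ x) (hI₁ : Integrable p₁)
    (h₀m : Measurable p₀) (h₀nn : ∀ x, 0 ≤ p₀ x) (hI₀ : Integrable p₀) (q q' : ℝ) :
    risk d p₁ p₀ q q' = ∫ x,
      (q * (if q' * p₁ x < (1 - q') * p₀ x then p₁ x else 0)
        + (1 - q) * (if (1 - q') * p₀ x ≤ q' * p₁ x then p₀ x else 0)) := by
  rw [risk, P1, P0, ← integral_const_mul, ← integral_const_mul, ← integral_add]
  · exact (integrable_decide₁ h₁m h₁nn hI₁ h₀m q').const_mul q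
  · exact (integrable_decide₀ h₀m h₀nn hI₀ h₁m q').const_mul (1 - q)

end RiskLemmas

/-- Core algebraic estimate for the decision-disagreement region. -/
lemma mem_A_aux {θ c q q' a b : ℝ} (hθ0 : 0 < θ) (hθh : θ < 1 / 2) (hc : 0 < c)
    (hqθ : θ ≤ q) (hq1 : q ≤ 1 - θ) (hq' : θ ≤ q') (hq'1 : q' ≤ 1 - θ)
    (hclose : |q' - q| ≤ 4 * θ * (1 - θ) * c)
    (ha : 0 ≤ a) (hb : 0 ≤ b)
    (h1 : q' * (1 - q) * a ≤ q * (1 - q') * b) (h2 : b ≤ a) :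
    a - b ≤ 2 * c * (a + b) := by
  have hA1B1 : 2 * θ * (1 - θ) ≤ q' * (1 - q) + q * (1 - q') := by
    rcases le_total q (1 / 2) with h | h
    · nlinarith [mul_nonneg (sub_nonneg.mpr hq') (by linarith : (0:ℝ) ≤ 1 - 2 * q),
        mul_nonneg (sub_nonneg.mpr hqθ) (by linarith : (0:ℝ) ≤ 1 - 2 * θ)]
    · nlinarith [mul_nonneg (by linarith : (0:ℝ) ≤ 1 - θ - q') (by linarith : (0:ℝ) ≤ 2 * q - 1),
        mul_nonneg (by linarith : (0:ℝ) ≤ 1 - θ - q) (by linarith : (0:ℝ) ≤ 1 - 2 * θ)]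
  have hstep : (a - b) * (q' * (1 - q) + q * (1 - q')) ≤ (a + b) * (q - q') := by
    nlinarith [h1]
  have hqq' : q - q' ≤ 4 * θ * (1 - θ) * c := by
    have h := abs_le.mp hclose
    linarith [h.1]
  have hs2 : (a - b) * (2 * θ * (1 - θ)) ≤ (2 * c * (a + b)) * (2 * θ * (1 - θ)) := by
    have e1 : (a - b) * (2 * θ * (1 - θ)) ≤ (a - b) * (q' * (1 - q) + q * (1 - q')) :=
      mul_le_mul_of_nonneg_left hA1B1 (by linarith)
    have e3 : (a + b) * (q - q') ≤ (a + b) * (4 * θ * (1 - θ) * c) :=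
      mul_le_mul_of_nonneg_left hqq' (by linarith)
    nlinarith [e1, hstep, e3]
  exact le_of_mul_le_mul_right hs2 (by nlinarith)

/-- If `q'` is within `4θ(1−θ)c` of `q`, the risks agree. -/
lemma risk_eq_of_close {d : ℕ} {θ c : ℝ} {p₁ p₀ : (Fin d → ℝ) → ℝ} {q q' : ℝ}
    (hθ : θ ∈ Set.Ioo (0 : ℝ) (1 / 2)) (hc : 0 < c)
    (h₁m : Measurable p₁) (h₁nn : ∀ x, 0 ≤ p₁ x) (hI₁ : Integrable p₁)
    (h₀m : Measurable p₀) (h₀nn : ∀ x, 0 ≤ p₀ x) (hI₀ : Integrable p₀)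
    (hq : q ∈ Set.Icc θ (1 - θ)) (hq' : q' ∈ Set.Icc θ (1 - θ))
    (hMA : margX d p₁ p₀ q
        {x | 0 < |eta d p₁ p₀ q x - 1 / 2| ∧ |eta d p₁ p₀ q x - 1 / 2| ≤ c} = 0)
    (hclose : |q' - q| ≤ 4 * θ * (1 - θ) * c) :
    risk d p₁ p₀ q q' = risk d p₁ p₀ q q := by
  obtain ⟨hθ0, hθh⟩ := hθ
  obtain ⟨hqθ, hq1θ⟩ := hq
  obtain ⟨hq'θ, hq'1θ⟩ := hq'
  have hq0 : 0 < q := lt_of_lt_of_le hθ0 hqθ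
  have h1q0 : 0 < 1 - q := lt_of_lt_of_le hθ0 (by linarith)
  set A := {x | 0 < |eta d p₁ p₀ q x - 1 / 2| ∧ |eta d p₁ p₀ q x - 1 / 2| ≤ c} with hA
  have hetam : Measurable (eta d p₁ p₀ q) := by
    unfold eta
    exact (h₁m.const_mul q).div ((h₁m.const_mul q).add (h₀m.const_mul (1 - q)))
  have hAmeas : MeasurableSet A := by
    have : A = (fun x => |eta d p₁ p₀ q x - 1 / 2|) ⁻¹' Set.Ioc 0 c := by
      ext x; simp [hA, Set.mem_Ioc]
    rw [this]
    exact ((hetam.sub measurable_const).abs) measurableSet_Ioc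
  rw [margX, withDensity_apply _ hAmeas] at hMA
  have hdm : Measurable (fun x => ENNReal.ofReal (q * p₁ x + (1 - q) * p₀ x)) :=
    ((h₁m.const_mul q).add (h₀m.const_mul (1 - q))).ennreal_ofReal
  have h0 : (fun x => ENNReal.ofReal (q * p₁ x + (1 - q) * p₀ x))
      =ᵐ[volume.restrict A] 0 := (lintegral_eq_zero_iff hdm).mp hMA
  have h1 : ∀ᵐ x ∂(volume : Measure (Fin d → ℝ)),
      x ∈ A → q * p₁ x + (1 - q) * p₀ x = 0 := by
    have h2 := (ae_restrict_iff' hAmeas).mp h0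
    filter_upwards [h2] with x hx hxA
    have h3 := hx hxA
    simp only [Pi.zero_apply, ENNReal.ofReal_eq_zero] at h3
    nlinarith [mul_nonneg hq0.le (h₁nn x), mul_nonneg h1q0.le (h₀nn x)]
  rw [risk_repr h₁m h₁nn hI₁ h₀m h₀nn hI₀ q q', risk_repr h₁m h₁nn hI₁ h₀m h₀nn hI₀ q q]
  apply integral_congr_ae
  filter_upwards [h1] with x hx
  have hcomb : ∀ r : ℝ, q * (if r * p₁ x < (1 - r) * p₀ x then p₁ x else 0)
      + (1 - q) * (if (1 - r) * p₀ x ≤ r * p₁ x then p₀ x else 0)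
      = if r * p₁ x < (1 - r) * p₀ x then q * p₁ x else (1 - q) * p₀ x := by
    intro r
    rcases lt_or_ge (r * p₁ x) ((1 - r) * p₀ x) with h | h
    · rw [if_pos h, if_pos h, if_neg (not_le.mpr h)]; ring
    · rw [if_neg (not_lt.mpr h), if_pos h, if_neg (not_lt.mpr h)]; ring
  show _ = _
  rw [hcomb q', hcomb q]
  by_cases hD : q * p₁ x + (1 - q) * p₀ x = 0
  · have hp1 : p₁ x = 0 := by
      nlinarith [mul_nonneg hq0.le (h₁nn x), mul_nonneg h1q0.le (h₀nn x), h₁nn x]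
    have hp0 : p₀ x = 0 := by
      nlinarith [mul_nonneg hq0.le (h₁nn x), mul_nonneg h1q0.le (h₀nn x), h₀nn x]
    simp [hp1, hp0]
  · have hDpos : 0 < q * p₁ x + (1 - q) * p₀ x :=
      lt_of_le_of_ne (add_nonneg (mul_nonneg hq0.le (h₁nn x))
        (mul_nonneg h1q0.le (h₀nn x))) (Ne.symm hD)
    have hxA : x ∉ A := fun h => hD (hx h)
    have heta : eta d p₁ p₀ q x - 1 / 2
        = (q * p₁ x - (1 - q) * p₀ x) / (2 * (q * p₁ x + (1 - q) * p₀ x)) := by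
      unfold eta
      field_simp
      ring
    by_cases hC' : q' * p₁ x < (1 - q') * p₀ x <;>
      by_cases hC : q * p₁ x < (1 - q) * p₀ x
    · rw [if_pos hC', if_pos hC]
    · -- decide H₀ under q', decide H₁ under q : (1-q)p₀ ≤ q p₁
      rw [if_pos hC', if_neg hC]
      by_contra hneq
      apply hxA
      have hab : (1 - q) * p₀ x ≤ q * p₁ x := not_lt.mp hC
      have hkey : q' * (1 - q) * (q * p₁ x) ≤ q * (1 - q') * ((1 - q) * p₀ x) := by
        nlinarith [mul_lt_mul_of_pos_left hC' (mul_pos hq0 h1q0)]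
      have hbd := mem_A_aux hθ0 hθh hc hqθ hq1θ hq'θ hq'1θ hclose
        (mul_nonneg hq0.le (h₁nn x)) (mul_nonneg h1q0.le (h₀nn x)) hkey hab
      constructor
      · rw [heta]
        exact abs_pos.mpr (div_ne_zero (sub_ne_zero.mpr hneq) (by linarith))
      · rw [heta, abs_div, abs_of_pos (by linarith : (0:ℝ) < 2 * (q * p₁ x + (1 - q) * p₀ x)),
          div_le_iff₀ (by linarith)]
        rw [abs_of_nonneg (by linarith : (0:ℝ) ≤ q * p₁ x - (1 - q) * p₀ x)]
        linarith
    · -- decide H₁ under q', decide H₀ under q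
      rw [if_neg hC', if_pos hC]
      by_contra hneq
      apply hxA
      have hab : q * p₁ x ≤ (1 - q) * p₀ x := le_of_lt hC
      have hC'' : (1 - q') * p₀ x ≤ q' * p₁ x := not_lt.mp hC'
      have hkey : q * (1 - q') * ((1 - q) * p₀ x) ≤ q' * (1 - q) * (q * p₁ x) := by
        nlinarith [mul_le_mul_of_nonneg_left hC'' (mul_pos hq0 h1q0).le]
      have hclose' : |q - q'| ≤ 4 * θ * (1 - θ) * c := by rwa [abs_sub_comm]
      have hbd := mem_A_aux hθ0 hθh hc hq'θ hq'1θ hqθ hq1θ hclose'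
        (mul_nonneg h1q0.le (h₀nn x)) (mul_nonneg hq0.le (h₁nn x)) hkey hab
      constructor
      · rw [heta]
        exact abs_pos.mpr (div_ne_zero (sub_ne_zero.mpr (Ne.symm hneq)) (by linarith))
      · rw [heta, abs_div, abs_of_pos (by linarith : (0:ℝ) < 2 * (q * p₁ x + (1 - q) * p₀ x)),
          div_le_iff₀ (by linarith)]
        rw [abs_of_nonpos (by linarith : q * p₁ x - (1 - q) * p₀ x ≤ (0:ℝ))]
        linarith
    · rw [if_neg hC', if_neg hC]


variable {d : ℕ} {p₁ p₀ : (Fin d → ℝ) → ℝ} {q : ℝ}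

lemma wd_univ {f : (Fin d → ℝ) → ℝ} (hm : Measurable f) (hnn : ∀ x, 0 ≤ f x)
    (hI : Integrable f) :
    (volume.withDensity fun x => ENNReal.ofReal (f x)) Set.univ
      = ENNReal.ofReal (∫ x, f x) := by
  rw [withDensity_apply _ MeasurableSet.univ, Measure.restrict_univ,
    ← ofReal_integral_eq_lintegral_ofReal hI (Filter.Eventually.of_forall hnn)]

lemma joint_apply (h₁m : Measurable p₁) (h₀m : Measurable p₀)
    {A : Set ((Fin d → ℝ) × Bool)} (hA : MeasurableSet A) :
    jointMeasure d p₁ p₀ q A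
      = (volume.withDensity fun x => ENNReal.ofReal (q * p₁ x))
          ((fun x => (x, true)) ⁻¹' A)
        + (volume.withDensity fun x => ENNReal.ofReal ((1 - q) * p₀ x))
          ((fun x => (x, false)) ⁻¹' A) := by
  rw [jointMeasure, Measure.add_apply,
    Measure.map_apply measurable_prodMk_right hA,
    Measure.map_apply measurable_prodMk_right hA]

lemma joint_snd (h₁m : Measurable p₁) (h₁nn : ∀ x, 0 ≤ p₁ x) (h₁int : ∫ x, p₁ x = 1)
    (hI₁ : Integrable p₁)
    (h₀m : Measurable p₀) (h₀nn : ∀ x, 0 ≤ p₀ x) (h₀int : ∫ x, p₀ x = 1)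
    (hI₀ : Integrable p₀) (hq0 : 0 ≤ q) (hq1 : q ≤ 1) (b : Bool) :
    jointMeasure d p₁ p₀ q (Prod.snd ⁻¹' {b})
      = ENNReal.ofReal (if b = true then q else 1 - q) := by
  have h1 : (volume.withDensity fun x => ENNReal.ofReal (q * p₁ x)) Set.univ
      = ENNReal.ofReal q := by
    rw [wd_univ (h₁m.const_mul q) (fun x => mul_nonneg hq0 (h₁nn x)) (hI₁.const_mul q),
      integral_const_mul, h₁int, mul_one]
  have h0 : (volume.withDensity fun x => ENNReal.ofReal ((1 - q) * p₀ x)) Set.univ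
      = ENNReal.ofReal (1 - q) := by
    rw [wd_univ (h₀m.const_mul (1 - q)) (fun x => mul_nonneg (by linarith) (h₀nn x))
      (hI₀.const_mul (1 - q)), integral_const_mul, h₀int, mul_one]
  rw [joint_apply h₁m h₀m (measurable_snd (measurableSet_singleton b))]
  cases b
  · have e1 : ((fun x : Fin d → ℝ => (x, true)) ⁻¹' (Prod.snd ⁻¹' {false})) = ∅ := by
      ext x; simp
    have e0 : ((fun x : Fin d → ℝ => (x, false)) ⁻¹' (Prod.snd ⁻¹' {false})) = Set.univ := by
      ext x; simp
    rw [e1, e0, measure_empty, zero_add, h0]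
    simp
  · have e1 : ((fun x : Fin d → ℝ => (x, true)) ⁻¹' (Prod.snd ⁻¹' {true})) = Set.univ := by
      ext x; simp
    have e0 : ((fun x : Fin d → ℝ => (x, false)) ⁻¹' (Prod.snd ⁻¹' {true})) = ∅ := by
      ext x; simp
    rw [e1, e0, measure_empty, add_zero, h1]
    simp

lemma joint_prob_s9 (h₁m : Measurable p₁) (h₁nn : ∀ x, 0 ≤ p₁ x) (h₁int : ∫ x, p₁ x = 1)
    (hI₁ : Integrable p₁)
    (h₀m : Measurable p₀) (h₀nn : ∀ x, 0 ≤ p₀ x) (h₀int : ∫ x, p₀ x = 1)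
    (hI₀ : Integrable p₀) (hq0 : 0 ≤ q) (hq1 : q ≤ 1) :
    IsProbabilityMeasure (jointMeasure d p₁ p₀ q) := by
  constructor
  have hu : (Set.univ : Set ((Fin d → ℝ) × Bool))
      = Prod.snd ⁻¹' {true} ∪ Prod.snd ⁻¹' {false} := by
    ext z; cases z.2 <;> simp
  have hdisj : Disjoint (Prod.snd ⁻¹' {true} : Set ((Fin d → ℝ) × Bool))
      (Prod.snd ⁻¹' {false}) := by
    rw [Set.disjoint_iff]
    rintro z ⟨h1, h2⟩
    simp only [Set.mem_preimage, Set.mem_singleton_iff] at h1 h2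
    rw [h1] at h2; exact absurd h2 (by simp)
  have ht := joint_snd h₁m h₁nn h₁int hI₁ h₀m h₀nn h₀int hI₀ hq0 hq1 true
  have hf := joint_snd h₁m h₁nn h₁int hI₁ h₀m h₀nn h₀int hI₀ hq0 hq1 false
  norm_num at ht hf
  rw [hu, measure_union hdisj (measurable_snd (measurableSet_singleton false)), ht, hf,
    ← ENNReal.ofReal_add hq0 (by linarith)]
  norm_num

lemma integral_label {α : Type*} [MeasurableSpace α] (μ : Measure (α × Bool))
    [IsProbabilityMeasure μ] (n : ℕ) (h : (Fin n → Bool) → ℝ) :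
    ∫ S, h (fun i => (S i).2) ∂(Measure.pi fun _ : Fin n => μ)
      = ∑ y : Fin n → Bool, h y *
        ((Measure.pi fun _ : Fin n => μ)
          (Set.pi Set.univ fun i => (Prod.snd ⁻¹' {y i} : Set (α × Bool)))).toReal := by
  have hBmeas : ∀ y : Fin n → Bool,
      MeasurableSet (Set.pi Set.univ fun i => (Prod.snd ⁻¹' {y i} : Set (α × Bool))) :=
    fun y => MeasurableSet.univ_pi fun i => measurable_snd (measurableSet_singleton (y i))
  have hfun : (fun S : Fin n → α × Bool => h (fun i => (S i).2))
      = fun S => ∑ y : Fin n → Bool,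
          Set.indicator (Set.pi Set.univ fun i => (Prod.snd ⁻¹' {y i} : Set (α × Bool)))
            (fun _ => h y) S := by
    funext S
    rw [Finset.sum_eq_single (fun i => (S i).2)]
    · rw [Set.indicator_of_mem]
      exact fun i _ => rfl
    · intro y _ hy
      rw [Set.indicator_of_notMem]
      intro hmem
      apply hy
      funext i
      have := hmem i (Set.mem_univ i)
      simp only [Set.mem_preimage, Set.mem_singleton_iff] at this
      exact this.symm
    · intro h'; exact absurd (Finset.mem_univ _) h'
  rw [hfun, integral_finset_sum]
  · refine Finset.sum_congr rfl fun y _ => ?_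
    rw [integral_indicator_const _ (hBmeas y), smul_eq_mul, mul_comm]
    rfl
  · intro y _
    exact (integrable_const (h y)).indicator (hBmeas y)


set_option maxHeartbeats 1000000

/-- Theorem 5: exponential rates when `α = ∞`, i.e. when
`P_X(0 < |η(X) − 1/2| ≤ c) = 0`: the excess risk of the trimmed MLE is at most
`2·exp(−2nc²/L²)` with `L = 1/(4θ(1−θ))`. -/
theorem stmt_9 (d : ℕ) (hd : 1 ≤ d) (θ : ℝ) (hθ : θ ∈ Set.Ioo (0 : ℝ) (1 / 2))
    (c : ℝ) (hc : 0 < c)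
    (p₁ p₀ : (Fin d → ℝ) → ℝ) (q : ℝ)
    (h₁m : Measurable p₁) (h₁nn : ∀ x, 0 ≤ p₁ x) (h₁int : ∫ x, p₁ x = 1)
    (h₀m : Measurable p₀) (h₀nn : ∀ x, 0 ≤ p₀ x) (h₀int : ∫ x, p₀ x = 1)
    (hq : q ∈ Set.Icc θ (1 - θ))
    (hMA : margX d p₁ p₀ q
        {x | 0 < |eta d p₁ p₀ q x - 1 / 2| ∧ |eta d p₁ p₀ q x - 1 / 2| ≤ c} = 0)
    (n : ℕ) (hn : 1 ≤ n) :
    (∫ S, risk d p₁ p₀ q (trimmedMLE d θ n S)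
        ∂(Measure.pi fun _ : Fin n => jointMeasure d p₁ p₀ q)) -
      risk d p₁ p₀ q q ≤
      2 * Real.exp (-2 * n * c ^ 2 / (1 / (4 * θ * (1 - θ))) ^ 2) := by
  obtain ⟨hθ0, hθh⟩ := hθ
  obtain ⟨hqθ, hq1θ⟩ := hq
  have hq0 : 0 ≤ q := le_trans hθ0.le hqθ
  have hq1 : q ≤ 1 := by linarith
  have hI₁ : Integrable p₁ := integrable_of_int_one_s9 h₁int
  have hI₀ : Integrable p₀ := integrable_of_int_one_s9 h₀int
  haveI hP : IsProbabilityMeasure (jointMeasure d p₁ p₀ q) :=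
    joint_prob_s9 h₁m h₁nn h₁int hI₁ h₀m h₀nn h₀int hI₀ hq0 hq1
  set μn := Measure.pi fun _ : Fin n => jointMeasure d p₁ p₀ q with hμn
  -- notation
  set ε : ℝ := 4 * θ * (1 - θ) * c with hε
  have hεpos : 0 < ε := by
    rw [hε]
    exact mul_pos (mul_pos (by linarith) (by linarith)) hc
  have hn0 : (0 : ℝ) < n := by
    have : (1 : ℝ) ≤ n := by exact_mod_cast hn
    linarith
  -- the integral as a finite sum over label vectors
  have hint : (∫ S, risk d p₁ p₀ q (trimmedMLE d θ n S) ∂μn)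
      = ∑ y : Fin n → Bool,
          (risk d p₁ p₀ q (max θ (min (1 - θ)
              ((∑ i, if y i = true then (1 : ℝ) else 0) / n)))) *
            (μn (Set.pi Set.univ
              fun i => (Prod.snd ⁻¹' {y i} : Set ((Fin d → ℝ) × Bool)))).toReal :=
    integral_label (jointMeasure d p₁ p₀ q) n
      (fun y => risk d p₁ p₀ q (max θ (min (1 - θ)
        ((∑ i, if y i = true then (1 : ℝ) else 0) / n))))
  have hbox : ∀ y : Fin n → Bool,
      (μn (Set.pi Set.univ
          fun i => (Prod.snd ⁻¹' {y i} : Set ((Fin d → ℝ) × Bool)))).toReal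
        = ∏ i, (if y i = true then q else 1 - q) := by
    intro y
    rw [hμn, Measure.pi_pi, ENNReal.toReal_prod]
    refine Finset.prod_congr rfl fun i _ => ?_
    rw [joint_snd h₁m h₁nn h₁int hI₁ h₀m h₀nn h₀int hI₀ hq0 hq1 (y i)]
    rw [ENNReal.toReal_ofReal (by split_ifs <;> linarith)]
  rw [hint]
  rw [Finset.sum_congr rfl fun y _ => by rw [hbox y]]
  -- the total mass of the label weights is 1
  have hWsum : (∑ y : Fin n → Bool, ∏ i, (if y i = true then q else 1 - q)) = 1 := by
    have hps := Finset.sum_prod_piFinset (Finset.univ : Finset Bool)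
      (fun (_ : Fin n) b => if b = true then q else 1 - q)
    rw [Fintype.piFinset_univ] at hps
    rw [hps]
    have : ∀ i : Fin n, (∑ b : Bool, (if b = true then q else 1 - q)) = 1 := by
      intro i; rw [Fintype.sum_bool]; norm_num
    rw [Finset.prod_congr rfl fun i _ => this i, Finset.prod_const_one]
  have hrsum : risk d p₁ p₀ q q
      = ∑ y : Fin n → Bool, risk d p₁ p₀ q q * ∏ i, (if y i = true then q else 1 - q) := by
    rw [← Finset.mul_sum, hWsum, mul_one]
  rw [hrsum, ← Finset.sum_sub_distrib]
  -- termwise bound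
  have hterm : ∀ y : Fin n → Bool,
      risk d p₁ p₀ q (max θ (min (1 - θ) ((∑ i, if y i = true then (1 : ℝ) else 0) / n))) *
          (∏ i, (if y i = true then q else 1 - q))
        - risk d p₁ p₀ q q * ∏ i, (if y i = true then q else 1 - q)
      ≤ Real.exp (-(4 * n * ε ^ 2)) *
          ((∏ i, (if y i = true then q else 1 - q)) *
            Real.exp ((4 * ε) * ((∑ i, if y i = true then (1 : ℝ) else 0) - n * q)))
        + Real.exp (-(4 * n * ε ^ 2)) *
          ((∏ i, (if y i = true then q else 1 - q)) *
            Real.exp ((-(4 * ε)) * ((∑ i, if y i = true then (1 : ℝ) else 0) - n * q))) := by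
    intro y
    set W : ℝ := ∏ i, (if y i = true then q else 1 - q) with hW
    set k : ℝ := ∑ i, if y i = true then (1 : ℝ) else 0 with hk
    have hW0 : 0 ≤ W := by
      rw [hW]
      exact Finset.prod_nonneg fun i _ => by split_ifs <;> linarith
    set qhat : ℝ := max θ (min (1 - θ) (k / n)) with hqhat
    have hqhatmem : qhat ∈ Set.Icc θ (1 - θ) :=
      ⟨le_max_left _ _, max_le (by linarith) (min_le_left _ _)⟩
    rw [← sub_mul]
    by_cases hclose : |qhat - q| ≤ ε
    · have heq : risk d p₁ p₀ q qhat = risk d p₁ p₀ q q :=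
        risk_eq_of_close ⟨hθ0, hθh⟩ hc h₁m h₁nn hI₁ h₀m h₀nn hI₀ ⟨hqθ, hq1θ⟩ hqhatmem hMA
          (by rw [← hε]; exact hclose)
      rw [heq]
      simp only [sub_self, zero_mul]
      positivity
    · push_neg at hclose
      have h1 : ε ≤ |k / n - q| :=
        le_trans hclose.le (clamp_abs_le (by linarith) hqθ hq1θ)
      have h2 : n * ε ≤ |k - n * q| := by
        have e : k - n * q = n * (k / n - q) := by field_simp
        rw [e, abs_mul, abs_of_pos hn0]
        exact mul_le_mul_of_nonneg_left h1 hn0.le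
      have hhr : risk d p₁ p₀ q qhat - risk d p₁ p₀ q q ≤ 1 := by
        have hb1 := risk_le_one h₁m h₁nn h₁int h₀m h₀nn h₀int hq0 hq1 qhat
        have hb2 := risk_nonneg h₁nn h₀nn hq0 hq1 (q := q) q
        linarith
      rcases le_abs.mp h2 with h3 | h3
      · have hexp : 1 ≤ Real.exp (-(4 * n * ε ^ 2)) * Real.exp ((4 * ε) * (k - n * q)) := by
          rw [← Real.exp_add, show (1 : ℝ) = Real.exp 0 from Real.exp_zero.symm]
          apply Real.exp_le_exp.mpr
          nlinarith [mul_le_mul_of_nonneg_left h3 (by linarith : (0:ℝ) ≤ 4 * ε)]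
        have hpos2 : 0 ≤ Real.exp (-(4 * n * ε ^ 2)) *
            (W * Real.exp ((-(4 * ε)) * (k - n * q))) := by positivity
        calc (risk d p₁ p₀ q qhat - risk d p₁ p₀ q q) * W ≤ 1 * W :=
              mul_le_mul_of_nonneg_right hhr hW0
          _ ≤ (Real.exp (-(4 * n * ε ^ 2)) * Real.exp ((4 * ε) * (k - n * q))) * W :=
              mul_le_mul_of_nonneg_right hexp hW0
          _ = Real.exp (-(4 * n * ε ^ 2)) * (W * Real.exp ((4 * ε) * (k - n * q))) := by ring
          _ ≤ _ := le_add_of_nonneg_right hpos2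
      · have hexp : 1 ≤ Real.exp (-(4 * n * ε ^ 2)) *
            Real.exp ((-(4 * ε)) * (k - n * q)) := by
          rw [← Real.exp_add, show (1 : ℝ) = Real.exp 0 from Real.exp_zero.symm]
          apply Real.exp_le_exp.mpr
          nlinarith [mul_le_mul_of_nonneg_left h3 (by linarith : (0:ℝ) ≤ 4 * ε)]
        have hpos2 : 0 ≤ Real.exp (-(4 * n * ε ^ 2)) *
            (W * Real.exp ((4 * ε) * (k - n * q))) := by positivity
        calc (risk d p₁ p₀ q qhat - risk d p₁ p₀ q q) * W ≤ 1 * W :=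
              mul_le_mul_of_nonneg_right hhr hW0
          _ ≤ (Real.exp (-(4 * n * ε ^ 2)) * Real.exp ((-(4 * ε)) * (k - n * q))) * W :=
              mul_le_mul_of_nonneg_right hexp hW0
          _ = Real.exp (-(4 * n * ε ^ 2)) * (W * Real.exp ((-(4 * ε)) * (k - n * q))) := by
              ring
          _ ≤ _ := le_add_of_nonneg_left hpos2
  calc (∑ y : Fin n → Bool,
        (risk d p₁ p₀ q (max θ (min (1 - θ)
            ((∑ i, if y i = true then (1 : ℝ) else 0) / n))) *
          (∏ i, (if y i = true then q else 1 - q))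
        - risk d p₁ p₀ q q * ∏ i, (if y i = true then q else 1 - q)))
      ≤ ∑ y : Fin n → Bool,
          (Real.exp (-(4 * n * ε ^ 2)) *
            ((∏ i, (if y i = true then q else 1 - q)) *
              Real.exp ((4 * ε) * ((∑ i, if y i = true then (1 : ℝ) else 0) - n * q)))
          + Real.exp (-(4 * n * ε ^ 2)) *
            ((∏ i, (if y i = true then q else 1 - q)) *
              Real.exp ((-(4 * ε)) * ((∑ i, if y i = true then (1 : ℝ) else 0) - n * q)))) :=
      Finset.sum_le_sum fun y _ => hterm y
    _ = Real.exp (-(4 * n * ε ^ 2)) *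
          (∑ y : Fin n → Bool, (∏ i, (if y i = true then q else 1 - q)) *
            Real.exp ((4 * ε) * ((∑ i, if y i = true then (1 : ℝ) else 0) - n * q)))
        + Real.exp (-(4 * n * ε ^ 2)) *
          (∑ y : Fin n → Bool, (∏ i, (if y i = true then q else 1 - q)) *
            Real.exp ((-(4 * ε)) * ((∑ i, if y i = true then (1 : ℝ) else 0) - n * q))) := by
      rw [Finset.sum_add_distrib, Finset.mul_sum, Finset.mul_sum]
    _ ≤ Real.exp (-(4 * n * ε ^ 2)) * Real.exp (n * ((4 * ε) ^ 2 / 8))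
        + Real.exp (-(4 * n * ε ^ 2)) * Real.exp (n * ((-(4 * ε)) ^ 2 / 8)) := by
      have hb1 := label_mgf_sum hq0 hq1 n (4 * ε)
      have hb2 := label_mgf_sum hq0 hq1 n (-(4 * ε))
      have he := (Real.exp_pos (-(4 * n * ε ^ 2))).le
      exact add_le_add (mul_le_mul_of_nonneg_left hb1 he) (mul_le_mul_of_nonneg_left hb2 he)
    _ = 2 * Real.exp (-(2 * n * ε ^ 2)) := by
      rw [← Real.exp_add, ← Real.exp_add]
      have e1 : -(4 * (n : ℝ) * ε ^ 2) + n * ((4 * ε) ^ 2 / 8) = -(2 * n * ε ^ 2) := by ring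
      have e2 : -(4 * (n : ℝ) * ε ^ 2) + n * ((-(4 * ε)) ^ 2 / 8) = -(2 * n * ε ^ 2) := by ring
      rw [e1, e2]; ring
    _ = 2 * Real.exp (-2 * n * c ^ 2 / (1 / (4 * θ * (1 - θ))) ^ 2) := by
      congr 1
      rw [hε]
      have hne : 4 * θ * (1 - θ) ≠ 0 := by nlinarith
      field_simp
end
end

section
/- (Lemma 2, plug-in rule excess risk bound) For every α > 0 and constants C₀, C₁, C₂ > 0 there exists a constant C > 0, depending only on α, C₀, C₁, C₂, such that the following holds. Let π be a probability distribution of (X,Y) on ℝ^d × {0,1} with regression function η(x) = π(Y = 1 | X = x) and marginal P_X, satisfying P_X(0 < |η(X) − 1/2| ≤ t) ≤ C₀·t^α for all t > 0. Let n ≥ 1, aₙ > 0, and let η̂ₙ : ℝ^d × (ℝ^d × {0,1})ⁿ → ℝ be a measurable estimator of η based on n i.i.d. samples S ~ π⊗n such that for P_X-almost every x and every δ > 0, π⊗n({S : |η̂ₙ(x,S) − η(x)| ≥ δ}) ≤ C₁·exp(−C₂·aₙ·δ²). Then the plug-in classifier f̂ₙ(x,S) = 1{η̂ₙ(x,S)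 ≥ 1/2} satisfies E_S[π({(x,y) : f̂ₙ(x,S) ≠ y})] − R* ≤ C·aₙ^{−(1+α)/2}, where R* = π({(x,y) : 1{η(x) ≥ 1/2} ≠ y}) is the Bayes risk. -/
open MeasureTheory

open scoped ENNReal

noncomputable section

/-- `η` is a (measurable version of the) regression function of the distribution `π` of
`(X,Y)`: for every measurable `A`, `π(A × {1}) = ∫_A η dP_X` where `P_X` is the first
marginal of `π`. -/
def IsRegressionFunction (d : ℕ) (π : Measure ((Fin d → ℝ) × Bool))
    (η : (Fin d → ℝ) → ℝ) : Prop :=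
  Measurable η ∧ (∀ x, η x ∈ Set.Icc (0 : ℝ) 1) ∧
    ∀ A : Set (Fin d → ℝ), MeasurableSet A →
      π (A ×ˢ ({true} : Set Bool)) = ∫⁻ x in A, ENNReal.ofReal (η x) ∂(π.map Prod.fst)

lemma measurableSet_ne_prop {γ : Type*} [MeasurableSpace γ] {P Q : γ → Prop}
    (hP : MeasurableSet {q | P q}) (hQ : MeasurableSet {q | Q q}) :
    MeasurableSet {q | P q ≠ Q q} := by
  have h : {q | P q ≠ Q q} = ({q | P q} ∩ {q | Q q}ᶜ) ∪ ({q | P q}ᶜ ∩ {q | Q q}) := by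
    ext q
    simp only [Set.mem_setOf_eq, ne_eq, eq_iff_iff, Set.mem_union, Set.mem_inter_iff,
      Set.mem_compl_iff]
    tauto
  rw [h]
  exact (hP.inter hQ.compl).union (hP.compl.inter hQ)

lemma mismatch_abs {a b : ℝ} (h : (1 / 2 ≤ a) ≠ (1 / 2 ≤ b)) : |b - 1 / 2| ≤ |a - b| := by
  by_cases h1 : 1 / 2 ≤ a <;> by_cases h2 : 1 / 2 ≤ b
  · exact (h (eq_iff_iff.mpr (iff_of_true h1 h2))).elim
  · push_neg at h2
    rw [abs_of_nonpos (by linarith)]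
    calc -(b - 1 / 2) = 1 / 2 - b := by ring
      _ ≤ a - b := by linarith
      _ ≤ |a - b| := le_abs_self _
  · push_neg at h1
    rw [abs_of_nonneg (by linarith)]
    calc b - 1 / 2 ≤ b - a := by linarith
      _ ≤ |a - b| := by rw [abs_sub_comm]; exact le_abs_self _
  · exact (h (eq_iff_iff.mpr (iff_of_false h1 h2))).elim

lemma geom_aux (α C₂ K : ℝ) (hα : 0 < α) (hCK : 2 + α ≤ C₂ * K ^ 2) (j : ℕ) :
    (2 : ℝ) ^ (j + 1) * ((2 : ℝ) ^ (j + 1)) ^ α * Real.exp (-(C₂ * K ^ 2 * (4 : ℝ) ^ j))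
      ≤ Real.exp (-1) ^ (j + 1) := by
  have hj4 : ((j : ℝ) + 1) ≤ (4 : ℝ) ^ j := by
    have h1 : j + 1 ≤ 4 ^ j := by
      calc j + 1 ≤ 2 ^ j := Nat.lt_two_pow_self
        _ ≤ 4 ^ j := Nat.pow_le_pow_left (by norm_num) j
    exact_mod_cast h1
  have e2 : (2 : ℝ) ^ (j + 1) ≤ Real.exp ((j : ℝ) + 1) := by
    calc (2 : ℝ) ^ (j + 1) ≤ (Real.exp 1) ^ (j + 1) :=
          pow_le_pow_left₀ (by norm_num) (by have := Real.add_one_le_exp 1; linarith) _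
      _ = Real.exp ((j : ℕ) + 1 : ℕ) := Real.exp_one_pow _
      _ = Real.exp ((j : ℝ) + 1) := by push_cast; ring_nf
  have e3 : ((2 : ℝ) ^ (j + 1)) ^ α ≤ Real.exp (α * ((j : ℝ) + 1)) := by
    have h := Real.rpow_le_rpow (by positivity) e2 hα.le
    rwa [← Real.exp_mul, mul_comm] at h
  have e4 : Real.exp (-(C₂ * K ^ 2 * (4 : ℝ) ^ j)) ≤ Real.exp (-((2 + α) * ((j : ℝ) + 1))) := by
    apply Real.exp_le_exp.mpr
    have h5 : (2 + α) * ((j : ℝ) + 1) ≤ (C₂ * K ^ 2) * (4 : ℝ) ^ j :=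
      mul_le_mul hCK hj4 (by positivity) (by nlinarith)
    linarith
  calc (2 : ℝ) ^ (j + 1) * ((2 : ℝ) ^ (j + 1)) ^ α * Real.exp (-(C₂ * K ^ 2 * (4 : ℝ) ^ j))
      ≤ Real.exp ((j : ℝ) + 1) * Real.exp (α * ((j : ℝ) + 1))
          * Real.exp (-((2 + α) * ((j : ℝ) + 1))) := by
        apply mul_le_mul (mul_le_mul e2 e3 (by positivity) (Real.exp_nonneg _)) e4
          (Real.exp_nonneg _) (by positivity)
    _ = Real.exp (-((j : ℝ) + 1)) := by
        rw [← Real.exp_add, ← Real.exp_add]; congr 1; ring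
    _ = Real.exp (-1) ^ (j + 1) := by
        rw [← Real.exp_nat_mul]; congr 1; push_cast; ring

open scoped Classical in
lemma risk_eq_s11 (d : ℕ) (π : Measure ((Fin d → ℝ) × Bool)) [IsProbabilityMeasure π]
    (η : (Fin d → ℝ) → ℝ) (hreg : IsRegressionFunction d π η)
    (B : Set (Fin d → ℝ)) (hB : MeasurableSet B) :
    π {p | (p.1 ∈ B) ≠ (p.2 = true)}
      = ∫⁻ x, (if x ∈ B then ENNReal.ofReal (1 - η x) else ENNReal.ofReal (η x))
          ∂(π.map Prod.fst) := by
  classical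
  obtain ⟨hη, hrange, hA⟩ := hreg
  set μ := π.map Prod.fst with hμ
  have hf1 : Measurable fun x => ENNReal.ofReal (1 - η x) :=
    (measurable_const.sub hη).ennreal_ofReal
  have hone : ∀ x, ENNReal.ofReal (1 - η x) + ENNReal.ofReal (η x) = 1 := by
    intro x
    rw [← ENNReal.ofReal_add (by linarith [(hrange x).2]) (hrange x).1]
    norm_num
  have hset : {p : (Fin d → ℝ) × Bool | (p.1 ∈ B) ≠ (p.2 = true)}
      = (B ×ˢ ({false} : Set Bool)) ∪ (Bᶜ ×ˢ ({true} : Set Bool)) := by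
    ext ⟨x, y⟩
    cases y <;> simp [ne_eq, eq_iff_iff]
  have hμB : π (B ×ˢ (Set.univ : Set Bool)) = μ B := by
    rw [hμ, Measure.map_apply measurable_fst hB]
    congr 1
    ext ⟨x, y⟩; simp
  have hsplitB : (B ×ˢ (Set.univ : Set Bool))
      = (B ×ˢ ({false} : Set Bool)) ∪ (B ×ˢ ({true} : Set Bool)) := by
    ext ⟨x, y⟩; cases y <;> simp
  have hd1 : π (B ×ˢ (Set.univ : Set Bool))
      = π (B ×ˢ ({false} : Set Bool)) + π (B ×ˢ ({true} : Set Bool)) := by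
    rw [hsplitB, measure_union (by
      simp [Set.disjoint_left]) (hB.prod (measurableSet_singleton _))]
  have hμB2 : μ B = ∫⁻ x in B, ENNReal.ofReal (1 - η x) ∂μ
      + ∫⁻ x in B, ENNReal.ofReal (η x) ∂μ := by
    rw [← lintegral_add_left hf1]
    rw [setLIntegral_congr_fun hB (fun x _ => hone x)]
    simp
  have htopI : π (B ×ˢ ({true} : Set Bool)) ≠ ⊤ := measure_ne_top _ _
  have hfalse : π (B ×ˢ ({false} : Set Bool)) = ∫⁻ x in B, ENNReal.ofReal (1 - η x) ∂μ := by
    have hItop : ∫⁻ x in B, ENNReal.ofReal (η x) ∂μ ≠ ⊤ := by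
      rw [← hA B hB]; exact htopI
    have h := hd1
    rw [hμB, hμB2, hA B hB] at h
    exact ((ENNReal.add_left_inj hItop).mp h).symm
  have hdisj : Disjoint (B ×ˢ ({false} : Set Bool)) (Bᶜ ×ˢ ({true} : Set Bool)) := by
    simp only [Set.disjoint_left]
    rintro ⟨x, y⟩ hxy hxy2
    simp only [Set.mem_prod, Set.mem_singleton_iff, Set.mem_compl_iff] at hxy hxy2
    exact hxy2.1 hxy.1
  rw [hset, measure_union hdisj (hB.compl.prod (measurableSet_singleton _)), hfalse, hA Bᶜ hB.compl]
  rw [← lintegral_add_compl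
    (fun x => if x ∈ B then ENNReal.ofReal (1 - η x) else ENNReal.ofReal (η x)) hB]
  congr 1
  · exact (setLIntegral_congr_fun hB (fun x hx => by simp [hx])).symm
  · refine (setLIntegral_congr_fun hB.compl (fun x hx => ?_)).symm
    have hxB : x ∉ B := hx
    simp [hxB]

set_option maxHeartbeats 2000000 in
/-- Lemma 2 (Audibert–Tsybakov plug-in lemma): under the margin assumption and an
exponential concentration bound for the regression-function estimator, the plug-in
classifier `1{η̂ₙ ≥ 1/2}` has excess risk at most `C·aₙ^{-(1+α)/2}`. -/
theorem stmt_11 (d : ℕ) (hd : 1 ≤ d) (α : ℝ) (hα : 0 < α)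
    (C₀ C₁ C₂ : ℝ) (hC₀ : 0 < C₀) (hC₁ : 0 < C₁) (hC₂ : 0 < C₂) :
    ∃ C : ℝ, 0 < C ∧
      ∀ π : Measure ((Fin d → ℝ) × Bool), IsProbabilityMeasure π →
        ∀ η : (Fin d → ℝ) → ℝ, IsRegressionFunction d π η →
          (∀ t : ℝ, 0 < t →
            ((π.map Prod.fst)
                {x | 0 < |η x - 1 / 2| ∧ |η x - 1 / 2| ≤ t}).toReal ≤ C₀ * t ^ α) →
          ∀ n : ℕ, 1 ≤ n → ∀ aₙ : ℝ, 0 < aₙ →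
            ∀ ηhat : (Fin d → ℝ) → (Fin n → (Fin d → ℝ) × Bool) → ℝ,
              Measurable (Function.uncurry ηhat) →
              (∀ᵐ x ∂(π.map Prod.fst), ∀ δ : ℝ, 0 < δ →
                ((Measure.pi fun _ : Fin n => π)
                    {S | δ ≤ |ηhat x S - η x|}).toReal ≤
                  C₁ * Real.exp (-C₂ * aₙ * δ ^ 2)) →
              (∫ S, (π {p | (1 / 2 ≤ ηhat p.1 S) ≠ (p.2 = true)}).toReal
                  ∂(Measure.pi fun _ : Fin n => π)) -
                (π {p | (1 / 2 ≤ η p.1) ≠ (p.2 = true)}).toReal ≤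
                C * aₙ ^ (-((1 + α) / 2)) := by
  
  classical
  set K : ℝ := max 1 (Real.sqrt ((2 + α) / C₂)) with hKdef
  have hK1 : (1 : ℝ) ≤ K := le_max_left _ _
  have hKpos : (0 : ℝ) < K := lt_of_lt_of_le one_pos hK1
  have hCK : 2 + α ≤ C₂ * K ^ 2 := by
    have h1 : Real.sqrt ((2 + α) / C₂) ≤ K := le_max_right _ _
    have h2 : Real.sqrt ((2 + α) / C₂) ^ 2 ≤ K ^ 2 :=
      pow_le_pow_left₀ (Real.sqrt_nonneg _) h1 2
    rw [Real.sq_sqrt (by positivity)] at h2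
    calc 2 + α = C₂ * ((2 + α) / C₂) := by field_simp
      _ ≤ C₂ * K ^ 2 := mul_le_mul_of_nonneg_left h2 hC₂.le
  refine ⟨2 * C₀ * (1 + C₁) * K ^ (1 + α), by positivity, ?_⟩
  intro π hπ η hreg hmargin n hn aₙ ha ηhat hηhat hconc
  obtain ⟨hη, hrange, -⟩ := id hreg
  set μ := π.map Prod.fst with hμdef
  haveI hμprob : IsProbabilityMeasure μ := Measure.isProbabilityMeasure_map measurable_fst.aemeasurable
  set ν := Measure.pi (fun _ : Fin n => π) with hνdef
  -- the threshold t
  set t : ℝ := K * aₙ ^ (-(1 / 2) : ℝ) with htdef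
  have ht : 0 < t := mul_pos hKpos (Real.rpow_pos_of_pos ha _)
  have hrpow2 : (aₙ ^ (-(1 / 2) : ℝ)) ^ (2 : ℕ) = aₙ⁻¹ := by
    rw [← Real.rpow_natCast (aₙ ^ (-(1 / 2) : ℝ)) 2, ← Real.rpow_mul ha.le]
    norm_num
    rw [Real.rpow_neg_one]
  have hat2 : aₙ * t ^ 2 = K ^ 2 := by
    rw [htdef, mul_pow, hrpow2]
    field_simp
  -- margin and concentration in ℝ≥0∞ form
  have hmargin' : ∀ s : ℝ, 0 < s →
      μ {x | 0 < |η x - 1 / 2| ∧ |η x - 1 / 2| ≤ s} ≤ ENNReal.ofReal (C₀ * s ^ α) :=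
    fun s hs => (ENNReal.le_ofReal_iff_toReal_le (measure_ne_top _ _) (by positivity)).2
      (hmargin s hs)
  have hconc' : ∀ᵐ x ∂μ, ∀ δ : ℝ, 0 < δ →
      ν {S | δ ≤ |ηhat x S - η x|} ≤ ENNReal.ofReal (C₁ * Real.exp (-C₂ * aₙ * δ ^ 2)) := by
    filter_upwards [hconc] with x hx δ hδ
    exact (ENNReal.le_ofReal_iff_toReal_le (measure_ne_top _ _) (by positivity)).2 (hx δ hδ)
  -- basic measurable objects
  have hm : Measurable fun x => |η x - 1 / 2| := (hη.sub measurable_const).abs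
  set w : (Fin d → ℝ) → ℝ≥0∞ := fun x => ENNReal.ofReal (2 * |η x - 1 / 2|) with hwdef
  have hwmeas : Measurable w := (measurable_const.mul hm).ennreal_ofReal
  set M' : Set ((Fin n → (Fin d → ℝ) × Bool) × (Fin d → ℝ)) :=
    {q | (1 / 2 ≤ ηhat q.2 q.1) ≠ (1 / 2 ≤ η q.2)} with hM'def
  have hM' : MeasurableSet M' :=
    measurableSet_ne_prop
      (measurableSet_le measurable_const (hηhat.comp measurable_swap))
      (measurableSet_le measurable_const (hη.comp measurable_snd))
  set H : (Fin n → (Fin d → ℝ) × Bool) → (Fin d → ℝ) → ℝ≥0∞ :=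
    fun S x => Set.indicator M' (fun q => w q.2) (S, x) with hHdef
  have hHm : Measurable (Function.uncurry H) := by
    have h : Function.uncurry H = M'.indicator (fun q => w q.2) := rfl
    rw [h]
    exact (hwmeas.comp measurable_snd).indicator hM'
  have hMx : ∀ x, MeasurableSet {S | (S, x) ∈ M'} :=
    fun x => hM'.preimage measurable_prodMk_right
  set F : (Fin d → ℝ) → ℝ≥0∞ := fun x => w x * ν {S | (S, x) ∈ M'} with hFdef
  have hBmeas : ∀ S, MeasurableSet {x | 1 / 2 ≤ ηhat x S} := fun S =>
    measurableSet_le measurable_const (hηhat.comp measurable_prodMk_right)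
  have hBstar : MeasurableSet {x | 1 / 2 ≤ η x} := measurableSet_le measurable_const hη
  -- risk identities
  have hIS : ∀ S, π {p | (1 / 2 ≤ ηhat p.1 S) ≠ (p.2 = true)}
      = ∫⁻ x, (if x ∈ {x' | 1 / 2 ≤ ηhat x' S} then ENNReal.ofReal (1 - η x)
          else ENNReal.ofReal (η x)) ∂μ :=
    fun S => risk_eq_s11 d π η hreg _ (hBmeas S)
  have hIstar : π {p | (1 / 2 ≤ η p.1) ≠ (p.2 = true)}
      = ∫⁻ x, (if x ∈ {x' | 1 / 2 ≤ η x'} then ENNReal.ofReal (1 - η x)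
          else ENNReal.ofReal (η x)) ∂μ :=
    risk_eq_s11 d π η hreg _ hBstar
  -- pointwise decomposition
  have hpt : ∀ S x,
      (if x ∈ {x' | 1 / 2 ≤ ηhat x' S} then ENNReal.ofReal (1 - η x)
        else ENNReal.ofReal (η x))
      = (if x ∈ {x' | 1 / 2 ≤ η x'} then ENNReal.ofReal (1 - η x)
          else ENNReal.ofReal (η x)) + H S x := by
    intro S x
    by_cases h1 : 1 / 2 ≤ ηhat x S <;> by_cases h2 : 1 / 2 ≤ η x
    · have hmem : (S, x) ∉ M' := fun hc => hc (eq_iff_iff.mpr (iff_of_true h1 h2))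
      simp only [hHdef, Set.indicator_of_notMem hmem, add_zero]
      rw [if_pos (show x ∈ {x' | 1 / 2 ≤ ηhat x' S} from h1),
        if_pos (show x ∈ {x' | 1 / 2 ≤ η x'} from h2)]
    · have hmem : (S, x) ∈ M' := fun hc => h2 ((eq_iff_iff.mp hc).mp h1)
      simp only [hHdef, Set.indicator_of_mem hmem]
      rw [if_pos (show x ∈ {x' | 1 / 2 ≤ ηhat x' S} from h1),
        if_neg (show x ∉ {x' | 1 / 2 ≤ η x'} from h2)]
      push_neg at h2
      show ENNReal.ofReal (1 - η x)
        = ENNReal.ofReal (η x) + ENNReal.ofReal (2 * |η x - 1 / 2|)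
      rw [abs_of_nonpos (by linarith : η x - 1 / 2 ≤ 0)]
      rw [← ENNReal.ofReal_add (hrange x).1 (by linarith)]
      congr 1
      ring
    · have hmem : (S, x) ∈ M' := fun hc => h1 ((eq_iff_iff.mp hc).mpr h2)
      simp only [hHdef, Set.indicator_of_mem hmem]
      rw [if_neg (show x ∉ {x' | 1 / 2 ≤ ηhat x' S} from h1),
        if_pos (show x ∈ {x' | 1 / 2 ≤ η x'} from h2)]
      show ENNReal.ofReal (η x)
        = ENNReal.ofReal (1 - η x) + ENNReal.ofReal (2 * |η x - 1 / 2|)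
      rw [abs_of_nonneg (by linarith : (0:ℝ) ≤ η x - 1 / 2)]
      rw [← ENNReal.ofReal_add (by linarith [(hrange x).2]) (by linarith)]
      congr 1
      ring
    · have hmem : (S, x) ∉ M' := fun hc => hc (eq_iff_iff.mpr (iff_of_false h1 h2))
      simp only [hHdef, Set.indicator_of_notMem hmem, add_zero]
      rw [if_neg (show x ∉ {x' | 1 / 2 ≤ ηhat x' S} from h1),
        if_neg (show x ∉ {x' | 1 / 2 ≤ η x'} from h2)]
  have hifmeas : Measurable fun x =>
      (if x ∈ {x' | 1 / 2 ≤ η x'} then ENNReal.ofReal (1 - η x) else ENNReal.ofReal (η x)) :=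
    Measurable.ite hBstar (measurable_const.sub hη).ennreal_ofReal hη.ennreal_ofReal
  have hdecomp : ∀ S, π {p | (1 / 2 ≤ ηhat p.1 S) ≠ (p.2 = true)}
      = π {p | (1 / 2 ≤ η p.1) ≠ (p.2 = true)} + ∫⁻ x, H S x ∂μ := by
    intro S
    rw [hIS S, hIstar, lintegral_congr (hpt S), lintegral_add_left hifmeas]
  -- inner integral
  have hinner : ∀ x, ∫⁻ S, H S x ∂ν = w x * ν {S | (S, x) ∈ M'} := by
    intro x
    have h1 : ∀ S, H S x = Set.indicator {S' | (S', x) ∈ M'} (fun _ => w x) S := by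
      intro S
      by_cases h : (S, x) ∈ M' <;> simp [hHdef, Set.indicator, h]
    rw [lintegral_congr h1, lintegral_indicator (hMx x), setLIntegral_const]
  have hT : ∫⁻ S, π {p | (1 / 2 ≤ ηhat p.1 S) ≠ (p.2 = true)} ∂ν
      = π {p | (1 / 2 ≤ η p.1) ≠ (p.2 = true)} + ∫⁻ x, F x ∂μ := by
    rw [lintegral_congr hdecomp, lintegral_add_left measurable_const, lintegral_const,
      measure_univ, mul_one]
    congr 1
    rw [lintegral_lintegral_swap hHm.aemeasurable]
    exact lintegral_congr hinner
  -- shell decomposition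
  set P : Set (Fin d → ℝ) := {x | 0 < |η x - 1 / 2|} with hPdef
  have hP : MeasurableSet P := measurableSet_lt measurable_const hm
  set L : ℕ → ℝ := fun k => if k = 0 then 0 else t * 2 ^ (k - 1) with hLdef
  set A : ℕ → Set (Fin d → ℝ) :=
    fun k => {x | L k < |η x - 1 / 2| ∧ |η x - 1 / 2| ≤ t * 2 ^ k} with hAdef
  have hL0 : ∀ k, 0 ≤ L k := by
    intro k
    by_cases h : k = 0
    · simp [hLdef, h]
    · rw [hLdef]
      simp only [h, if_false]
      positivity
  have hAmeas : ∀ k, MeasurableSet (A k) := fun k =>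
    (measurableSet_lt measurable_const hm).inter (measurableSet_le hm measurable_const)
  have hdisjA : Pairwise (Function.onFun Disjoint A) := by
    have key : ∀ i j, i < j → Disjoint (A i) (A j) := by
      intro i j hij
      rw [Set.disjoint_left]
      intro x hxi hxj
      have h1 : |η x - 1 / 2| ≤ t * 2 ^ i := hxi.2
      have h2 : L j < |η x - 1 / 2| := hxj.1
      have hLj : L j = t * 2 ^ (j - 1) := if_neg (by omega)
      have h3 : t * 2 ^ i ≤ t * 2 ^ (j - 1) :=
        mul_le_mul_of_nonneg_left (pow_le_pow_right₀ (by norm_num) (by omega)) ht.le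
      rw [hLj] at h2
      linarith
    intro i j hij
    rcases lt_or_gt_of_ne hij with h | h
    · exact key i j h
    · exact (key j i h).symm
  have hcover : P = ⋃ k, A k := by
    ext x
    simp only [hPdef, Set.mem_setOf_eq, Set.mem_iUnion, hAdef]
    constructor
    · intro hx
      have hex : ∃ k : ℕ, |η x - 1 / 2| ≤ t * 2 ^ k := by
        obtain ⟨N, hN⟩ := exists_nat_gt (|η x - 1 / 2| / t)
        refine ⟨N, ?_⟩
        have h2N : (N : ℝ) ≤ 2 ^ N := by
          have := Nat.lt_two_pow_self (n := N)
          exact_mod_cast this.le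
        have hdiv := (div_lt_iff₀ ht).mp hN
        nlinarith [pow_pos (by norm_num : (0:ℝ) < 2) N]
      refine ⟨Nat.find hex, ?_, Nat.find_spec hex⟩
      by_cases h0 : Nat.find hex = 0
      · rw [h0]
        simpa [hLdef] using hx
      · have hmin := Nat.find_min hex (show Nat.find hex - 1 < Nat.find hex by omega)
        push_neg at hmin
        have hLe : L (Nat.find hex) = t * 2 ^ (Nat.find hex - 1) := if_neg h0
        rw [hLe]
        exact hmin
    · rintro ⟨k, hk1, -⟩
      exact lt_of_le_of_lt (hL0 k) hk1
  -- shell bounds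
  have hbound0 : ∫⁻ x in A 0, F x ∂μ ≤ ENNReal.ofReal (2 * C₀ * t ^ (1 + α)) := by
    have hle : ∀ᵐ x ∂μ.restrict (A 0), F x ≤ ENNReal.ofReal (2 * t) := by
      filter_upwards [ae_restrict_mem (hAmeas 0)] with x hx
      have hmle : |η x - 1 / 2| ≤ t := by
        have h := hx.2
        simpa using h
      have h1 : w x ≤ ENNReal.ofReal (2 * t) := by
        rw [hwdef]
        exact ENNReal.ofReal_le_ofReal (by linarith)
      calc F x ≤ ENNReal.ofReal (2 * t) * 1 := mul_le_mul' h1 prob_le_one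
        _ = ENNReal.ofReal (2 * t) := mul_one _
    calc ∫⁻ x in A 0, F x ∂μ ≤ ∫⁻ _x in A 0, ENNReal.ofReal (2 * t) ∂μ := lintegral_mono_ae hle
      _ = ENNReal.ofReal (2 * t) * μ (A 0) := setLIntegral_const _ _
      _ ≤ ENNReal.ofReal (2 * t) * ENNReal.ofReal (C₀ * t ^ α) := by
          refine mul_le_mul_right ?_ _
          refine le_trans (measure_mono ?_) (hmargin' t ht)
          intro x hx
          refine ⟨lt_of_le_of_lt (hL0 0) hx.1, ?_⟩
          have h := hx.2
          simpa using h
      _ = ENNReal.ofReal (2 * C₀ * t ^ (1 + α)) := by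
          rw [← ENNReal.ofReal_mul (by positivity)]
          congr 1
          rw [Real.rpow_add ht, Real.rpow_one]
          ring
  have hboundk : ∀ j : ℕ, ∫⁻ x in A (j + 1), F x ∂μ
      ≤ ENNReal.ofReal (2 * C₀ * C₁ * t ^ (1 + α)) * ENNReal.ofReal (Real.exp (-1)) ^ (j + 1) := by
    intro j
    have hδ : (0:ℝ) < t * 2 ^ j := by positivity
    set c : ℝ≥0∞ := ENNReal.ofReal (2 * (t * 2 ^ (j + 1)))
      * ENNReal.ofReal (C₁ * Real.exp (-C₂ * aₙ * (t * 2 ^ j) ^ 2)) with hcdef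
    have hle : ∀ᵐ x ∂μ.restrict (A (j + 1)), F x ≤ c := by
      filter_upwards [ae_restrict_mem (hAmeas (j + 1)), ae_restrict_of_ae hconc'] with x hx hxc
      have hLj : L (j + 1) = t * 2 ^ j := by
        rw [hLdef]
        simp
      have hgt : t * 2 ^ j < |η x - 1 / 2| := by rw [← hLj]; exact hx.1
      have h1 : w x ≤ ENNReal.ofReal (2 * (t * 2 ^ (j + 1))) := by
        rw [hwdef]
        exact ENNReal.ofReal_le_ofReal (by linarith [hx.2])
      have hsub : {S | (S, x) ∈ M'} ⊆ {S | t * 2 ^ j ≤ |ηhat x S - η x|} := by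
        intro S hS
        exact le_trans hgt.le (mismatch_abs hS)
      have h2 : ν {S | (S, x) ∈ M'}
          ≤ ENNReal.ofReal (C₁ * Real.exp (-C₂ * aₙ * (t * 2 ^ j) ^ 2)) :=
        le_trans (measure_mono hsub) (hxc _ hδ)
      exact mul_le_mul' h1 h2
    calc ∫⁻ x in A (j + 1), F x ∂μ ≤ ∫⁻ _x in A (j + 1), c ∂μ := lintegral_mono_ae hle
      _ = c * μ (A (j + 1)) := setLIntegral_const _ _
      _ ≤ c * ENNReal.ofReal (C₀ * (t * 2 ^ (j + 1)) ^ α) := by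
          refine mul_le_mul_right ?_ _
          refine le_trans (measure_mono ?_) (hmargin' (t * 2 ^ (j + 1)) (by positivity))
          intro x hx
          have hLj : L (j + 1) = t * 2 ^ j := by
            rw [hLdef]
            simp
          refine ⟨lt_of_lt_of_le hδ ?_, hx.2⟩
          rw [← hLj]
          exact hx.1.le
      _ ≤ ENNReal.ofReal (2 * C₀ * C₁ * t ^ (1 + α)) * ENNReal.ofReal (Real.exp (-1)) ^ (j + 1) := by
          rw [hcdef, ← ENNReal.ofReal_mul (by positivity), ← ENNReal.ofReal_mul (by positivity),
            ← ENNReal.ofReal_pow (Real.exp_nonneg _), ← ENNReal.ofReal_mul (by positivity)]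
          apply ENNReal.ofReal_le_ofReal
          have hEeq : -C₂ * aₙ * (t * 2 ^ j) ^ 2 = -(C₂ * K ^ 2 * (4:ℝ) ^ j) := by
            have h4 : ((2:ℝ) ^ j) ^ 2 = (4:ℝ) ^ j := by
              rw [← pow_mul, mul_comm j 2, pow_mul]
              norm_num
            calc -C₂ * aₙ * (t * 2 ^ j) ^ 2 = -(C₂ * (aₙ * t ^ 2) * ((2:ℝ) ^ j) ^ 2) := by ring
              _ = -(C₂ * K ^ 2 * (4:ℝ) ^ j) := by rw [hat2, h4]
          rw [hEeq]
          have key := geom_aux α C₂ K hα hCK j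
          have hmulr : (t * 2 ^ (j + 1)) ^ α = t ^ α * ((2:ℝ) ^ (j + 1)) ^ α :=
            Real.mul_rpow ht.le (by positivity)
          have htα : t ^ (1 + α) = t * t ^ α := by
            rw [Real.rpow_add ht, Real.rpow_one]
          rw [hmulr, htα]
          have hnn : (0:ℝ) ≤ 2 * C₀ * C₁ * (t * t ^ α) := by
            have := Real.rpow_nonneg ht.le α
            positivity
          calc 2 * (t * 2 ^ (j + 1)) * (C₁ * Real.exp (-(C₂ * K ^ 2 * 4 ^ j)))
              * (C₀ * (t ^ α * ((2:ℝ) ^ (j + 1)) ^ α))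
              = (2 * C₀ * C₁ * (t * t ^ α)) * ((2:ℝ) ^ (j + 1) * ((2:ℝ) ^ (j + 1)) ^ α
                * Real.exp (-(C₂ * K ^ 2 * 4 ^ j))) := by ring
            _ ≤ (2 * C₀ * C₁ * (t * t ^ α)) * Real.exp (-1) ^ (j + 1) :=
                mul_le_mul_of_nonneg_left key hnn
            _ = 2 * C₀ * C₁ * (t * t ^ α) * Real.exp (-1) ^ (j + 1) := by ring
  -- geometric series
  set r : ℝ≥0∞ := ENNReal.ofReal (Real.exp (-1)) with hrdef
  have hr1 : r < 1 := by
    rw [hrdef]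
    exact ENNReal.ofReal_lt_one.mpr (Real.exp_lt_one_iff.mpr (by norm_num))
  have hrhalf : r + r ≤ 1 := by
    rw [hrdef, ← ENNReal.ofReal_add (Real.exp_nonneg _) (Real.exp_nonneg _),
      show (1:ℝ≥0∞) = ENNReal.ofReal 1 by simp]
    apply ENNReal.ofReal_le_ofReal
    have h2e : (2:ℝ) ≤ Real.exp 1 := by have := Real.add_one_le_exp 1; linarith
    have hinv : Real.exp (-1) ≤ 2⁻¹ := by
      rw [Real.exp_neg]
      exact inv_anti₀ (by norm_num) h2e
    linarith
  have hgeom : r * (1 - r)⁻¹ ≤ 1 := by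
    have h2r : r ≤ 1 - r := by
      rw [hrdef] at hrhalf ⊢
      exact ENNReal.le_sub_of_add_le_left ENNReal.ofReal_ne_top hrhalf
    have hne0 : 1 - r ≠ 0 := (tsub_pos_of_lt hr1).ne'
    have hnetop : 1 - r ≠ ⊤ := (lt_of_le_of_lt tsub_le_self ENNReal.one_lt_top).ne
    calc r * (1 - r)⁻¹ ≤ (1 - r) * (1 - r)⁻¹ := mul_le_mul_left h2r _
      _ = 1 := ENNReal.mul_inv_cancel hne0 hnetop
  have htsum : ∑' k, ∫⁻ x in A k, F x ∂μ
      ≤ ENNReal.ofReal (2 * C₀ * (1 + C₁) * t ^ (1 + α)) := by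
    rw [tsum_eq_zero_add' ENNReal.summable]
    have h1 : ∑' j : ℕ, ∫⁻ x in A (j + 1), F x ∂μ
        ≤ ∑' j : ℕ, ENNReal.ofReal (2 * C₀ * C₁ * t ^ (1 + α)) * r ^ (j + 1) :=
      ENNReal.tsum_le_tsum hboundk
    have h2 : ∑' j : ℕ, ENNReal.ofReal (2 * C₀ * C₁ * t ^ (1 + α)) * r ^ (j + 1)
        = ENNReal.ofReal (2 * C₀ * C₁ * t ^ (1 + α)) * (r * (1 - r)⁻¹) := by
      rw [ENNReal.tsum_mul_left]
      congr 1
      calc ∑' j : ℕ, r ^ (j + 1) = ∑' j : ℕ, r * r ^ j := by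
            refine tsum_congr fun j => ?_
            rw [pow_succ']
        _ = r * ∑' j : ℕ, r ^ j := ENNReal.tsum_mul_left
        _ = r * (1 - r)⁻¹ := by rw [ENNReal.tsum_geometric]
    calc ∫⁻ x in A 0, F x ∂μ + ∑' j : ℕ, ∫⁻ x in A (j + 1), F x ∂μ
        ≤ ENNReal.ofReal (2 * C₀ * t ^ (1 + α))
          + ENNReal.ofReal (2 * C₀ * C₁ * t ^ (1 + α)) * (r * (1 - r)⁻¹) :=
          add_le_add hbound0 (h2 ▸ h1)
      _ ≤ ENNReal.ofReal (2 * C₀ * t ^ (1 + α))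
          + ENNReal.ofReal (2 * C₀ * C₁ * t ^ (1 + α)) * 1 :=
          add_le_add le_rfl (mul_le_mul_right hgeom _)
      _ = ENNReal.ofReal (2 * C₀ * (1 + C₁) * t ^ (1 + α)) := by
          rw [mul_one, ← ENNReal.ofReal_add (by positivity) (by positivity)]
          congr 1
          ring
  have hPc : ∫⁻ x in Pᶜ, F x ∂μ = 0 := by
    have h0 : ∀ᵐ x ∂μ, x ∈ Pᶜ → F x = (fun _ => (0:ℝ≥0∞)) x := by
      refine ae_of_all _ fun x hx => ?_
      have hm0 : |η x - 1 / 2| = 0 := le_antisymm (not_lt.mp hx) (abs_nonneg _)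
      have hw0 : w x = 0 := by
        simp only [hwdef]
        rw [hm0]
        simp
      show w x * ν {S | (S, x) ∈ M'} = 0
      rw [hw0, zero_mul]
    rw [setLIntegral_congr_fun_ae hP.compl h0]
    simp
  have hTle : ∫⁻ x, F x ∂μ ≤ ENNReal.ofReal (2 * C₀ * (1 + C₁) * t ^ (1 + α)) := by
    rw [← lintegral_add_compl F hP, hPc, add_zero,
      show ∫⁻ x in P, F x ∂μ = ∑' k, ∫⁻ x in A k, F x ∂μ from by
        rw [hcover]; exact lintegral_iUnion hAmeas hdisjA F]
    exact htsum
  -- final assembly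
  have hW : MeasurableSet {q : (Fin n → (Fin d → ℝ) × Bool) × ((Fin d → ℝ) × Bool) |
      (1 / 2 ≤ ηhat q.2.1 q.1) ≠ (q.2.2 = true)} := by
    apply measurableSet_ne_prop
    · exact measurableSet_le measurable_const
        (hηhat.comp (measurable_snd.fst.prodMk measurable_fst))
    · exact (measurable_snd.snd) (measurableSet_singleton true)
  have hmeasI : Measurable fun S => π {p | (1 / 2 ≤ ηhat p.1 S) ≠ (p.2 = true)} :=
    measurable_measure_prodMk_left hW
  have hint : ∫ S, (π {p | (1 / 2 ≤ ηhat p.1 S) ≠ (p.2 = true)}).toReal ∂ν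
      = (∫⁻ S, π {p | (1 / 2 ≤ ηhat p.1 S) ≠ (p.2 = true)} ∂ν).toReal :=
    integral_toReal hmeasI.aemeasurable (ae_of_all _ fun S => measure_lt_top π _)
  rw [hint, hT]
  have hRSne : π {p | (1 / 2 ≤ η p.1) ≠ (p.2 = true)} ≠ ⊤ := measure_ne_top _ _
  have hTne : (∫⁻ x, F x ∂μ) ≠ ⊤ := (lt_of_le_of_lt hTle ENNReal.ofReal_lt_top).ne
  rw [ENNReal.toReal_add hRSne hTne]
  have hctnn : (0:ℝ) ≤ 2 * C₀ * (1 + C₁) * t ^ (1 + α) :=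
    mul_nonneg (by positivity) (Real.rpow_nonneg ht.le _)
  have hter : (∫⁻ x, F x ∂μ).toReal ≤ 2 * C₀ * (1 + C₁) * t ^ (1 + α) := by
    rw [← ENNReal.toReal_ofReal hctnn]
    exact ENNReal.toReal_mono ENNReal.ofReal_ne_top hTle
  have hteq : 2 * C₀ * (1 + C₁) * t ^ (1 + α)
      = 2 * C₀ * (1 + C₁) * K ^ (1 + α) * aₙ ^ (-((1 + α) / 2)) := by
    rw [htdef, Real.mul_rpow hKpos.le (Real.rpow_nonneg ha.le _),
      ← Real.rpow_mul ha.le,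
      show -(1 / 2) * (1 + α) = -((1 + α) / 2) by ring]
    ring
  linarith [hter]
end
end

section
/- (Lemma 5, KL divergence between Bernoulli distributions) Let P and Q be Bernoulli distributions with success probabilities 1/2 − p and 1/2 − q respectively, where |p| ≤ 1/4 and |q| ≤ 1/4. Then KL(P ‖ Q) ≤ 8·(p − q)². -/
/-- Lemma 5: the Kullback–Leibler divergence
`KL(Ber(1/2−p) ‖ Ber(1/2−q)) = a·log(a/b) + (1−a)·log((1−a)/(1−b))` (with `a = 1/2 − p`,
`b = 1/2 − q`) between Bernoulli distributions with parameters `1/2 − p` and `1/2 − q`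
satisfies `KL ≤ 8·(p − q)²` whenever `|p| ≤ 1/4` and `|q| ≤ 1/4`. -/
theorem stmt_14 (p q : ℝ) (hp : |p| ≤ 1 / 4) (hq : |q| ≤ 1 / 4) :
    (1 / 2 - p) * Real.log ((1 / 2 - p) / (1 / 2 - q)) +
        (1 - (1 / 2 - p)) * Real.log ((1 - (1 / 2 - p)) / (1 - (1 / 2 - q))) ≤
      8 * (p - q) ^ 2 := by
  rw [abs_le] at hp hq
  have ha : (0:ℝ) < 1 / 2 - p := by linarith [hp.2]
  have ha' : (0:ℝ) < 1 - (1 / 2 - p) := by linarith [hp.1]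
  have hb : (0:ℝ) < 1 / 2 - q := by linarith [hq.2]
  have hb' : (0:ℝ) < 1 - (1 / 2 - q) := by linarith [hq.1]
  have h1 : Real.log ((1 / 2 - p) / (1 / 2 - q)) ≤ (1 / 2 - p) / (1 / 2 - q) - 1 :=
    Real.log_le_sub_one_of_pos (by positivity)
  have h2 : Real.log ((1 - (1 / 2 - p)) / (1 - (1 / 2 - q))) ≤
      (1 - (1 / 2 - p)) / (1 - (1 / 2 - q)) - 1 :=
    Real.log_le_sub_one_of_pos (by positivity)
  have key : (1 / 2 - p) * ((1 / 2 - p) / (1 / 2 - q) - 1) +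
      (1 - (1 / 2 - p)) * ((1 - (1 / 2 - p)) / (1 - (1 / 2 - q)) - 1) ≤ 8 * (p - q) ^ 2 := by
    rw [div_sub_one hb.ne', div_sub_one hb'.ne', mul_div_assoc', mul_div_assoc',
      div_add_div _ _ hb.ne' hb'.ne', div_le_iff₀ (by positivity)]
    nlinarith [mul_nonneg (sq_nonneg (p - q)) (show (0:ℝ) ≤ 1 - 8 * q ^ 2 by nlinarith [hq.1, hq.2])]
  calc (1 / 2 - p) * Real.log ((1 / 2 - p) / (1 / 2 - q)) +
        (1 - (1 / 2 - p)) * Real.log ((1 - (1 / 2 - p)) / (1 - (1 / 2 - q)))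
      ≤ (1 / 2 - p) * ((1 / 2 - p) / (1 / 2 - q) - 1) +
        (1 - (1 / 2 - p)) * ((1 - (1 / 2 - p)) / (1 - (1 / 2 - q)) - 1) := by
        exact add_le_add (mul_le_mul_of_nonneg_left h1 ha.le)
          (mul_le_mul_of_nonneg_left h2 ha'.le)
    _ ≤ 8 * (p - q) ^ 2 := key
end

section
/- (Hellinger distance bound for mixtures, verification of the first condition in the MLE concentration lemma) Let θ ∈ (0,1/2], let p₁, p₀ be probability densities on ℝ^d, for t ∈ [0,1] let f_t = t·p₁ + (1−t)·p₀, and let q ∈ [θ,1−θ] and h ∈ ℝ with q + h ∈ [0,1]. Then the squared Hellinger distance satisfies H²(f_q, f_{q+h}) ≤ h²·V(p₁,p₀)/(q(1−q)) ≤ h²/(θ(1−θ)). -/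
open MeasureTheory

noncomputable section

/-- Total variation distance between densities: `V(p,p') = 1 − ∫ min(p,p')`. -/
def TV (d : ℕ) (p p' : (Fin d → ℝ) → ℝ) : ℝ :=
  1 - ∫ x, min (p x) (p' x)

/-- Squared Hellinger distance between densities: `H²(p,p') = ∫ (√p − √p')²`. -/
def Hsq (d : ℕ) (p p' : (Fin d → ℝ) → ℝ) : ℝ :=
  ∫ x, (Real.sqrt (p x) - Real.sqrt (p' x)) ^ 2

lemma sqrt_sub_sq_mul_le (u v : ℝ) (hu : 0 ≤ u) (hv : 0 ≤ v) :
    (Real.sqrt u - Real.sqrt v) ^ 2 * u ≤ (u - v) ^ 2 := by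
  nlinarith [Real.sq_sqrt hu, Real.sq_sqrt hv, Real.sqrt_nonneg u, Real.sqrt_nonneg v,
    sq_nonneg (Real.sqrt u - Real.sqrt v),
    mul_nonneg (Real.sqrt_nonneg u) (Real.sqrt_nonneg v),
    mul_nonneg (mul_nonneg (sq_nonneg (Real.sqrt u - Real.sqrt v)) (Real.sqrt_nonneg u))
      (Real.sqrt_nonneg v),
    mul_nonneg (sq_nonneg (Real.sqrt u - Real.sqrt v)) hv]

lemma key_pointwise (a b q h : ℝ) (ha : 0 ≤ a) (hb : 0 ≤ b) (hq0 : 0 < q) (hq1 : q < 1)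
    (h0 : 0 ≤ q + h) (h1 : q + h ≤ 1) :
    (Real.sqrt (q * a + (1 - q) * b) - Real.sqrt ((q + h) * a + (1 - (q + h)) * b)) ^ 2 ≤
      h ^ 2 * ((a - min a b) / q + (b - min a b) / (1 - q)) := by
  have h1q : 0 < 1 - q := by linarith
  have hu : 0 ≤ q * a + (1 - q) * b :=
    add_nonneg (mul_nonneg hq0.le ha) (mul_nonneg h1q.le hb)
  have hv : 0 ≤ (q + h) * a + (1 - (q + h)) * b :=
    add_nonneg (mul_nonneg h0 ha) (mul_nonneg (by linarith) hb)
  rcases eq_or_lt_of_le hu with hu0 | hupos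
  · -- u = 0 forces a = b = 0
    have hqa : q * a = 0 := le_antisymm (by nlinarith [mul_nonneg h1q.le hb]) (mul_nonneg hq0.le ha)
    have hqb : (1 - q) * b = 0 :=
      le_antisymm (by nlinarith [mul_nonneg hq0.le ha]) (mul_nonneg h1q.le hb)
    have ha0 : a = 0 := by
      rcases mul_eq_zero.mp hqa with h' | h'
      · exact absurd h' hq0.ne'
      · exact h'
    have hb0 : b = 0 := by
      rcases mul_eq_zero.mp hqb with h' | h'
      · exact absurd h' h1q.ne'
      · exact h'
    subst ha0; subst hb0
    simp [Real.sqrt_zero]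
  · have key1 := sqrt_sub_sq_mul_le (q * a + (1 - q) * b) ((q + h) * a + (1 - (q + h)) * b) hu hv
    have habs : ((q * a + (1 - q) * b) - ((q + h) * a + (1 - (q + h)) * b)) ^ 2
        = h ^ 2 * (a - b) ^ 2 := by ring
    have step2 : h ^ 2 * (a - b) ^ 2 ≤
        (h ^ 2 * ((a - min a b) / q + (b - min a b) / (1 - q))) * (q * a + (1 - q) * b) := by
      rcases le_total b a with hba | hab
      · rw [min_eq_right hba, sub_self, zero_div, add_zero]
        rw [show h ^ 2 * ((a - b) / q) * (q * a + (1 - q) * b)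
            = h ^ 2 * (a - b) * (q * a + (1 - q) * b) / q by ring, le_div_iff₀ hq0]
        have h3 : q * (a - b) ≤ q * a + (1 - q) * b := by nlinarith
        nlinarith [mul_le_mul_of_nonneg_left h3 (mul_nonneg (sq_nonneg h) (sub_nonneg.mpr hba))]
      · rw [min_eq_left hab, sub_self, zero_div, zero_add]
        rw [show h ^ 2 * ((b - a) / (1 - q)) * (q * a + (1 - q) * b)
            = h ^ 2 * (b - a) * (q * a + (1 - q) * b) / (1 - q) by ring, le_div_iff₀ h1q]
        have h3 : (1 - q) * (b - a) ≤ q * a + (1 - q) * b := by nlinarith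
        nlinarith [mul_le_mul_of_nonneg_left h3 (mul_nonneg (sq_nonneg h) (sub_nonneg.mpr hab)),
          sq_nonneg (a - b)]
    have := key1.trans (habs.le.trans step2)
    exact le_of_mul_le_mul_right this hupos

/-- Hellinger distance bound for two-component mixtures:
`H²(f_q, f_{q+h}) ≤ h²·V(p₁,p₀)/(q(1−q)) ≤ h²/(θ(1−θ))`. -/
theorem stmt_17 (d : ℕ) (hd : 1 ≤ d) (θ : ℝ) (hθ : θ ∈ Set.Ioc (0 : ℝ) (1 / 2))
    (p₁ p₀ : (Fin d → ℝ) → ℝ)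
    (h₁m : Measurable p₁) (h₁nn : ∀ x, 0 ≤ p₁ x) (h₁int : ∫ x, p₁ x = 1)
    (h₀m : Measurable p₀) (h₀nn : ∀ x, 0 ≤ p₀ x) (h₀int : ∫ x, p₀ x = 1)
    (q h : ℝ) (hq : q ∈ Set.Icc θ (1 - θ)) (hqh : q + h ∈ Set.Icc (0 : ℝ) 1) :
    Hsq d (fun x => q * p₁ x + (1 - q) * p₀ x)
        (fun x => (q + h) * p₁ x + (1 - (q + h)) * p₀ x) ≤
        h ^ 2 * TV d p₁ p₀ / (q * (1 - q)) ∧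
      h ^ 2 * TV d p₁ p₀ / (q * (1 - q)) ≤ h ^ 2 / (θ * (1 - θ)) := by
  obtain ⟨hθ0, hθ2⟩ := hθ
  obtain ⟨hq1, hq2⟩ := hq
  obtain ⟨hqh0, hqh1⟩ := hqh
  have hq0 : 0 < q := lt_of_lt_of_le hθ0 hq1
  have hq1' : q < 1 := lt_of_le_of_lt hq2 (by linarith)
  have h1q : 0 < 1 - q := by linarith
  -- integrability of the densities
  have hint₁ : Integrable p₁ := by
    by_contra hc
    rw [integral_undef hc] at h₁int; norm_num at h₁int
  have hint₀ : Integrable p₀ := by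
    by_contra hc
    rw [integral_undef hc] at h₀int; norm_num at h₀int
  have hm_nn : ∀ x, 0 ≤ min (p₁ x) (p₀ x) := fun x => le_min (h₁nn x) (h₀nn x)
  have hm_meas : Measurable fun x => min (p₁ x) (p₀ x) := h₁m.min h₀m
  have hm_int : Integrable fun x => min (p₁ x) (p₀ x) :=
    hint₁.mono hm_meas.aestronglyMeasurable
      (ae_of_all _ fun x => by
        rw [Real.norm_eq_abs, Real.norm_eq_abs, abs_of_nonneg (hm_nn x), abs_of_nonneg (h₁nn x)]
        exact min_le_left _ _)
  set I : ℝ := ∫ x, min (p₁ x) (p₀ x) with hI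
  have hI0 : 0 ≤ I := integral_nonneg hm_nn
  have hI1 : I ≤ 1 := by
    rw [← h₁int]
    exact integral_mono hm_int hint₁ fun x => min_le_left _ _
  -- dominating function
  set g : (Fin d → ℝ) → ℝ := fun x =>
    h ^ 2 * ((p₁ x - min (p₁ x) (p₀ x)) / q + (p₀ x - min (p₁ x) (p₀ x)) / (1 - q)) with hg
  have hg_int : Integrable g :=
    ((((hint₁.sub hm_int).div_const q).add ((hint₀.sub hm_int).div_const (1 - q))).const_mul
      (h ^ 2))
  have hi1 : Integrable (fun x => (p₁ x - min (p₁ x) (p₀ x)) / q) :=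
    (hint₁.sub hm_int).div_const q
  have hi2 : Integrable (fun x => (p₀ x - min (p₁ x) (p₀ x)) / (1 - q)) :=
    (hint₀.sub hm_int).div_const (1 - q)
  have hg_val : ∫ x, g x = h ^ 2 * ((1 - I) / q + (1 - I) / (1 - q)) := by
    rw [hg]
    rw [integral_const_mul]
    rw [integral_add hi1 hi2]
    rw [integral_div, integral_div, integral_sub hint₁ hm_int, integral_sub hint₀ hm_int,
      h₁int, h₀int]
  -- the Hellinger integrand
  set F : (Fin d → ℝ) → ℝ := fun x =>
    (Real.sqrt (q * p₁ x + (1 - q) * p₀ x) -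
      Real.sqrt ((q + h) * p₁ x + (1 - (q + h)) * p₀ x)) ^ 2 with hF
  have hF_meas : Measurable F := by
    apply Measurable.pow_const
    exact (((h₁m.const_mul q).add (h₀m.const_mul (1 - q))).sqrt).sub
      (((h₁m.const_mul (q + h)).add (h₀m.const_mul (1 - (q + h)))).sqrt)
  have hFg : ∀ x, F x ≤ g x := fun x =>
    key_pointwise (p₁ x) (p₀ x) q h (h₁nn x) (h₀nn x) hq0 hq1' hqh0 hqh1
  have hF_int : Integrable F :=
    hg_int.mono' hF_meas.aestronglyMeasurable
      (ae_of_all _ fun x => by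
        rw [Real.norm_eq_abs, abs_of_nonneg (sq_nonneg _)]
        exact hFg x)
  have hTV : TV d p₁ p₀ = 1 - I := rfl
  have hmain : Hsq d (fun x => q * p₁ x + (1 - q) * p₀ x)
      (fun x => (q + h) * p₁ x + (1 - (q + h)) * p₀ x) ≤
      h ^ 2 * (1 - I) / (q * (1 - q)) := by
    have h1 : Hsq d (fun x => q * p₁ x + (1 - q) * p₀ x)
        (fun x => (q + h) * p₁ x + (1 - (q + h)) * p₀ x) = ∫ x, F x := rfl
    rw [h1]
    calc ∫ x, F x ≤ ∫ x, g x := integral_mono hF_int hg_int hFg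
      _ = h ^ 2 * ((1 - I) / q + (1 - I) / (1 - q)) := hg_val
      _ = h ^ 2 * (1 - I) / (q * (1 - q)) := by
          rw [div_add_div _ _ hq0.ne' h1q.ne']
          rw [show (1 - I) * (1 - q) + q * (1 - I) = 1 - I by ring, mul_div_assoc]
  constructor
  · rw [hTV]; exact hmain
  · rw [hTV]
    have hqq : θ * (1 - θ) ≤ q * (1 - q) := by nlinarith
    have hθθ : 0 < θ * (1 - θ) := by nlinarith
    have hnum : h ^ 2 * (1 - I) ≤ h ^ 2 := by nlinarith [sq_nonneg h]
    exact div_le_div₀ (sq_nonneg h) hnum hθθ hqq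
end
end

section
/- (Fisher information versus total variation inequality) Let p₁, p₀ be probability densities on ℝ^d and q ∈ (0,1), and let f_q = q·p₁ + (1−q)·p₀. Then ∫_{f_q > 0} (p₁(x) − p₀(x))²/f_q(x) dx ≤ V(p₁,p₀)/(q(1−q)). Equivalently, the reciprocal of the Fisher information for estimating q from unlabeled data is at least q(1−q)/V(p₁,p₀), the reciprocal Fisher information from labeled data divided by V(p₁,p₀). -/
open MeasureTheory

noncomputable section

/-- Fisher information versus total variation: with `f_q = q·p₁ + (1−q)·p₀`,
`∫_{f_q>0} (p₁−p₀)²/f_q ≤ V(p₁,p₀)/(q(1−q))`. -/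
theorem stmt_18 (d : ℕ) (hd : 1 ≤ d) (p₁ p₀ : (Fin d → ℝ) → ℝ)
    (h₁m : Measurable p₁) (h₁nn : ∀ x, 0 ≤ p₁ x) (h₁int : ∫ x, p₁ x = 1)
    (h₀m : Measurable p₀) (h₀nn : ∀ x, 0 ≤ p₀ x) (h₀int : ∫ x, p₀ x = 1)
    (q : ℝ) (hq : q ∈ Set.Ioo (0 : ℝ) 1) :
    (∫ x in {x | 0 < q * p₁ x + (1 - q) * p₀ x},
        (p₁ x - p₀ x) ^ 2 / (q * p₁ x + (1 - q) * p₀ x)) ≤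
      TV d p₁ p₀ / (q * (1 - q)) := by
  obtain ⟨hq0, hq1⟩ := hq
  have hq1' : 0 < 1 - q := by linarith
  have hqq : 0 < q * (1 - q) := mul_pos hq0 hq1'
  set f : (Fin d → ℝ) → ℝ := fun x => q * p₁ x + (1 - q) * p₀ x with hf
  set S : Set (Fin d → ℝ) := {x | 0 < f x} with hS
  have hfm : Measurable f := (h₁m.const_mul q).add (h₀m.const_mul (1 - q))
  have hSm : MeasurableSet S := measurableSet_lt measurable_const hfm
  -- integrability of p₁, p₀
  have h₁i : Integrable p₁ := by
    by_contra h; rw [integral_undef h] at h₁int; norm_num at h₁int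
  have h₀i : Integrable p₀ := by
    by_contra h; rw [integral_undef h] at h₀int; norm_num at h₀int
  have hmin_i : Integrable (fun x => min (p₁ x) (p₀ x)) := by
    refine h₁i.mono' (h₁m.min h₀m).aestronglyMeasurable ?_
    filter_upwards with x
    rw [Real.norm_eq_abs, abs_of_nonneg (le_min (h₁nn x) (h₀nn x))]
    exact min_le_left _ _
  have hf_i : Integrable f := (h₁i.const_mul q).add (h₀i.const_mul (1 - q))
  have hmax_i : Integrable (fun x => max (p₁ x) (p₀ x)) := by
    refine (h₁i.add h₀i).mono' (h₁m.max h₀m).aestronglyMeasurable ?_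
    filter_upwards with x
    rw [Real.norm_eq_abs, abs_of_nonneg (le_max_iff.mpr (Or.inl (h₁nn x)))]
    simp only [Pi.add_apply]
    exact max_le (by nlinarith [h₀nn x]) (by nlinarith [h₁nn x])
  set h : (Fin d → ℝ) → ℝ := fun x => (max (p₁ x) (p₀ x) - f x) / (q * (1 - q)) with hh
  have hh_i : Integrable h := (hmax_i.sub hf_i).div_const _
  have hh_nn : ∀ x, 0 ≤ h x := by
    intro x
    apply div_nonneg _ hqq.le
    rcases le_total (p₁ x) (p₀ x) with hle | hle <;> simp [hf, max_eq_right, max_eq_left, hle]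
      <;> nlinarith [h₀nn x, h₁nn x]
  -- pointwise bound on S
  have hpt : ∀ x ∈ S, (p₁ x - p₀ x) ^ 2 / f x ≤ h x := by
    intro x hx
    have hfx : 0 < f x := hx
    rw [hh, div_le_div_iff₀ hfx hqq]
    simp only [hf]
    rcases le_total (p₀ x) (p₁ x) with hle | hle
    · rw [max_eq_left hle]
      nlinarith [h₀nn x, h₁nn x, mul_nonneg (mul_nonneg hq1'.le (sub_nonneg.mpr hle)) (h₀nn x)]
    · rw [max_eq_right hle]
      nlinarith [h₀nn x, h₁nn x, mul_nonneg (mul_nonneg hq0.le (sub_nonneg.mpr hle)) (h₁nn x)]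
  -- integrability of the LHS integrand on S
  have hg_i : IntegrableOn (fun x => (p₁ x - p₀ x) ^ 2 / f x) S := by
    refine (hh_i.restrict (s := S)).mono' ?_ ?_
    · exact (((h₁m.sub h₀m).pow_const 2).div hfm).aestronglyMeasurable
    · rw [ae_restrict_iff' hSm]
      filter_upwards with x hx
      rw [Real.norm_eq_abs, abs_of_nonneg (div_nonneg (sq_nonneg _) hx.le)]
      exact hpt x hx
  calc (∫ x in S, (p₁ x - p₀ x) ^ 2 / f x) ≤ ∫ x in S, h x := by
        refine setIntegral_mono_on hg_i (hh_i.restrict) hSm hpt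
    _ ≤ ∫ x, h x := setIntegral_le_integral hh_i (Filter.Eventually.of_forall hh_nn)
    _ = TV d p₁ p₀ / (q * (1 - q)) := by
        rw [hh]
        rw [integral_div]
        congr 1
        have hmaxmin : ∀ x, max (p₁ x) (p₀ x) - f x
            = (p₁ x + p₀ x - min (p₁ x) (p₀ x)) - f x := by
          intro x; rw [← min_add_max (p₁ x) (p₀ x)]; ring
        simp_rw [hmaxmin]
        have I2 : Integrable (fun x => p₁ x + p₀ x) := h₁i.add h₀i
        have I1 : Integrable (fun x => p₁ x + p₀ x - min (p₁ x) (p₀ x)) := I2.sub hmin_i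
        rw [integral_sub I1 hf_i, integral_sub I2 hmin_i, integral_add h₁i h₀i]
        have : ∫ x, f x = 1 := by
          rw [hf, integral_add (h₁i.const_mul q) (h₀i.const_mul (1 - q)),
            integral_const_mul, integral_const_mul, h₁int, h₀int]; ring
        rw [this, h₁int, h₀int, TV]
        ring
end
end
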